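/- arXiv:1010.6127 — 6 statements merged into one kernel-verified Lean document; each statement's English description precedes it below -/
import Mathlib

section
/- Let W and W' be real Hilbert spaces and let T be a closed, densely defined linear operator with domain V ⊆ W and values in W', whose range T(V) is a closed subspace of W'. Then there exists a constant c_P > 0 such that every v ∈ V satisfying ⟨v, z⟩ = 0 for all z ∈ V with T z = 0 obeys the graph-norm Poincaré inequality (‖v‖² + ‖T v‖²)^{1/2} ≤ c_P ‖T v‖. (Poincaré inequality for the domain complex of a closed Hilbert complex.) -/
open scoped RealInnerProductSpace

theorem aux_bounded_inverse {E F : Type*}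
    [NormedAddCommGroup E] [NormedSpace ℝ E] [CompleteSpace E]
    [NormedAddCommGroup F] [NormedSpace ℝ F] [CompleteSpace F]
    (f : E →L[ℝ] F) (hinj : f.ker = ⊥) (hsurj : f.range = ⊤) :
    ∃ C : ℝ, 1 ≤ C ∧ ∀ x : E, ‖x‖ ≤ C * ‖f x‖ := by
  set e : E ≃L[ℝ] F := ContinuousLinearEquiv.ofBijective f hinj hsurj with he
  refine ⟨‖(e.symm : F →L[ℝ] E)‖ + 1, by linarith [norm_nonneg (e.symm : F →L[ℝ] E)], ?_⟩
  intro x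
  have h1 : e.symm (e x) = x := e.symm_apply_apply x
  have h2 : (e x : F) = f x := rfl
  calc ‖x‖ = ‖e.symm (e x)‖ := by rw [h1]
    _ ≤ ‖(e.symm : F →L[ℝ] E)‖ * ‖e x‖ := (e.symm : F →L[ℝ] E).le_opNorm _
    _ = ‖(e.symm : F →L[ℝ] E)‖ * ‖f x‖ := by rw [show ‖e x‖ = ‖f x‖ from congrArg norm h2]
    _ ≤ (‖(e.symm : F →L[ℝ] E)‖ + 1) * ‖f x‖ := by
        have := norm_nonneg (f x)
        nlinarith [norm_nonneg (e.symm : F →L[ℝ] E)]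



set_option maxHeartbeats 1000000 in
/-- **Poincaré inequality for the domain complex of a closed Hilbert complex**:
if `T` is a closed, densely defined linear operator with domain `V ⊆ W` and
closed range in `W'`, then there is a constant `c_P > 0` such that every `v ∈ V`
orthogonal (in `W`) to the kernel of `T` satisfies the graph-norm inequality
`(‖v‖² + ‖T v‖²)^{1/2} ≤ c_P ‖T v‖`. -/
theorem domain_complex_poincare_inequality
    {W W' : Type*}
    [NormedAddCommGroup W] [InnerProductSpace ℝ W] [CompleteSpace W]
    [NormedAddCommGroup W'] [InnerProductSpace ℝ W'] [CompleteSpace W']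
    (V : Submodule ℝ W) (hVdense : Dense (V : Set W))
    (T : V →ₗ[ℝ] W')
    (hgraph : IsClosed {p : W × W' | ∃ v : V, (v : W) = p.1 ∧ T v = p.2})
    (hrange : IsClosed (Set.range (⇑T))) :
    ∃ cP : ℝ, 0 < cP ∧
      ∀ v : V, (∀ z : V, T z = 0 → ⟪(v : W), (z : W)⟫ = 0) →
        Real.sqrt (‖(v : W)‖ ^ 2 + ‖T v‖ ^ 2) ≤ cP * ‖T v‖ := by
  classical
  -- the graph as a submodule of W × W'
  set G : Submodule ℝ (W × W') := LinearMap.range ((V.subtype).prod T) with hG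
  have hGmem : ∀ p : W × W', p ∈ G ↔ ∃ v : V, (v : W) = p.1 ∧ T v = p.2 := by
    intro p
    simp only [hG, LinearMap.mem_range, LinearMap.prod_apply, Function.prod,
      Prod.ext_iff, Submodule.coe_subtype]
  -- the kernel of T as a submodule of W
  set K : Submodule ℝ W := (LinearMap.ker T).map V.subtype with hKdef
  have hKset : ∀ x : W, x ∈ K ↔ ∃ z : V, (z : W) = x ∧ T z = 0 := by
    intro x
    simp only [hKdef, Submodule.mem_map, LinearMap.mem_ker, Submodule.coe_subtype]
    constructor
    · rintro ⟨z, hz, rfl⟩; exact ⟨z, rfl, hz⟩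
    · rintro ⟨z, rfl, hz⟩; exact ⟨z, hz, rfl⟩
  have hKclosed : IsClosed (K : Set W) := by
    have : (K : Set W) = (fun x : W => (x, (0 : W'))) ⁻¹'
        {p : W × W' | ∃ v : V, (v : W) = p.1 ∧ T v = p.2} := by
      ext x
      simp only [Set.mem_preimage, Set.mem_setOf_eq, SetLike.mem_coe, hKset]
    rw [this]
    exact hgraph.preimage (by continuity)
  -- Z : the part of the graph orthogonal to K
  set Z : Submodule ℝ (W × W') := G ⊓ (Kᗮ.prod ⊤) with hZdef
  have hZclosed : IsClosed (Z : Set (W × W')) := by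
    have : (Z : Set (W × W')) = {p : W × W' | ∃ v : V, (v : W) = p.1 ∧ T v = p.2}
        ∩ ((Kᗮ : Set W) ×ˢ (Set.univ : Set W')) := by
      ext p
      simp only [hZdef, SetLike.mem_coe, Submodule.mem_inf, Submodule.mem_prod,
        Set.mem_inter_iff, Set.mem_setOf_eq, Set.mem_prod, Set.mem_univ, and_true,
        Submodule.mem_top, hGmem]
    rw [this]
    exact hgraph.inter (K.isClosed_orthogonal.prod isClosed_univ)
  set R : Submodule ℝ W' := LinearMap.range T with hRdef
  have hRclosed : IsClosed (R : Set W') := by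
    have : (R : Set W') = Set.range ⇑T := by
      ext y; simp [hRdef]
    rw [this]; exact hrange
  haveI : CompleteSpace Z := hZclosed.completeSpace_coe
  haveI : CompleteSpace R := hRclosed.completeSpace_coe
  haveI : CompleteSpace K := hKclosed.completeSpace_coe
  -- the map S : Z → R, (v, Tv) ↦ Tv
  have hmemR : ∀ p : Z, ((p : W × W').2) ∈ R := by
    rintro ⟨p, hpG, -⟩
    obtain ⟨v, -, hv⟩ := (hGmem p).mp hpG
    exact ⟨v, hv⟩
  set Slin : Z →ₗ[ℝ] R :=
    LinearMap.codRestrict R ((LinearMap.snd ℝ W W').comp Z.subtype) hmemR with hSlin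
  have hSlin_apply : ∀ p : Z, ((Slin p : W')) = (p : W × W').2 := fun p => rfl
  set S : Z →L[ℝ] R := Slin.mkContinuous 1 (by
    intro p
    rw [one_mul]
    show ‖(Slin p : W')‖ ≤ ‖p‖
    rw [hSlin_apply]
    exact norm_snd_le (p : W × W')) with hS
  have hSapply : ∀ p : Z, ((S p : W')) = (p : W × W').2 := fun p => rfl
  -- injectivity
  have hker : LinearMap.ker (S : Z →ₗ[ℝ] R) = ⊥ := by
    rw [LinearMap.ker_eq_bot]
    intro p q hpq
    have h2 : (p : W × W').2 = (q : W × W').2 := by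
      have := congrArg (fun y : R => (y : W')) hpq
      simpa [hSapply] using this
    -- first components: both in Kᗮ, difference in K
    obtain ⟨hpG, hpO, -⟩ := p.2
    obtain ⟨hqG, hqO, -⟩ := q.2
    obtain ⟨a, ha1, ha2⟩ := (hGmem _).mp hpG
    obtain ⟨b, hb1, hb2⟩ := (hGmem _).mp hqG
    have hd : (p : W × W').1 - (q : W × W').1 ∈ K := by
      rw [hKset]
      refine ⟨a - b, by simp [ha1, hb1], ?_⟩
      rw [map_sub, ha2, hb2, h2, sub_self]
    have hdO : (p : W × W').1 - (q : W × W').1 ∈ Kᗮ := Submodule.sub_mem _ hpO hqO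
    have h1 : (p : W × W').1 = (q : W × W').1 := by
      have := (Submodule.mem_orthogonal _ _).mp hdO _ hd
      have h0 : (p : W × W').1 - (q : W × W').1 = 0 := by
        rwa [inner_self_eq_zero] at this
      exact sub_eq_zero.mp h0
    exact Subtype.ext (Prod.ext h1 h2)
  -- surjectivity
  have hsurj : LinearMap.range (S : Z →ₗ[ℝ] R) = ⊤ := by
    rw [LinearMap.range_eq_top]
    rintro ⟨y, hy⟩
    obtain ⟨v, hv⟩ := hy
    have hk : (K.orthogonalProjection ((v : W)) : W) ∈ K := SetLike.coe_mem _
    rw [hKset] at hk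
    obtain ⟨z, hz1, hz2⟩ := hk
    refine ⟨⟨(((v - z : V) : W), T (v - z)), ?_, ?_, trivial⟩, ?_⟩
    · exact (hGmem _).mpr ⟨v - z, rfl, rfl⟩
    · show ((v - z : V) : W) ∈ Kᗮ
      have : ((v - z : V) : W) = (v : W) - K.orthogonalProjection ((v : W)) := by
        push_cast; rw [hz1]
      rw [this]
      exact Submodule.sub_starProjection_mem_orthogonal (K := K) _
    · apply Subtype.ext
      show T (v - z) = y
      rw [map_sub, hz2, sub_zero, hv]
  -- bounded inverse
  obtain ⟨C, hC1, hCb⟩ := aux_bounded_inverse S hker hsurj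
  refine ⟨Real.sqrt 2 * C, by positivity, ?_⟩
  intro v hv
  -- the point p in Z
  have hpZ : (((v : W), T v) : W × W') ∈ Z := by
    refine ⟨(hGmem _).mpr ⟨v, rfl, rfl⟩, ?_, trivial⟩
    show (v : W) ∈ Kᗮ
    rw [Submodule.mem_orthogonal]
    intro u hu
    rw [hKset] at hu
    obtain ⟨z, rfl, hz⟩ := hu
    rw [real_inner_comm]
    exact hv z hz
  set p : Z := ⟨((v : W), T v), hpZ⟩ with hp
  have hSp : ‖S p‖ = ‖T v‖ := congrArg norm (hSapply p)
  have hbound : ‖p‖ ≤ C * ‖T v‖ := by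
    have := hCb p
    rwa [hSp] at this
  have hnp : ‖p‖ = max ‖(v : W)‖ ‖T v‖ := rfl
  have ha : ‖(v : W)‖ ≤ ‖p‖ := by rw [hnp]; exact le_max_left _ _
  have hb : ‖T v‖ ≤ ‖p‖ := by rw [hnp]; exact le_max_right _ _
  have hm : (0:ℝ) ≤ ‖p‖ := norm_nonneg p
  have hsq : Real.sqrt (‖(v : W)‖ ^ 2 + ‖T v‖ ^ 2) ≤ Real.sqrt 2 * ‖p‖ := by
    have h2 : ‖(v : W)‖ ^ 2 + ‖T v‖ ^ 2 ≤ 2 * ‖p‖ ^ 2 := by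
      nlinarith [norm_nonneg (v : W), norm_nonneg (T v)]
    calc Real.sqrt (‖(v : W)‖ ^ 2 + ‖T v‖ ^ 2) ≤ Real.sqrt (2 * ‖p‖ ^ 2) :=
          Real.sqrt_le_sqrt h2
      _ = Real.sqrt 2 * ‖p‖ := by
          rw [Real.sqrt_mul (by norm_num), Real.sqrt_sq hm]
  calc Real.sqrt (‖(v : W)‖ ^ 2 + ‖T v‖ ^ 2) ≤ Real.sqrt 2 * ‖p‖ := hsq
    _ ≤ Real.sqrt 2 * (C * ‖T v‖) := by
        exact mul_le_mul_of_nonneg_left hbound (Real.sqrt_nonneg 2)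
    _ = Real.sqrt 2 * C * ‖T v‖ := by ring
end

section
/- Let W0, W1, W2 be real Hilbert spaces, and let d0 and d1 be closed, densely defined linear operators, d0 with dense domain V0 ⊆ W0 and values in W1, d1 with dense domain V1 ⊆ W1 and values in W2, such that d0(V0) ⊆ V1 and d1(d0 τ) = 0 for all τ ∈ V0. If in addition the range B = d0(V0) is a closed subspace of W1, then W1 decomposes as the internal orthogonal direct sum W1 = B ⊕ H ⊕ Z^⊥, where Z = {w ∈ V1 : d1 w = 0} and H = Z ∩ B^⊥ is the harmonic space. (Strong Hodge decomposition for a closed Hilbert complex.) -/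
open scoped RealInnerProductSpace

/-- **Strong Hodge decomposition for a closed Hilbert complex.** Given a segment
`d0 : V0 ⊆ W0 → W1`, `d1 : V1 ⊆ W1 → W2` of a Hilbert complex (closed, densely
defined operators with `d0(V0) ⊆ V1` and `d1 ∘ d0 = 0`) such that the range
`B = d0(V0)` is closed in `W1`, the middle space decomposes as the internal
orthogonal direct sum `W1 = B ⊕ H ⊕ Zᗮ`, where `Z = ker d1` and `H = Z ⊓ Bᗮ`
is the harmonic space. -/
theorem strong_hodge_decomposition
    {W0 W1 W2 : Type*}
    [NormedAddCommGroup W0] [InnerProductSpace ℝ W0] [CompleteSpace W0]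
    [NormedAddCommGroup W1] [InnerProductSpace ℝ W1] [CompleteSpace W1]
    [NormedAddCommGroup W2] [InnerProductSpace ℝ W2] [CompleteSpace W2]
    (V0 : Submodule ℝ W0) (V1 : Submodule ℝ W1)
    (d0 : V0 →ₗ[ℝ] W1) (d1 : V1 →ₗ[ℝ] W2)
    (hV0dense : Dense (V0 : Set W0)) (hV1dense : Dense (V1 : Set W1))
    (hgraph0 : IsClosed {p : W0 × W1 | ∃ τ : V0, (τ : W0) = p.1 ∧ d0 τ = p.2})
    (hgraph1 : IsClosed {p : W1 × W2 | ∃ v : V1, (v : W1) = p.1 ∧ d1 v = p.2})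
    (hsub : ∀ τ : V0, d0 τ ∈ V1)
    (hdd : ∀ τ : V0, d1 ⟨d0 τ, hsub τ⟩ = 0)
    (hBclosed : IsClosed (Set.range (⇑d0))) :
    ∀ (B Z : Submodule ℝ W1), B = LinearMap.range d0 →
      Z = (LinearMap.ker d1).map V1.subtype →
      (∀ x ∈ B, ∀ y ∈ Z ⊓ Bᗮ, ⟪x, y⟫ = 0) ∧
      (∀ x ∈ B, ∀ y ∈ Zᗮ, ⟪x, y⟫ = 0) ∧
      (∀ x ∈ Z ⊓ Bᗮ, ∀ y ∈ Zᗮ, ⟪x, y⟫ = 0) ∧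
      B ⊔ (Z ⊓ Bᗮ) ⊔ Zᗮ = ⊤ := by
  intro B Z hB hZ
  have hBZ : B ≤ Z := by
    intro x hx
    rw [hB] at hx
    obtain ⟨τ, rfl⟩ := hx
    rw [hZ]
    exact ⟨⟨d0 τ, hsub τ⟩, hdd τ, rfl⟩
  have hZclosed : IsClosed (Z : Set W1) := by
    have hset : (Z : Set W1) =
        (fun w => (w, (0 : W2))) ⁻¹'
          {p : W1 × W2 | ∃ v : V1, (v : W1) = p.1 ∧ d1 v = p.2} := by
      ext w
      simp only [Set.mem_preimage, Set.mem_setOf_eq, hZ, SetLike.mem_coe,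
        Submodule.mem_map, LinearMap.mem_ker, Submodule.coe_subtype]
      constructor
      · rintro ⟨v, hv, rfl⟩; exact ⟨v, rfl, hv⟩
      · rintro ⟨v, rfl, hv⟩; exact ⟨v, hv, rfl⟩
    rw [hset]
    exact hgraph1.preimage (Continuous.prodMk continuous_id continuous_const)
  have hBclosed' : IsClosed (B : Set W1) := by rw [hB]; exact hBclosed
  haveI : CompleteSpace B := hBclosed'.completeSpace_coe
  haveI : CompleteSpace Z := hZclosed.completeSpace_coe
  refine ⟨?_, ?_, ?_, ?_⟩
  · intro x hx y hy
    exact (Submodule.mem_orthogonal B y).mp hy.2 x hx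
  · intro x hx y hy
    exact (Submodule.mem_orthogonal Z y).mp hy x (hBZ hx)
  · intro x hx y hy
    exact (Submodule.mem_orthogonal Z y).mp hy x hx.1
  · have hsup : B ⊔ (Z ⊓ Bᗮ) = Z := by
      apply le_antisymm (sup_le hBZ inf_le_left)
      intro z hz
      have : z ∈ B ⊔ Bᗮ := by
        rw [Submodule.sup_orthogonal_of_hasOrthogonalProjection]; trivial
      obtain ⟨b, hb, c, hc, rfl⟩ := Submodule.mem_sup.mp this
      refine Submodule.mem_sup.mpr ⟨b, hb, c, ⟨?_, hc⟩, rfl⟩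
      have : b + c - b ∈ Z := Z.sub_mem hz (hBZ hb)
      simpa using this
    rw [hsup, Submodule.sup_orthogonal_of_hasOrthogonalProjection]
end

section
/- Let X and W be real Hilbert spaces, ι : X → W an injective bounded linear map with dense range, and K = ι* : W → X the Hilbert-space adjoint of ι, characterized by ⟨K f, v⟩_X = ⟨f, ι v⟩_W for all f ∈ W, v ∈ X. Suppose F : X → W is monotone (⟨F u − F v, ι u − ι v⟩_W ≥ 0 for all u, v ∈ X) and hemicontinuous (for all u, v ∈ X and w ∈ W, the real function t ↦ ⟨F(u + t v), w⟩_W is continuous on [0,1]). Then for every f ∈ W the abstract Hammerstein equation u + K(F u) = K f has a unique solution u ∈ X; moreover, if u and u' are the solutions corresponding to data f and f', then ‖u − u'‖_X ≤ ‖K‖ ‖f − f'‖_W, where ‖K‖ is the operator norm of K. -/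
open scoped RealInnerProductSpace

section Aux

variable {X : Type*} [NormedAddCommGroup X] [InnerProductSpace ℝ X] [CompleteSpace X]

lemma minpoint_exists (C : Set X) (hne : C.Nonempty) (hc : IsClosed C) (hconv : Convex ℝ C) :
    ∃ m ∈ C, ∀ x ∈ C, ‖m‖ ≤ ‖x‖ := by
  obtain ⟨m, hm, hmin⟩ := exists_norm_eq_iInf_of_complete_convex hne hc.isComplete hconv 0
  refine ⟨m, hm, fun x hx => ?_⟩
  have : ‖(0:X) - m‖ ≤ ‖(0:X) - x‖ := by
    rw [hmin]
    exact ciInf_le ⟨0, Set.forall_mem_range.2 fun _ => norm_nonneg _⟩ (⟨x, hx⟩ : C)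
  simpa using this

lemma minpoint_est {C C' : Set X} (hsub : C' ⊆ C) (hconv : Convex ℝ C)
    {m m' : X} (hm : m ∈ C) (hm' : m' ∈ C') (hmin : ∀ x ∈ C, ‖m‖ ≤ ‖x‖) :
    ‖m' - m‖ ^ 2 ≤ 2 * ‖m'‖ ^ 2 - 2 * ‖m‖ ^ 2 := by
  have hmid : (1/2 : ℝ) • m + (1/2 : ℝ) • m' ∈ C :=
    hconv hm (hsub hm') (by norm_num) (by norm_num) (by norm_num)
  have h1 : ‖m‖ ≤ ‖(1/2 : ℝ) • m + (1/2 : ℝ) • m'‖ := hmin _ hmid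
  have hpar := parallelogram_law_with_norm ℝ m' m
  have h2 : ‖m' + m‖ = 2 * ‖(1/2 : ℝ) • m + (1/2 : ℝ) • m'‖ := by
    rw [← norm_smul_of_nonneg (by norm_num : (0:ℝ) ≤ 2)]
    congr 1
    module
  have h3 : (2 * ‖m‖) ^ 2 ≤ ‖m' + m‖ ^ 2 := by
    rw [h2]
    have : 2 * ‖m‖ ≤ 2 * ‖(1/2 : ℝ) • m + (1/2 : ℝ) • m'‖ := by linarith
    exact pow_le_pow_left₀ (by positivity) this 2
  nlinarith [hpar, sq_nonneg ‖m' - m‖]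

variable {X : Type*} [NormedAddCommGroup X] [InnerProductSpace ℝ X] [CompleteSpace X]

lemma stepA (G : X → X) (b : X)
    (hm : ∀ u v : X, 0 ≤ ⟪G u - G v, u - v⟫) (R : ℝ) (hR : 0 < R)
    (s : Finset X) (hs : ∀ v ∈ s, ‖v‖ ≤ R) :
    ∃ u : X, ‖u‖ ≤ R ∧ ∀ v ∈ s, 0 ≤ ⟪G v - b, v - u⟫ := by
  classical
  by_contra hcon
  push_neg at hcon
  -- hcon : ∀ u, ‖u‖ ≤ R → ∃ v ∈ s, ⟪G v - b, v - u⟫ < 0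
  set g : X → X := fun v => G v - b with hg
  set E : Submodule ℝ X := Submodule.span ℝ (g '' ↑s) with hE
  haveI : FiniteDimensional ℝ E := by
    apply FiniteDimensional.span_of_finite
    exact (s.finite_toSet).image _
  set BE : Set X := Metric.closedBall (0:X) R ∩ E with hBE
  have hBEeq : BE = Subtype.val '' (Metric.closedBall (0:(↥E)) R) := by
    ext x
    constructor
    · rintro ⟨hx1, hx2⟩
      exact ⟨⟨x, hx2⟩, by simpa [Metric.mem_closedBall, dist_zero_right] using
        (by simpa [Metric.mem_closedBall, dist_zero_right] using hx1 : ‖x‖ ≤ R), rfl⟩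
    · rintro ⟨y, hy, rfl⟩
      refine ⟨?_, y.2⟩
      simpa [Metric.mem_closedBall, dist_zero_right] using
        (by simpa [Metric.mem_closedBall, dist_zero_right] using hy : ‖y‖ ≤ R)
  have hBEcomp : IsCompact BE := by
    rw [hBEeq]
    exact (isCompact_closedBall _ _).image continuous_subtype_val
  have hBEconv : Convex ℝ BE := (convex_closedBall _ _).inter (E.convex)
  have h0BE : (0:X) ∈ BE := ⟨by simpa using hR.le, E.zero_mem⟩
  -- the finite-dimensional picture
  set A : X → ((↥s) → ℝ) := fun u i => ⟪g i.1, u⟫ with hA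
  have hAlin : IsLinearMap ℝ A := by
    constructor
    · intro x y; funext i
      show ⟪g i.1, x + y⟫ = ⟪g i.1, x⟫ + ⟪g i.1, y⟫
      exact inner_add_right _ _ _
    · intro c x; funext i
      show ⟪g i.1, c • x⟫ = c * ⟪g i.1, x⟫
      exact real_inner_smul_right _ _ _
  have hAcont : Continuous A :=
    continuous_pi fun i => Continuous.inner continuous_const continuous_id
  set c : (↥s) → ℝ := fun i => ⟪g i.1, (i.1:X)⟫ with hc
  set D : Set ((↥s) → ℝ) := {y | ∀ i, y i ≤ c i} with hD
  have hDclosed : IsClosed D := by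
    have : D = ⋂ i, {y : (↥s) → ℝ | y i ≤ c i} := by ext y; simp [hD, Set.mem_iInter]
    rw [this]
    exact isClosed_iInter fun i => isClosed_le (continuous_apply i) continuous_const
  have hDconv : Convex ℝ D := by
    intro y hy z hz a a' ha ha' hab i
    show (a • y + a' • z) i ≤ c i
    simp only [Pi.add_apply, Pi.smul_apply, smul_eq_mul]
    have h1 : y i ≤ c i := hy i
    have h2 : z i ≤ c i := hz i
    have h3 : a * c i + a' * c i = c i := by rw [← add_mul, hab, one_mul]
    linarith [mul_le_mul_of_nonneg_left h1 ha, mul_le_mul_of_nonneg_left h2 ha']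
  have hdisj : Disjoint (A '' BE) D := by
    rw [Set.disjoint_left]
    rintro y ⟨u, ⟨huB, huE⟩, rfl⟩ hyD
    obtain ⟨v, hv, hlt⟩ := hcon u (by simpa [Metric.mem_closedBall, dist_zero_right] using huB)
    have h1 : ⟪g v, u⟫ ≤ ⟪g v, v⟫ := hyD ⟨v, hv⟩
    rw [inner_sub_right] at hlt
    linarith
  obtain ⟨f, a', b', hfa, hab, hfb⟩ :=
    geometric_hahn_banach_compact_closed (hBEconv.is_linear_image hAlin)
      (hBEcomp.image hAcont) hDconv hDclosed hdisj
  set μ : ↥s → ℝ := fun i => -(f (Pi.single i 1)) with hμ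
  have hcD : c ∈ D := fun i => le_refl _
  have hfc : b' < f c := hfb c hcD
  have hμnn : ∀ i, 0 ≤ μ i := by
    intro i
    by_contra hneg
    push_neg at hneg
    have hq : 0 < f (Pi.single i 1) := by
      have : -(f (Pi.single i 1)) < 0 := hneg
      linarith
    set t : ℝ := (f c - b') / f (Pi.single i 1) with ht
    have htpos : 0 ≤ t := le_of_lt (div_pos (by linarith) hq)
    have hyD : c - t • (Pi.single i 1 : (↥s) → ℝ) ∈ D := by
      intro j
      have heval : (c - t • (Pi.single i 1 : (↥s) → ℝ)) j = c j - t * (Pi.single i 1 : (↥s) → ℝ) j := rfl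
      rw [heval]
      have hnn : 0 ≤ t * (Pi.single i 1 : (↥s) → ℝ) j := by
        rcases eq_or_ne j i with h | h
        · subst h; simpa using htpos
        · simp [Pi.single_apply, h]
      linarith
    have hcontra := hfb _ hyD
    rw [map_sub, map_smul, smul_eq_mul, ht, div_mul_cancel₀ _ hq.ne'] at hcontra
    linarith
  have hrep : ∀ y : (↥s) → ℝ, f y = ∑ i, y i * f (Pi.single i 1) := by
    intro y
    have hsingle : ∀ i : ↥s, (fun j => if i = j then (1:ℝ) else 0) = (Pi.single i 1 : (↥s) → ℝ) :=
      fun i => funext fun j => by rw [Pi.single_apply]; exact if_congr eq_comm rfl rfl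
    have h1 : y = ∑ i, y i • (Pi.single i 1 : (↥s) → ℝ) := by
      conv_lhs => rw [pi_eq_sum_univ y]
      simp only [hsingle]
    conv_lhs => rw [h1]
    rw [map_sum]
    simp only [map_smul, smul_eq_mul]
  set S : ℝ := ∑ i, μ i with hS
  have hSnn : 0 ≤ S := Finset.sum_nonneg fun i _ => hμnn i
  have hA0 : A 0 = 0 := by funext j; simpa [hA] using inner_zero_right (g j.1) (𝕜 := ℝ)
  have hSpos : 0 < S := by
    rcases hSnn.lt_or_eq with h | h
    · exact h
    · exfalso
      have hz : ∀ i, μ i = 0 := by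
        intro i
        have := (Finset.sum_eq_zero_iff_of_nonneg (fun i _ => hμnn i)).mp h.symm
        exact this i (Finset.mem_univ i)
      have hfz : ∀ i : ↥s, f (Pi.single i (1:ℝ)) = 0 := by
        intro i
        have := hz i
        rw [hμ] at this
        simpa using (neg_eq_zero.mp this)
      have hfc0 : f c = 0 := by rw [hrep]; simp [hfz]
      have hfA0 : f (A 0) < a' := hfa _ ⟨0, h0BE, rfl⟩
      rw [hA0, map_zero] at hfA0
      linarith
  have hkey : ∀ u ∈ BE, ∑ i, μ i * c i < ∑ i, μ i * ⟪g i.1, u⟫ := by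
    intro u hu
    have h1 : f (A u) < a' := hfa _ ⟨u, hu, rfl⟩
    have h2 : f (A u) = -∑ i, μ i * ⟪g i.1, u⟫ := by
      rw [hrep]
      rw [← Finset.sum_neg_distrib]
      refine Finset.sum_congr rfl fun i _ => ?_
      show (⟪g i.1, u⟫ : ℝ) * f (Pi.single i 1) = -(μ i * ⟪g i.1, u⟫)
      rw [hμ]; ring
    have h3 : f c = -∑ i, μ i * c i := by
      rw [hrep]
      rw [← Finset.sum_neg_distrib]
      refine Finset.sum_congr rfl fun i _ => ?_
      show c i * f (Pi.single i 1) = -(μ i * c i)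
      rw [hμ]; ring
    rw [h2] at h1
    rw [h3] at hfc
    linarith
  -- normalized coefficients
  set lam : ↥s → ℝ := fun i => μ i / S with hlam
  have hlamnn : ∀ i, 0 ≤ lam i := fun i => div_nonneg (hμnn i) hSnn
  have hlamsum : ∑ i, lam i = 1 := by
    rw [hlam]
    rw [← Finset.sum_div, ← hS, div_self hSpos.ne']
  set glam : X := ∑ i, lam i • g i.1 with hglam
  set w : X := ∑ i, lam i • (i.1 : X) with hw
  have hglamE : glam ∈ E := by
    refine Submodule.sum_mem _ fun i _ => Submodule.smul_mem _ _ ?_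
    exact Submodule.subset_span ⟨i.1, Finset.mem_coe.mpr i.2, rfl⟩
  have hwnorm : ‖w‖ ≤ R := by
    calc ‖w‖ ≤ ∑ i, ‖lam i • (i.1 : X)‖ := norm_sum_le _ _
    _ ≤ ∑ i, lam i * R := by
        refine Finset.sum_le_sum fun i _ => ?_
        rw [norm_smul, Real.norm_eq_abs, abs_of_nonneg (hlamnn i)]
        exact mul_le_mul_of_nonneg_left (hs i.1 i.2) (hlamnn i)
    _ = R := by rw [← Finset.sum_mul, hlamsum, one_mul]
  -- the monotonicity inequality
  have hmono2 : ⟪glam, w⟫ ≤ ∑ i, lam i * c i := by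
    set q : X := ∑ i, lam i • G (i.1 : X) with hq
    have hglamq : glam = q - b := by
      rw [hglam, hq]
      have hstep : ∀ i : ↥s, i ∈ Finset.univ → lam i • g i.1 = lam i • G (i.1:X) - lam i • b :=
        fun i _ => by rw [hg]; simp [smul_sub]
      rw [Finset.sum_congr rfl hstep, Finset.sum_sub_distrib, ← Finset.sum_smul,
        hlamsum, one_smul]
    have hinnq : ∀ x : X, ⟪q, x⟫ = ∑ i, lam i * ⟪G (i.1:X), x⟫ := by
      intro x
      rw [hq, sum_inner]
      exact Finset.sum_congr rfl fun i _ => real_inner_smul_left _ _ _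
    have hinnw : ∀ x : X, ⟪x, w⟫ = ∑ j, lam j * ⟪x, (j.1:X)⟫ := by
      intro x
      rw [hw, inner_sum]
      exact Finset.sum_congr rfl fun j _ => real_inner_smul_right _ _ _
    have hqw : ⟪q, w⟫ = ∑ i, ∑ j, lam i * (lam j * ⟪G (i.1:X), (j.1:X)⟫) := by
      rw [hinnq w]
      refine Finset.sum_congr rfl fun i _ => ?_
      rw [hinnw, Finset.mul_sum]
    have key : (0:ℝ) ≤ ∑ i : ↥s, ∑ j : ↥s,
        lam i * lam j * ⟪G (i.1:X) - G (j.1:X), (i.1:X) - (j.1:X)⟫ :=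
      Finset.sum_nonneg fun i _ => Finset.sum_nonneg fun j _ =>
        mul_nonneg (mul_nonneg (hlamnn i) (hlamnn j)) (hm _ _)
    have hDS1 : ∑ i : ↥s, ∑ j : ↥s, lam j * (lam i * ⟪G (i.1:X), (i.1:X)⟫)
        = ∑ i, lam i * ⟪G (i.1:X), (i.1:X)⟫ :=
      Finset.sum_congr rfl fun i _ => by rw [← Finset.sum_mul, hlamsum, one_mul]
    have hDS3 : ∑ i : ↥s, ∑ j : ↥s, lam i * (lam j * ⟪G (j.1:X), (i.1:X)⟫) = ⟪q, w⟫ := by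
      rw [Finset.sum_comm, hqw]
      exact Finset.sum_congr rfl fun i _ => Finset.sum_congr rfl fun j _ => by
        rw [real_inner_comm]; ring
    have hDS4 : ∑ i : ↥s, ∑ j : ↥s, lam i * (lam j * ⟪G (j.1:X), (j.1:X)⟫)
        = ∑ i, lam i * ⟪G (i.1:X), (i.1:X)⟫ := by
      rw [Finset.sum_comm]
      refine Finset.sum_congr rfl fun j _ => ?_
      have : ∑ i : ↥s, lam i * (lam j * ⟪G (j.1:X), (j.1:X)⟫)
          = (∑ i : ↥s, lam i) * (lam j * ⟪G (j.1:X), (j.1:X)⟫) := by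
        rw [Finset.sum_mul]
      rw [this, hlamsum, one_mul]
    have hexp : ∑ i : ↥s, ∑ j : ↥s,
        lam i * lam j * ⟪G (i.1:X) - G (j.1:X), (i.1:X) - (j.1:X)⟫
        = 2 * (∑ i, lam i * ⟪G (i.1:X), (i.1:X)⟫) - 2 * ⟪q, w⟫ := by
      have hterm : ∀ i j : ↥s, lam i * lam j * ⟪G (i.1:X) - G (j.1:X), (i.1:X) - (j.1:X)⟫
          = lam j * (lam i * ⟪G (i.1:X), (i.1:X)⟫) - lam i * (lam j * ⟪G (i.1:X), (j.1:X)⟫)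
            - lam i * (lam j * ⟪G (j.1:X), (i.1:X)⟫)
            + lam i * (lam j * ⟪G (j.1:X), (j.1:X)⟫) := by
        intro i j
        rw [inner_sub_left, inner_sub_right, inner_sub_right]
        ring
      calc ∑ i : ↥s, ∑ j : ↥s, lam i * lam j * ⟪G (i.1:X) - G (j.1:X), (i.1:X) - (j.1:X)⟫
          = ∑ i : ↥s, ∑ j : ↥s, (lam j * (lam i * ⟪G (i.1:X), (i.1:X)⟫)
              - lam i * (lam j * ⟪G (i.1:X), (j.1:X)⟫)
              - lam i * (lam j * ⟪G (j.1:X), (i.1:X)⟫)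
              + lam i * (lam j * ⟪G (j.1:X), (j.1:X)⟫)) :=
            Finset.sum_congr rfl fun i _ => Finset.sum_congr rfl fun j _ => hterm i j
        _ = (∑ i : ↥s, ∑ j : ↥s, lam j * (lam i * ⟪G (i.1:X), (i.1:X)⟫))
              - (∑ i : ↥s, ∑ j : ↥s, lam i * (lam j * ⟪G (i.1:X), (j.1:X)⟫))
              - (∑ i : ↥s, ∑ j : ↥s, lam i * (lam j * ⟪G (j.1:X), (i.1:X)⟫))
              + (∑ i : ↥s, ∑ j : ↥s, lam i * (lam j * ⟪G (j.1:X), (j.1:X)⟫)) := by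
            simp only [Finset.sum_add_distrib, Finset.sum_sub_distrib]
        _ = 2 * (∑ i, lam i * ⟪G (i.1:X), (i.1:X)⟫) - 2 * ⟪q, w⟫ := by
            rw [hDS1, ← hqw, hDS3, hDS4]; ring
    have hT1q : ⟪q, w⟫ ≤ ∑ i, lam i * ⟪G (i.1:X), (i.1:X)⟫ := by
      rw [hexp] at key; linarith
    have hc2 : ∑ i, lam i * c i
        = (∑ i, lam i * ⟪G (i.1:X), (i.1:X)⟫) - ∑ i, lam i * ⟪b, (i.1:X)⟫ := by
      rw [← Finset.sum_sub_distrib]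
      refine Finset.sum_congr rfl fun i _ => ?_
      have : c i = ⟪G (i.1:X), (i.1:X)⟫ - ⟪b, (i.1:X)⟫ := by
        rw [hc]; show (⟪g i.1, (i.1:X)⟫:ℝ) = _
        rw [hg]; exact inner_sub_left _ _ _
      rw [this]; ring
    have hbw : ⟪b, w⟫ = ∑ i, lam i * ⟪b, (i.1:X)⟫ := hinnw b
    have hglamw : ⟪glam, w⟫ = ⟪q, w⟫ - ⟪b, w⟫ := by
      rw [hglamq, inner_sub_left]
    rw [hglamw, hc2, hbw]
    linarith
  -- choose the test point u0
  set u0 : X := if glam = 0 then 0 else (-(R / ‖glam‖)) • glam with hu0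
  have hu0BE : u0 ∈ BE := by
    rw [hu0]
    split_ifs with h
    · exact h0BE
    · constructor
      · rw [Metric.mem_closedBall, dist_zero_right, norm_smul, Real.norm_eq_abs, abs_neg,
          abs_of_nonneg (div_nonneg hR.le (norm_nonneg _)),
          div_mul_cancel₀ _ (norm_ne_zero_iff.mpr h)]
      · exact Submodule.smul_mem _ _ hglamE
  have hinner0 : ⟪glam, u0⟫ = -(R * ‖glam‖) := by
    rw [hu0]
    split_ifs with h
    · simp [h]
    · rw [real_inner_smul_right, real_inner_self_eq_norm_sq]
      have : ‖glam‖ ≠ 0 := norm_ne_zero_iff.mpr h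
      field_simp
  -- assemble the contradiction
  have e1 : ∀ d : ↥s → ℝ, ∑ i, μ i * d i = S * ∑ i, lam i * d i := by
    intro d
    rw [Finset.mul_sum]
    refine Finset.sum_congr rfl fun i _ => ?_
    rw [hlam]
    field_simp
  have h4 := hkey u0 hu0BE
  rw [e1, e1] at h4
  have h5 : ∑ i, lam i * ⟪g i.1, u0⟫ = ⟪glam, u0⟫ := by
    rw [hglam, sum_inner]
    exact Finset.sum_congr rfl fun i _ => (real_inner_smul_left _ _ _).symm
  have h6 : ∑ i, lam i * c i < ∑ i, lam i * ⟪g i.1, u0⟫ :=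
    lt_of_mul_lt_mul_left h4 hSnn
  rw [h5, hinner0] at h6
  have h7 : -(R * ‖glam‖) ≤ ⟪glam, w⟫ := by
    have := abs_real_inner_le_norm glam w
    have h8 : -(‖glam‖ * ‖w‖) ≤ ⟪glam, w⟫ := neg_le_of_abs_le this |>.trans_eq rfl
    have h9 : ‖glam‖ * ‖w‖ ≤ ‖glam‖ * R := mul_le_mul_of_nonneg_left hwnorm (norm_nonneg _)
    nlinarith [norm_nonneg glam]
  linarith

theorem strongmono_surj (G : X → X)
    (hsm : ∀ u v : X, ‖u - v‖ ^ 2 ≤ ⟪G u - G v, u - v⟫)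
    (hhemi : ∀ u z y : X, ContinuousOn (fun t : ℝ => ⟪G (u + t • z), y⟫) (Set.Icc 0 1))
    (b : X) : ∃ u : X, G u = b := by
  classical
  have hm : ∀ u v : X, 0 ≤ ⟪G u - G v, u - v⟫ :=
    fun u v => (sq_nonneg ‖u - v‖).trans (hsm u v)
  set R : ℝ := ‖b - G 0‖ + 1 with hRdef
  have hR : 0 < R := by positivity
  -- the family of closed convex sets
  set Φ : Finset X → Set X :=
    fun s => {u | ‖u‖ ≤ R ∧ ∀ v ∈ s, ‖v‖ ≤ R → 0 ≤ ⟪G v - b, v - u⟫} with hΦ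
  have hΦne : ∀ s, (Φ s).Nonempty := by
    intro s
    obtain ⟨u, hu1, hu2⟩ := stepA G b hm R hR (s.filter (fun v => ‖v‖ ≤ R))
      (fun v hv => (Finset.mem_filter.mp hv).2)
    exact ⟨u, hu1, fun v hv hvR => hu2 v (Finset.mem_filter.mpr ⟨hv, hvR⟩)⟩
  have hΦclosed : ∀ s, IsClosed (Φ s) := by
    intro s
    have : Φ s = {u : X | ‖u‖ ≤ R} ∩ ⋂ v ∈ s, {u : X | ‖v‖ ≤ R → 0 ≤ ⟪G v - b, v - u⟫} := by
      ext u; simp [hΦ, Set.mem_iInter]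
    rw [this]
    refine IsClosed.inter (isClosed_le continuous_norm continuous_const) ?_
    refine isClosed_biInter fun v _ => ?_
    by_cases hv : ‖v‖ ≤ R
    · have : {u : X | ‖v‖ ≤ R → 0 ≤ ⟪G v - b, v - u⟫} = {u : X | 0 ≤ ⟪G v - b, v - u⟫} := by
        ext u; simp [hv]
      rw [this]
      exact isClosed_le continuous_const
        (Continuous.inner continuous_const (continuous_const.sub continuous_id))
    · have : {u : X | ‖v‖ ≤ R → 0 ≤ ⟪G v - b, v - u⟫} = Set.univ := by
        ext u; simp [hv]
      rw [this]; exact isClosed_univ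
  have hΦconv : ∀ s, Convex ℝ (Φ s) := by
    intro s u hu u' hu' a a' ha ha' hab
    constructor
    · calc ‖a • u + a' • u'‖ ≤ ‖a • u‖ + ‖a' • u'‖ := norm_add_le _ _
        _ = a * ‖u‖ + a' * ‖u'‖ := by
            rw [norm_smul, norm_smul, Real.norm_eq_abs, Real.norm_eq_abs,
              abs_of_nonneg ha, abs_of_nonneg ha']
        _ ≤ a * R + a' * R := by
            gcongr <;> [exact hu.1; exact hu'.1]
        _ = R := by rw [← add_mul, hab, one_mul]
    · intro v hv hvR
      have e : v - (a • u + a' • u') = a • (v - u) + a' • (v - u') := by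
        calc v - (a • u + a' • u') = (a • v + a' • v) - (a • u + a' • u') := by
              rw [← add_smul, hab, one_smul]
          _ = a • (v - u) + a' • (v - u') := by rw [smul_sub, smul_sub]; abel
      rw [e, inner_add_right, real_inner_smul_right, real_inner_smul_right]
      have h1 := hu.2 v hv hvR
      have h2 := hu'.2 v hv hvR
      positivity
  have hΦanti : ∀ {s t : Finset X}, s ⊆ t → Φ t ⊆ Φ s :=
    fun hsub u hu => ⟨hu.1, fun v hv => hu.2 v (hsub hv)⟩
  -- minimal norm points
  have hminall : ∀ s : Finset X, ∃ m ∈ Φ s, ∀ x ∈ Φ s, ‖m‖ ≤ ‖x‖ :=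
    fun s => minpoint_exists _ (hΦne s) (hΦclosed s) (hΦconv s)
  choose m hmΦ hmmin using hminall
  set d : ℝ := sSup (Set.range fun s => ‖m s‖) with hd
  have hbdd : BddAbove (Set.range fun s => ‖m s‖) := by
    refine ⟨R, ?_⟩
    rintro x ⟨s, rfl⟩
    exact (hmΦ s).1
  have hrange : (Set.range fun s : Finset X => ‖m s‖).Nonempty := ⟨‖m ∅‖, ⟨∅, rfl⟩⟩
  have hdle : ∀ s, ‖m s‖ ≤ d := fun s => le_csSup hbdd ⟨s, rfl⟩
  have hd0 : 0 ≤ d := (norm_nonneg _).trans (hdle ∅)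
  have hseq : ∀ k : ℕ, ∃ s : Finset X, d - 1/(k+1) < ‖m s‖ := by
    intro k
    have hlt : d - 1/(k+1) < d := by
      have : (0:ℝ) < 1/(k+1) := by positivity
      linarith
    obtain ⟨x, ⟨s, rfl⟩, hx⟩ := exists_lt_of_lt_csSup hrange hlt
    exact ⟨s, hx⟩
  choose sq hsq using hseq
  set T : ℕ → Finset X := fun k => (Finset.range (k+1)).sup sq with hT
  have hTmono : ∀ {k l : ℕ}, k ≤ l → T k ⊆ T l := by
    intro k l hkl
    have h : T k ≤ T l := Finset.sup_mono (Finset.range_subset_range.mpr (by omega : k+1 ≤ l+1))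
    exact h
  have hsqT : ∀ k, sq k ⊆ T k :=
    fun k => Finset.le_sup (Finset.self_mem_range_succ k)
  have hmT : ∀ k, d - 1/(k+1) < ‖m (T k)‖ := by
    intro k
    have : m (T k) ∈ Φ (sq k) := hΦanti (hsqT k) (hmΦ (T k))
    exact lt_of_lt_of_le (hsq k) (hmmin (sq k) _ this)
  -- the quantitative estimate
  have hest : ∀ {s t : Finset X}, s ⊆ t → ‖m t - m s‖^2 ≤ 2*d^2 - 2*‖m s‖^2 := by
    intro s t hsub
    have h1 := minpoint_est (hΦanti hsub) (hΦconv s) (hmΦ s) (hmΦ t) (hmmin s)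
    have h2 : ‖m t‖^2 ≤ d^2 := by
      have := hdle t
      nlinarith [norm_nonneg (m t)]
    linarith
  set β : ℕ → ℝ := fun k => max (d - 1/(k+1)) 0 with hβdef
  set ε : ℕ → ℝ := fun k => 2*d^2 - 2*(β k)^2 with hεdef
  have hβle : ∀ k, β k ≤ ‖m (T k)‖ :=
    fun k => max_le (hmT k).le (norm_nonneg _)
  have hβ0 : ∀ k, 0 ≤ β k := fun k => le_max_right _ _
  have hestT : ∀ {k l : ℕ}, k ≤ l → ‖m (T l) - m (T k)‖^2 ≤ ε k := by
    intro k l hkl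
    have h1 := hest (hTmono hkl)
    have h2 : (β k)^2 ≤ ‖m (T k)‖^2 := by
      have := hβle k
      nlinarith [hβ0 k]
    simp only [hεdef]
    linarith
  have hε0 : ∀ k, 0 ≤ ε k := fun k => (sq_nonneg _).trans (hestT (le_refl k))
  have hεlim : Filter.Tendsto ε Filter.atTop (nhds 0) := by
    have h1 : Filter.Tendsto (fun k : ℕ => d - 1/(k+1)) Filter.atTop (nhds d) := by
      have := tendsto_one_div_add_atTop_nhds_zero_nat (𝕜 := ℝ)
      have h2 := Filter.Tendsto.const_sub d this
      simpa using h2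
    have h2 : Filter.Tendsto β Filter.atTop (nhds d) := by
      have := Filter.Tendsto.max h1 (tendsto_const_nhds (x := (0:ℝ)))
      rwa [max_eq_left hd0] at this
    have h3 : Filter.Tendsto (fun k => 2*d^2 - 2*(β k)^2) Filter.atTop (nhds (2*d^2 - 2*d^2)) := by
      exact Filter.Tendsto.sub tendsto_const_nhds ((h2.pow 2).const_mul 2)
    simpa using h3
  -- Cauchy sequence
  have hcauchy : CauchySeq (fun k => m (T k)) := by
    apply cauchySeq_of_le_tendsto_0 (fun k => 2 * Real.sqrt (ε k))
    · intro n l N hnN hlN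
      have hb1 : ‖m (T n) - m (T N)‖ ≤ Real.sqrt (ε N) := by
        have h := Real.sqrt_le_sqrt (hestT hnN)
        rwa [Real.sqrt_sq (norm_nonneg _)] at h
      have hb2 : ‖m (T l) - m (T N)‖ ≤ Real.sqrt (ε N) := by
        have h := Real.sqrt_le_sqrt (hestT hlN)
        rwa [Real.sqrt_sq (norm_nonneg _)] at h
      calc dist (m (T n)) (m (T l)) ≤ dist (m (T n)) (m (T N)) + dist (m (T N)) (m (T l)) :=
            dist_triangle _ _ _
        _ ≤ Real.sqrt (ε N) + Real.sqrt (ε N) := by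
            rw [dist_eq_norm, dist_eq_norm]
            have : ‖m (T N) - m (T l)‖ = ‖m (T l) - m (T N)‖ := norm_sub_rev _ _
            rw [this]
            exact add_le_add hb1 hb2
        _ = 2 * Real.sqrt (ε N) := by ring
    · have := hεlim.sqrt
      simpa using this.const_mul 2
  obtain ⟨uu, huu⟩ := cauchySeq_tendsto_of_complete hcauchy
  have huuR : ‖uu‖ ≤ R :=
    le_of_tendsto huu.norm (Filter.Eventually.of_forall fun k => (hmΦ (T k)).1)
  have hfinal : ∀ v : X, ‖v‖ ≤ R → 0 ≤ ⟪G v - b, v - uu⟫ := by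
    intro v hvR
    set P : ℕ → X := fun k => m (T k ∪ {v}) with hP
    have hPv : ∀ k, 0 ≤ ⟪G v - b, v - P k⟫ := fun k =>
      (hmΦ (T k ∪ {v})).2 v (Finset.mem_union_right _ (Finset.mem_singleton_self v)) hvR
    have hPest : ∀ k, ‖P k - m (T k)‖^2 ≤ ε k := by
      intro k
      have h1 := hest (Finset.subset_union_left (s₁ := T k) (s₂ := {v}))
      have h2 : (β k)^2 ≤ ‖m (T k)‖^2 := by nlinarith [hβle k, hβ0 k]
      simp only [hεdef]
      linarith
    have hPlim : Filter.Tendsto P Filter.atTop (nhds uu) := by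
      have hdiff : Filter.Tendsto (fun k => P k - m (T k)) Filter.atTop (nhds 0) := by
        rw [tendsto_zero_iff_norm_tendsto_zero]
        have hbnd : ∀ k, ‖P k - m (T k)‖ ≤ Real.sqrt (ε k) := fun k => by
          have h := Real.sqrt_le_sqrt (hPest k)
          rwa [Real.sqrt_sq (norm_nonneg _)] at h
        have hsq2 : Filter.Tendsto (fun k => Real.sqrt (ε k)) Filter.atTop (nhds 0) := by
          have := hεlim.sqrt
          simpa using this
        exact squeeze_zero (fun k => norm_nonneg _) hbnd hsq2
      have hsum := hdiff.add huu
      simpa using hsum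
    have hcont2 : Filter.Tendsto (fun k => ⟪G v - b, v - P k⟫) Filter.atTop
        (nhds ⟪G v - b, v - uu⟫) :=
      Filter.Tendsto.inner tendsto_const_nhds (tendsto_const_nhds.sub hPlim)
    exact ge_of_tendsto hcont2 (Filter.Eventually.of_forall hPv)
  -- Minty's trick
  have hVI : ∀ v : X, ‖v‖ ≤ R → 0 ≤ ⟪G uu - b, v - uu⟫ := by
    intro v hvR
    set z : X := v - uu with hz
    set ψ : ℝ → ℝ := fun t => ⟪G (uu + t • z), z⟫ - ⟪b, z⟫ with hψ
    have hψcont : ContinuousOn ψ (Set.Icc 0 1) :=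
      (hhemi uu z z).sub continuousOn_const
    have hψnonneg : ∀ t : ℝ, t ∈ Set.Ioc (0:ℝ) 1 → 0 ≤ ψ t := by
      intro t ht
      have hmem : ‖uu + t • z‖ ≤ R := by
        have he : uu + t • z = (1 - t) • uu + t • v := by rw [hz]; module
        rw [he]
        calc ‖(1-t) • uu + t • v‖ ≤ ‖(1-t) • uu‖ + ‖t • v‖ := norm_add_le _ _
          _ = (1-t)*‖uu‖ + t*‖v‖ := by
              rw [norm_smul, norm_smul, Real.norm_eq_abs, Real.norm_eq_abs,
                abs_of_nonneg (by linarith [ht.2] : (0:ℝ) ≤ 1 - t), abs_of_pos ht.1]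
          _ ≤ (1-t)*R + t*R := by
              have h1t : (0:ℝ) ≤ 1 - t := by linarith [ht.2]
              exact add_le_add (mul_le_mul_of_nonneg_left huuR h1t)
                (mul_le_mul_of_nonneg_left hvR ht.1.le)
          _ = R := by ring
      have h1 := hfinal (uu + t • z) hmem
      rw [show (uu + t • z) - uu = t • z from by abel, real_inner_smul_right] at h1
      have h4 : 0 ≤ ⟪G (uu + t • z) - b, z⟫ := by nlinarith [h1, ht.1]
      have h5 : ψ t = ⟪G (uu + t • z) - b, z⟫ := by
        rw [hψ]
        show ⟪G (uu + t • z), z⟫ - ⟪b, z⟫ = _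
        rw [inner_sub_left]
      linarith [h5 ▸ h4]
    have htIoc : ∀ n : ℕ, (1/(n+1) : ℝ) ∈ Set.Ioc (0:ℝ) 1 := by
      intro n
      constructor
      · positivity
      · rw [div_le_one (by positivity)]
        have : (0:ℝ) ≤ (n:ℝ) := Nat.cast_nonneg n
        linarith
    have ht0 : Filter.Tendsto (fun n : ℕ => (1/(n+1) : ℝ)) Filter.atTop (nhds 0) :=
      tendsto_one_div_add_atTop_nhds_zero_nat
    have hcwa : ContinuousWithinAt ψ (Set.Icc 0 1) 0 :=
      hψcont 0 ⟨le_refl 0, zero_le_one⟩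
    have htend : Filter.Tendsto (fun n : ℕ => ψ (1/(n+1))) Filter.atTop (nhds (ψ 0)) := by
      apply hcwa.tendsto.comp
      apply tendsto_nhdsWithin_of_tendsto_nhds_of_eventually_within _ ht0
      exact Filter.Eventually.of_forall fun n => Set.Ioc_subset_Icc_self (htIoc n)
    have hψ0 : 0 ≤ ψ 0 :=
      ge_of_tendsto htend (Filter.Eventually.of_forall fun n => hψnonneg _ (htIoc n))
    have hψ0eq : ψ 0 = ⟪G uu - b, z⟫ := by
      rw [hψ]
      show ⟪G (uu + (0:ℝ) • z), z⟫ - ⟪b, z⟫ = _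
      rw [zero_smul, add_zero, inner_sub_left]
    rw [hψ0eq] at hψ0
    exact hψ0
  -- a priori bound
  have hub : ‖uu‖ ≤ ‖b - G 0‖ := by
    have h1 := hVI 0 (by simpa using hR.le)
    rw [zero_sub, inner_neg_right] at h1
    have h2 : ⟪G uu - b, uu⟫ ≤ 0 := by linarith
    have h3 := hsm uu 0
    rw [sub_zero] at h3
    have h4 : ⟪G uu - G 0, uu⟫ = ⟪G uu - b, uu⟫ + ⟪b - G 0, uu⟫ := by
      rw [← inner_add_left]
      congr 1
      abel
    have h5 : ⟪b - G 0, uu⟫ ≤ ‖b - G 0‖ * ‖uu‖ := real_inner_le_norm _ _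
    nlinarith [norm_nonneg uu, norm_nonneg (b - G 0)]
  -- conclude
  refine ⟨uu, ?_⟩
  have hrz : G uu - b = 0 := by
    by_contra hrne
    set r : X := G uu - b with hr
    set t : ℝ := (R - ‖uu‖)/(‖r‖ + 1) with ht2
    have hRu : 0 < R - ‖uu‖ := by rw [hRdef]; linarith
    have htpos : 0 < t := div_pos hRu (by positivity)
    have hvmem : ‖uu - t • r‖ ≤ R := by
      calc ‖uu - t • r‖ ≤ ‖uu‖ + ‖t • r‖ := norm_sub_le _ _
        _ = ‖uu‖ + t * ‖r‖ := by rw [norm_smul, Real.norm_eq_abs, abs_of_pos htpos]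
        _ ≤ ‖uu‖ + (R - ‖uu‖) := by
            have hfrac : t * ‖r‖ ≤ R - ‖uu‖ := by
              rw [ht2, div_mul_eq_mul_div, div_le_iff₀ (by positivity : (0:ℝ) < ‖r‖ + 1)]
              nlinarith [norm_nonneg r]
            linarith
        _ = R := by ring
    have h6 := hVI (uu - t • r) hvmem
    rw [show (uu - t • r) - uu = -(t • r) from by abel, inner_neg_right,
      real_inner_smul_right] at h6
    have h8 : 0 < (⟪r, r⟫ : ℝ) := by
      rw [real_inner_self_eq_norm_sq]
      exact pow_pos (norm_pos_iff.mpr hrne) 2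
    nlinarith
  exact sub_eq_zero.mp hrz



end Aux

/-- **Well-posedness of the abstract Hammerstein equation.** Let `ι : X → W` be an
injective bounded linear map between real Hilbert spaces with dense range, and let
`K = ι*` be its adjoint, characterized by `⟪K f, v⟫_X = ⟪f, ι v⟫_W`.  If
`F : X → W` is monotone and hemicontinuous, then for every `f ∈ W` the abstract
Hammerstein equation `u + K (F u) = K f` has a unique solution `u ∈ X`, and the
solutions depend Lipschitz-continuously on the data:
`‖u − u'‖_X ≤ ‖K‖ ‖f − f'‖_W`. -/
theorem hammerstein_wellposed
    {X W : Type*}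
    [NormedAddCommGroup X] [InnerProductSpace ℝ X] [CompleteSpace X]
    [NormedAddCommGroup W] [InnerProductSpace ℝ W] [CompleteSpace W]
    (ι : X →L[ℝ] W) (hinj : Function.Injective ι)
    (hdense : Dense (Set.range (⇑ι)))
    (K : W →L[ℝ] X) (hK : ∀ (f : W) (v : X), ⟪K f, v⟫ = ⟪f, ι v⟫)
    (F : X → W)
    (hmono : ∀ u v : X, 0 ≤ ⟪F u - F v, ι u - ι v⟫)
    (hhemi : ∀ u v : X, ∀ w : W,
      ContinuousOn (fun t : ℝ => ⟪F (u + t • v), w⟫) (Set.Icc 0 1)) :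
    (∀ f : W, ∃! u : X, u + K (F u) = K f) ∧
    ∀ (f f' : W) (u u' : X), u + K (F u) = K f → u' + K (F u') = K f' →
      ‖u - u'‖ ≤ ‖K‖ * ‖f - f'‖ := by

  set G : X → X := fun u => u + K (F u) with hG
  have hsm : ∀ u v : X, ‖u - v‖ ^ 2 ≤ ⟪G u - G v, u - v⟫ := by
    intro u v
    have e : G u - G v = (u - v) + K (F u - F v) := by
      rw [hG]
      show (u + K (F u)) - (v + K (F v)) = (u - v) + K (F u - F v)
      rw [map_sub]
      abel
    rw [e, inner_add_left, real_inner_self_eq_norm_sq]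
    have h2 : ⟪K (F u - F v), u - v⟫ = ⟪F u - F v, ι (u - v)⟫ := hK _ _
    rw [h2, map_sub]
    linarith [hmono u v]
  have hhemi2 : ∀ u z y : X, ContinuousOn (fun t : ℝ => ⟪G (u + t • z), y⟫) (Set.Icc 0 1) := by
    intro u z y
    have e : (fun t : ℝ => ⟪G (u + t • z), y⟫)
        = fun t : ℝ => (⟪u, y⟫ + t * ⟪z, y⟫) + ⟪F (u + t • z), ι y⟫ := by
      funext t
      rw [hG]
      show ⟪(u + t • z) + K (F (u + t • z)), y⟫ = _
      rw [inner_add_left, inner_add_left, real_inner_smul_left, hK]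
    rw [e]
    exact ContinuousOn.add
      ((continuous_const.add (continuous_id.mul continuous_const)).continuousOn)
      (hhemi u z (ι y))
  have hGu : ∀ (f : W) (u : X), u + K (F u) = K f → G u = K f := fun f u h => h
  have stab : ∀ (f f' : W) (u u' : X), u + K (F u) = K f → u' + K (F u') = K f' →
      ‖u - u'‖ ≤ ‖K‖ * ‖f - f'‖ := by
    intro f f' u u' hu hu'
    have h1 : ‖u - u'‖^2 ≤ ‖K‖ * ‖f - f'‖ * ‖u - u'‖ := by
      have h2 : ⟪G u - G u', u - u'⟫ = ⟪K (f - f'), u - u'⟫ := by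
        rw [hGu f u hu, hGu f' u' hu', ← map_sub]
      have h3 : ⟪K (f - f'), u - u'⟫ ≤ ‖K (f - f')‖ * ‖u - u'‖ := real_inner_le_norm _ _
      have h4 : ‖K (f - f')‖ ≤ ‖K‖ * ‖f - f'‖ := K.le_opNorm _
      have h5 : ‖K (f - f')‖ * ‖u - u'‖ ≤ ‖K‖ * ‖f - f'‖ * ‖u - u'‖ :=
        mul_le_mul_of_nonneg_right h4 (norm_nonneg _)
      have h6 := hsm u u'
      rw [h2] at h6
      linarith
    rcases (norm_nonneg (u - u')).eq_or_lt with h0 | h0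
    · rw [← h0]; positivity
    · nlinarith
  constructor
  · intro f
    obtain ⟨u, hu⟩ := strongmono_surj G hsm hhemi2 (K f)
    refine ⟨u, hu, ?_⟩
    intro u' hu'
    have h := stab f f u' u hu' hu
    have : ‖u' - u‖ ≤ 0 := by
      have : ‖f - f‖ = 0 := by simp
      rw [this, mul_zero] at h
      exact h
    have hnn := norm_nonneg (u' - u)
    have : ‖u' - u‖ = 0 := le_antisymm this hnn
    have : u' - u = 0 := norm_eq_zero.mp this
    exact sub_eq_zero.mp this
  · exact stab
end

section
/- Let H be a real Hilbert space and A : H → H a map that is hemicontinuous (for all u, v, w ∈ H the real function t ↦ ⟨A(u + t v), w⟩ is continuous on [0,1]) and strongly monotone with constant c > 0 (⟨A u − A v, u − v⟩ ≥ c ‖u − v‖² for all u, v ∈ H). Then A is a bijection of H onto H, and its inverse is Lipschitz continuous with constant c⁻¹: ‖A⁻¹ x − A⁻¹ y‖ ≤ c⁻¹ ‖x − y‖ for all x, y ∈ H. (Browder–Minty theorem, in the form used to solve abstract Hammerstein equations.) -/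
open scoped RealInnerProductSpace

section BrowderMintyAux

variable {H : Type*} [NormedAddCommGroup H] [InnerProductSpace ℝ H]

lemma bm_variance {ι : Type*} (s : Finset ι) (w : ι → ℝ) (hw1 : ∑ i ∈ s, w i = 1)
    (c : ι → H) :
    ∑ i ∈ s, ∑ j ∈ s, w i * w j * ‖c i - c j‖ ^ 2
      = 2 * (∑ i ∈ s, w i * ‖c i‖ ^ 2) - 2 * ‖∑ i ∈ s, w i • c i‖ ^ 2 := by
  have key : ∀ i ∈ s, ∑ j ∈ s, w i * w j * ‖c i - c j‖ ^ 2
      = w i * ‖c i‖ ^ 2 + w i * (∑ j ∈ s, w j * ‖c j‖ ^ 2)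
        - 2 * (w i * ⟪c i, ∑ j ∈ s, w j • c j⟫) := by
    intro i _
    have step : ∀ j ∈ s, w i * w j * ‖c i - c j‖ ^ 2
        = w i * (w j * ‖c i‖ ^ 2) + w i * (w j * ‖c j‖ ^ 2)
          - 2 * (w i * (w j * ⟪c i, c j⟫)) := by
      intro j _
      rw [@norm_sub_sq_real H _ _ (c i) (c j)]; ring
    rw [Finset.sum_congr rfl step, Finset.sum_sub_distrib, Finset.sum_add_distrib,
      ← Finset.mul_sum, ← Finset.mul_sum, ← Finset.mul_sum, ← Finset.mul_sum,
      ← Finset.sum_mul, hw1, one_mul, inner_sum]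
    simp only [real_inner_smul_right]
  rw [Finset.sum_congr rfl key, Finset.sum_sub_distrib, Finset.sum_add_distrib,
    ← Finset.sum_mul, ← Finset.mul_sum, hw1, one_mul]
  have : ∑ i ∈ s, w i * ⟪c i, ∑ j ∈ s, w j • c j⟫
      = ‖∑ j ∈ s, w j • c j‖ ^ 2 := by
    rw [← real_inner_self_eq_norm_sq, sum_inner]
    exact Finset.sum_congr rfl fun i _ => (real_inner_smul_left _ _ _).symm
  rw [this]; ring

lemma bm_wsum_dist {ι : Type*} (s : Finset ι) (w : ι → ℝ) (hw1 : ∑ i ∈ s, w i = 1)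
    (a : ι → H) :
    ∑ i ∈ s, w i * ‖(∑ j ∈ s, w j • a j) - a i‖ ^ 2
      = ∑ i ∈ s, w i * ‖a i‖ ^ 2 - ‖∑ j ∈ s, w j • a j‖ ^ 2 := by
  set z := ∑ j ∈ s, w j • a j with hz
  have step : ∀ i ∈ s, w i * ‖z - a i‖ ^ 2
      = w i * ‖z‖ ^ 2 - 2 * (w i * ⟪z, a i⟫) + w i * ‖a i‖ ^ 2 := by
    intro i _
    rw [@norm_sub_sq_real H _ _ z (a i)]; ring
  rw [Finset.sum_congr rfl step, Finset.sum_add_distrib, Finset.sum_sub_distrib,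
    ← Finset.sum_mul, hw1, one_mul, ← Finset.mul_sum]
  have : ∑ i ∈ s, w i * ⟪z, a i⟫ = ‖z‖ ^ 2 := by
    rw [← real_inner_self_eq_norm_sq, inner_sum]
    exact Finset.sum_congr rfl fun i _ => (real_inner_smul_right _ _ _).symm
  rw [this]; ring

/-- Key algebraic inequality for Kirszbraun's lemma. -/
lemma bm_alg {ι : Type*} (s : Finset ι) (w : ι → ℝ) (hw0 : ∀ i ∈ s, 0 ≤ w i)
    (hw1 : ∑ i ∈ s, w i = 1) (a b : ι → H)
    (hab : ∀ i ∈ s, ∀ j ∈ s, ‖a i - a j‖ ≤ ‖b i - b j‖) :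
    ∑ i ∈ s, w i * (‖(∑ j ∈ s, w j • a j) - a i‖ ^ 2 - ‖b i‖ ^ 2) ≤ 0 := by
  have hdouble : ∑ i ∈ s, ∑ j ∈ s, w i * w j * ‖a i - a j‖ ^ 2
      ≤ ∑ i ∈ s, ∑ j ∈ s, w i * w j * ‖b i - b j‖ ^ 2 := by
    refine Finset.sum_le_sum fun i hi => Finset.sum_le_sum fun j hj => ?_
    have h1 := hab i hi j hj
    have h2 : 0 ≤ w i * w j := mul_nonneg (hw0 i hi) (hw0 j hj)
    have h3 : ‖a i - a j‖ ^ 2 ≤ ‖b i - b j‖ ^ 2 := by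
      exact pow_le_pow_left₀ (norm_nonneg _) h1 2
    nlinarith
  rw [bm_variance s w hw1 a, bm_variance s w hw1 b] at hdouble
  have h4 := bm_wsum_dist s w hw1 a
  have h5 : (0:ℝ) ≤ ‖∑ j ∈ s, w j • a j‖ ^ 2 := by positivity
  have h6 : (0:ℝ) ≤ ‖∑ j ∈ s, w j • b j‖ ^ 2 := by positivity
  have expand : ∑ i ∈ s, w i * (‖(∑ j ∈ s, w j • a j) - a i‖ ^ 2 - ‖b i‖ ^ 2)
      = ∑ i ∈ s, w i * ‖(∑ j ∈ s, w j • a j) - a i‖ ^ 2 - ∑ i ∈ s, w i * ‖b i‖ ^ 2 := by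
    rw [← Finset.sum_sub_distrib]
    exact Finset.sum_congr rfl fun i _ => by ring
  rw [expand, h4]
  nlinarith

variable [CompleteSpace H]

lemma bm_proj (K : Set H) (hKne : K.Nonempty) (hKcl : IsClosed K) (hKcv : Convex ℝ K)
    (z : H) : ∃ q ∈ K, ∀ w ∈ K, ⟪z - q, w - q⟫ ≤ 0 := by
  obtain ⟨q, hqK, hq⟩ := exists_norm_eq_iInf_of_complete_convex hKne hKcl.isComplete hKcv z
  exact ⟨q, hqK, (norm_eq_iInf_iff_real_inner_le_zero hKcv hqK).mp hq⟩

omit [CompleteSpace H] in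
lemma bm_proj_dist {K : Set H} {q z : H} (hq : ∀ w ∈ K, ⟪z - q, w - q⟫ ≤ 0)
    {w : H} (hw : w ∈ K) : ‖q - w‖ ≤ ‖z - w‖ := by
  have key : ‖z - w‖ ^ 2 = ‖z - q‖ ^ 2 + 2 * ⟪z - q, q - w⟫ + ‖q - w‖ ^ 2 := by
    have h : z - w = (z - q) + (q - w) := by abel
    rw [h, @norm_add_sq_real H]
  have h1 : 0 ≤ ⟪z - q, q - w⟫ := by
    have h0 := hq w hw
    have hsym : ⟪z - q, q - w⟫ = - ⟪z - q, w - q⟫ := by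
      rw [← inner_neg_right]; congr 1; abel
    rw [hsym]; linarith
  have h2 : ‖q - w‖ ^ 2 ≤ ‖z - w‖ ^ 2 := by nlinarith [sq_nonneg ‖z - q‖]
  exact (pow_le_pow_iff_left₀ (norm_nonneg _) (norm_nonneg _) two_ne_zero).mp h2

omit [CompleteSpace H] in
/-- Expansion of the quadratic along a segment. -/
lemma bm_quad (z0 dvec b : H) (t : ℝ) :
    ‖z0 + t • dvec - b‖ ^ 2 = ‖z0 - b‖ ^ 2 + 2 * t * ⟪dvec, z0 - b⟫ + t ^ 2 * ‖dvec‖ ^ 2 := by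
  have h : z0 + t • dvec - b = (z0 - b) + t • dvec := by abel
  rw [h, @norm_add_sq_real H, real_inner_smul_right, norm_smul]
  simp [mul_pow, real_inner_comm]
  ring

/-- Finite Kirszbraun lemma: finitely many balls with nonexpansive data intersect. -/
lemma bm_finite (P : Finset (H × H))
    (hP : ∀ p ∈ P, ∀ q ∈ P, ‖p.2 - q.2‖ ≤ ‖p.1 - q.1‖) (y : H) :
    ∃ z : H, ∀ p ∈ P, ‖z - p.2‖ ≤ ‖y - p.1‖ := by
  classical
  rcases P.eq_empty_or_nonempty with rfl | hne
  · exact ⟨0, by simp⟩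
  set g : H × H → H → ℝ := fun p z => ‖z - p.2‖ ^ 2 - ‖y - p.1‖ ^ 2 with hg
  set G : H → ℝ := fun z => P.sup' hne (fun p => g p z) with hG
  have hgc : ∀ p : H × H, Continuous (g p) := by
    intro p
    apply Continuous.sub _ continuous_const
    exact ((continuous_id.sub continuous_const).norm).pow 2
  have hGc : Continuous G := by
    rw [continuous_iff_continuousAt]
    intro z
    exact Filter.Tendsto.finset_sup'_nhds_apply hne fun p _ => ((hgc p).tendsto z)
  set K : Set H := convexHull ℝ (Prod.snd '' (P : Set (H × H))) with hK
  have hKcomp : IsCompact K := (((P : Set (H × H)).toFinite).image _).isCompact_convexHull (𝕜 := ℝ)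
  have hKne : K.Nonempty := (Set.Nonempty.image _ (by exact_mod_cast hne)).convexHull
  have hKcv : Convex ℝ K := convex_convexHull _ _
  obtain ⟨z0, hz0K, hz0min⟩ := hKcomp.exists_isMinOn hKne hGc.continuousOn
  -- global minimality
  have hglobal : ∀ z : H, G z0 ≤ G z := by
    intro z
    obtain ⟨q, hqK, hq⟩ := bm_proj K hKne hKcomp.isClosed hKcv z
    have h1 : G q ≤ G z := by
      apply Finset.sup'_mono_fun
      intro p hp
      have hp2 : p.2 ∈ K := subset_convexHull ℝ _ ⟨p, by exact_mod_cast hp, rfl⟩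
      have := bm_proj_dist hq hp2
      have h2 : ‖q - p.2‖ ^ 2 ≤ ‖z - p.2‖ ^ 2 :=
        pow_le_pow_left₀ (norm_nonneg _) this 2
      simp only [hg]; linarith
    exact le_trans (hz0min hqK) h1
  set Gs : ℝ := G z0 with hGs
  -- active set
  set Act : Finset (H × H) := P.filter (fun p => g p z0 = Gs) with hAct
  have hActne : Act.Nonempty := by
    obtain ⟨p, hp, hpe⟩ := Finset.exists_mem_eq_sup' hne (fun p => g p z0)
    exact ⟨p, Finset.mem_filter.mpr ⟨hp, hpe.symm⟩⟩
  have hActsub : Act ⊆ P := Finset.filter_subset _ _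
  have hact_le : ∀ p ∈ P, g p z0 ≤ Gs := fun p hp => Finset.le_sup' (fun p => g p z0) hp
  -- z0 lies in the convex hull of the active second coordinates
  have hz0hull : z0 ∈ convexHull ℝ (Prod.snd '' (Act : Set (H × H))) := by
    by_contra hcon
    set C : Set H := convexHull ℝ (Prod.snd '' (Act : Set (H × H))) with hC
    have hCcomp : IsCompact C := (((Act : Set (H × H)).toFinite).image _).isCompact_convexHull (𝕜 := ℝ)
    have hCne : C.Nonempty := (Set.Nonempty.image _ (by exact_mod_cast hActne)).convexHull
    obtain ⟨ps, hpsC, hps⟩ := bm_proj C hCne hCcomp.isClosed (convex_convexHull _ _) z0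
    set d : ℝ := ‖ps - z0‖ with hd
    have hdpos : 0 < d := by
      rw [hd, norm_pos_iff, sub_ne_zero]
      rintro rfl; exact hcon hpsC
    -- inner product bound for active pairs
    have hinner : ∀ p ∈ Act, ⟪ps - z0, z0 - p.2⟫ ≤ -d ^ 2 := by
      intro p hp
      have hp2 : p.2 ∈ C := subset_convexHull ℝ _ ⟨p, by exact_mod_cast hp, rfl⟩
      have h1 := hps p.2 hp2
      have h2 : ⟪z0 - ps, p.2 - ps⟫ = ⟪ps - z0, z0 - p.2⟫ + d ^ 2 := by
        have e1 : z0 - ps = -(ps - z0) := by abel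
        have e2 : p.2 - ps = -(z0 - p.2) - (ps - z0) := by abel
        rw [e1, e2, inner_neg_left, inner_sub_right, inner_neg_right,
          real_inner_self_eq_norm_sq, hd]
        ring
      linarith
    -- choose the step size
    set Inact : Finset (H × H) := P.filter (fun p => g p z0 ≠ Gs) with hInact
    set T : Finset ℝ := insert (1/2 : ℝ)
      (Inact.image fun p => (Gs - g p z0) / (2 * |⟪ps - z0, z0 - p.2⟫| + d ^ 2 + 1)) with hT
    have hTne : T.Nonempty := ⟨1/2, Finset.mem_insert_self _ _⟩
    set t : ℝ := T.min' hTne with ht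
    have htpos : 0 < t := by
      rw [ht, Finset.lt_min'_iff]
      intro x hx
      rcases Finset.mem_insert.mp hx with rfl | hx
      · norm_num
      · obtain ⟨p, hp, rfl⟩ := Finset.mem_image.mp hx
        have hpP := Finset.mem_of_mem_filter p hp
        have hlt : g p z0 < Gs :=
          lt_of_le_of_ne (hact_le p hpP) (Finset.mem_filter.mp hp).2
        have hden : 0 < 2 * |⟪ps - z0, z0 - p.2⟫| + d ^ 2 + 1 := by positivity
        exact div_pos (by linarith) hden
    have htle : t ≤ 1/2 := Finset.min'_le _ _ (Finset.mem_insert_self _ _)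
    -- the perturbed point has smaller G value
    have hlt : G (z0 + t • (ps - z0)) < Gs := by
      rw [hG, Finset.sup'_lt_iff]
      intro p hp
      have hexp2 : g p (z0 + t • (ps - z0))
          = g p z0 + 2 * t * ⟪ps - z0, z0 - p.2⟫ + t ^ 2 * d ^ 2 := by
        simp only [hg]
        rw [bm_quad, ← hd]
        ring
      rw [hexp2]
      have ht1 : t ≤ 1 := by linarith
      have hsq : t ^ 2 * d ^ 2 ≤ t * d ^ 2 := by
        have h0 : t ^ 2 ≤ t := by nlinarith
        exact mul_le_mul_of_nonneg_right h0 (sq_nonneg d)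
      by_cases hpa : g p z0 = Gs
      · -- active
        have h1 : ⟪ps - z0, z0 - p.2⟫ ≤ -d ^ 2 :=
          hinner p (Finset.mem_filter.mpr ⟨hp, hpa⟩)
        have h9 : 2 * t * ⟪ps - z0, z0 - p.2⟫ ≤ 2 * t * (-d ^ 2) := by
          apply mul_le_mul_of_nonneg_left h1 (by positivity)
        have h10 : 0 < t * d ^ 2 := by positivity
        linarith
      · -- inactive
        have hlt2 : g p z0 < Gs := lt_of_le_of_ne (hact_le p hp) hpa
        have hmem : (Gs - g p z0) / (2 * |⟪ps - z0, z0 - p.2⟫| + d ^ 2 + 1) ∈ T := by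
          rw [hT]
          exact Finset.mem_insert_of_mem
            (Finset.mem_image_of_mem _ (Finset.mem_filter.mpr ⟨hp, hpa⟩))
        have hden : 0 < 2 * |⟪ps - z0, z0 - p.2⟫| + d ^ 2 + 1 := by positivity
        have htle2 : t ≤ (Gs - g p z0) / (2 * |⟪ps - z0, z0 - p.2⟫| + d ^ 2 + 1) :=
          Finset.min'_le _ _ hmem
        have h4 : t * (2 * |⟪ps - z0, z0 - p.2⟫| + d ^ 2 + 1) ≤ Gs - g p z0 := by
          rw [← le_div_iff₀ hden]; exact htle2
        have h5 : ⟪ps - z0, z0 - p.2⟫ ≤ |⟪ps - z0, z0 - p.2⟫| := le_abs_self _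
        have h9 : 2 * t * ⟪ps - z0, z0 - p.2⟫ ≤ 2 * t * |⟪ps - z0, z0 - p.2⟫| := by
          apply mul_le_mul_of_nonneg_left h5 (by positivity)
        linarith
    exact absurd (hglobal (z0 + t • (ps - z0))) (not_le.mpr hlt)
  -- extract convex weights
  classical
  set B : Finset H := Act.image Prod.snd with hB
  have hBco : (B : Set H) = Prod.snd '' (Act : Set (H × H)) := by
    rw [hB, Finset.coe_image]
  rw [← hBco, Finset.convexHull_eq] at hz0hull
  obtain ⟨w, hw0, hw1, hwz⟩ := hz0hull
  rw [Finset.centerMass_eq_of_sum_1 _ _ hw1] at hwz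
  simp only [id] at hwz
  -- choice of an active pair for each point of B
  have hch : ∀ b ∈ B, ∃ p, p ∈ Act ∧ p.2 = b := by
    intro b hb
    obtain ⟨p, hp, hpe⟩ := Finset.mem_image.mp hb
    exact ⟨p, hp, hpe⟩
  set F : H → H × H := fun b => if h : ∃ p, p ∈ Act ∧ p.2 = b then h.choose else (0, 0)
    with hF
  have hFact : ∀ b ∈ B, F b ∈ Act ∧ (F b).2 = b := by
    intro b hb
    rw [hF]
    simp only [dif_pos (hch b hb)]
    exact (hch b hb).choose_spec
  have halg := bm_alg B w hw0 hw1 (fun b => b) (fun b => y - (F b).1) ?_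
  · -- each summand is `w b * Gs`
    have hterm : ∀ b ∈ B, w b * (‖(∑ j ∈ B, w j • j) - b‖ ^ 2 - ‖y - (F b).1‖ ^ 2)
        = w b * Gs := by
      intro b hb
      obtain ⟨hmem, he⟩ := hFact b hb
      have hact : g (F b) z0 = Gs := (Finset.mem_filter.mp hmem).2
      have h2 : ‖z0 - (F b).2‖ ^ 2 - ‖y - (F b).1‖ ^ 2 = Gs := hact
      rw [he] at h2
      rw [hwz, h2]
    rw [Finset.sum_congr rfl hterm, ← Finset.sum_mul, hw1, one_mul] at halg
    -- conclude
    refine ⟨z0, fun p hp => ?_⟩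
    have h1 : g p z0 ≤ Gs := hact_le p hp
    have h2 : ‖z0 - p.2‖ ^ 2 ≤ ‖y - p.1‖ ^ 2 := by
      have : g p z0 = ‖z0 - p.2‖ ^ 2 - ‖y - p.1‖ ^ 2 := rfl
      linarith
    exact (pow_le_pow_iff_left₀ (norm_nonneg _) (norm_nonneg _) two_ne_zero).mp h2
  · -- nonexpansive hypothesis for the chosen pairs
    intro b hb b' hb'
    obtain ⟨hm, he⟩ := hFact b hb
    obtain ⟨hm', he'⟩ := hFact b' hb'
    have := hP (F b) (hActsub hm) (F b') (hActsub hm')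
    rw [he, he'] at this
    calc ‖b - b'‖ ≤ ‖(F b).1 - (F b').1‖ := this
      _ = ‖(y - (F b).1) - (y - (F b').1)‖ := by rw [← norm_neg]; congr 1; abel

lemma bm_minpoint (S : Set H) (hne : S.Nonempty) (hcl : IsClosed S) (hcv : Convex ℝ S) :
    ∃ v ∈ S, ∀ w ∈ S, ‖v‖ ≤ ‖w‖ := by
  obtain ⟨v, hvS, hv⟩ := exists_norm_eq_iInf_of_complete_convex hne hcl.isComplete hcv 0
  refine ⟨v, hvS, fun w hw => ?_⟩
  have h1 : ‖0 - v‖ ≤ ‖0 - w‖ := by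
    rw [hv]
    exact ciInf_le ⟨0, Set.forall_mem_range.2 fun _ => norm_nonneg _⟩ (⟨w, hw⟩ : S)
  simpa using h1

/-- A family of closed balls with the finite intersection property has a common point. -/
lemma bm_inter (f : H → H) (r : H → ℝ)
    (hfin : ∀ s : Finset H, ∃ z, ∀ x ∈ s, ‖z - f x‖ ≤ r x) :
    ∃ z : H, ∀ x : H, ‖z - f x‖ ≤ r x := by
  classical
  set C : Finset H → Set H := fun s => {z | ∀ x ∈ s, ‖z - f x‖ ≤ r x} with hC
  have hCcl : ∀ s, IsClosed (C s) := by
    intro s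
    have : C s = ⋂ x ∈ s, {z : H | ‖z - f x‖ ≤ r x} := by
      ext z; simp [hC]
    rw [this]
    refine isClosed_biInter fun x _ => ?_
    have : {z : H | ‖z - f x‖ ≤ r x} = Metric.closedBall (f x) (r x) := by
      ext z; simp [Metric.mem_closedBall, dist_eq_norm]
    rw [this]; exact Metric.isClosed_closedBall
  have hCcv : ∀ s, Convex ℝ (C s) := by
    intro s
    have : C s = ⋂ x ∈ s, Metric.closedBall (f x) (r x) := by
      ext z; simp [hC, Metric.mem_closedBall, dist_eq_norm]
    rw [this]
    exact convex_iInter₂ fun x _ => convex_closedBall _ _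
  have hCne : ∀ s, (C s).Nonempty := fun s => hfin s
  have hmono : ∀ {s s' : Finset H}, s ⊆ s' → C s' ⊆ C s := by
    intro s s' hss z hz x hx
    exact hz x (hss hx)
  -- minimal norm points
  have hmp : ∀ s : Finset H, ∃ v, v ∈ C s ∧ ∀ w ∈ C s, ‖v‖ ≤ ‖w‖ := by
    intro s
    obtain ⟨v, h1, h2⟩ := bm_minpoint (C s) (hCne s) (hCcl s) (hCcv s)
    exact ⟨v, h1, h2⟩
  choose m hmC hmmin using hmp
  set n : Finset H → ℝ := fun s => ‖m s‖ with hn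
  have hnmono : ∀ {s s' : Finset H}, s ⊆ s' → n s ≤ n s' := by
    intro s s' hss
    exact hmmin s (m s') (hmono hss (hmC s'))
  have hnnonneg : ∀ s, 0 ≤ n s := fun s => norm_nonneg _
  -- boundedness
  set M : ℝ := ‖f 0‖ + r 0 with hM
  have hbound : ∀ s : Finset H, n s ≤ M := by
    intro s
    have h1 : n s ≤ n (insert 0 s) := hnmono (Finset.subset_insert _ _)
    have h2 : m (insert 0 s) ∈ C (insert 0 s) := hmC _
    have h3 : ‖m (insert 0 s) - f 0‖ ≤ r 0 := h2 0 (Finset.mem_insert_self _ _)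
    have h4 : n (insert 0 s) ≤ M := by
      have := norm_sub_norm_le (m (insert 0 s)) (f 0)
      rw [hn, hM]; simp only []; linarith
    linarith
  -- supremum
  set N : Set ℝ := Set.range n with hN
  have hNne : N.Nonempty := ⟨n ∅, ⟨∅, rfl⟩⟩
  have hNbdd : BddAbove N := ⟨M, by rintro _ ⟨s, rfl⟩; exact hbound s⟩
  set dsup : ℝ := sSup N with hdsup
  have hle_dsup : ∀ s, n s ≤ dsup := fun s => le_csSup hNbdd ⟨s, rfl⟩
  -- approximating sequence
  have hseq : ∀ k : ℕ, ∃ s : Finset H, dsup - 1 / (k + 1) < n s := by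
    intro k
    have h1 : dsup - 1 / (k + 1) < dsup := by
      have : (0:ℝ) < 1 / (k + 1) := by positivity
      linarith
    obtain ⟨a, ⟨s, rfl⟩, ha⟩ := exists_lt_of_lt_csSup hNne h1
    exact ⟨s, ha⟩
  choose t ht using hseq
  set u : ℕ → Finset H := fun k => (Finset.range (k + 1)).biUnion t with hu
  have humono : ∀ {k l : ℕ}, k ≤ l → u k ⊆ u l := by
    intro k l hkl
    exact Finset.biUnion_subset_biUnion_of_subset_left _
      (Finset.range_subset_range.mpr (by omega))
  have htu : ∀ k, t k ⊆ u k := fun k =>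
    Finset.subset_biUnion_of_mem t (Finset.self_mem_range_succ k)
  have hnu_lb : ∀ k, dsup - 1 / (k + 1) < n (u k) :=
    fun k => lt_of_lt_of_le (ht k) (hnmono (htu k))
  have hnu_tendsto : Filter.Tendsto (fun k => n (u k)) Filter.atTop (nhds dsup) := by
    apply tendsto_of_tendsto_of_tendsto_of_le_of_le (g := fun k : ℕ => dsup - 1 / (k + 1))
      (h := fun _ => dsup)
    · have : Filter.Tendsto (fun k : ℕ => 1 / ((k:ℝ) + 1)) Filter.atTop (nhds 0) :=
        tendsto_one_div_add_atTop_nhds_zero_nat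
      simpa using Filter.Tendsto.const_sub dsup this
    · exact tendsto_const_nhds
    · exact fun k => le_of_lt (hnu_lb k)
    · exact fun k => hle_dsup (u k)
  -- key parallelogram estimate
  have hpar : ∀ (s : Finset H) (wpt : H), wpt ∈ C s → ‖wpt‖ ≤ dsup →
      ‖m s - wpt‖ ^ 2 ≤ 2 * (dsup ^ 2 - n s ^ 2) := by
    intro s wpt hw hwn
    have hmid : (2:ℝ)⁻¹ • (m s + wpt) ∈ C s := by
      have := (hCcv s) (hmC s) hw (by norm_num : (0:ℝ) ≤ 1/2) (by norm_num : (0:ℝ) ≤ 1/2)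
        (by norm_num)
      convert this using 1
      rw [smul_add]; norm_num
    have h1 : n s ≤ ‖(2:ℝ)⁻¹ • (m s + wpt)‖ := hmmin s _ hmid
    have h2 : ‖(2:ℝ)⁻¹ • (m s + wpt)‖ = 2⁻¹ * ‖m s + wpt‖ := by
      rw [norm_smul]; norm_num
    have hpl := parallelogram_law_with_norm ℝ (m s) wpt
    have h3 : ‖m s‖ = n s := rfl
    have h4 : 2 * n s ≤ ‖m s + wpt‖ := by rw [h2] at h1; linarith
    have h5 : (2 * n s) ^ 2 ≤ ‖m s + wpt‖ ^ 2 := by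
      apply pow_le_pow_left₀ (by positivity) h4
    have h6 : n s ^ 2 ≤ dsup ^ 2 := by
      apply pow_le_pow_left₀ (hnnonneg s) (hle_dsup s)
    have h7 : ‖wpt‖ ^ 2 ≤ dsup ^ 2 := by
      apply pow_le_pow_left₀ (norm_nonneg _) hwn
    have hsq : ∀ a : H, ‖a‖ * ‖a‖ = ‖a‖ ^ 2 := fun a => (sq ‖a‖).symm
    nlinarith [hpl]
  -- the sequence of minimal points is Cauchy
  set z : ℕ → H := fun k => m (u k) with hz
  have hcauchy : CauchySeq z := by
    apply cauchySeq_of_le_tendsto_0 (b := fun k => Real.sqrt (2 * (dsup ^ 2 - n (u k) ^ 2)))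
    · intro k l N hk hl
      -- wlog k ≤ l by symmetry; handle directly
      have key : ∀ {a b : ℕ}, N ≤ a → a ≤ b → dist (z a) (z b)
          ≤ Real.sqrt (2 * (dsup ^ 2 - n (u N) ^ 2)) := by
        intro a b hNa hab
        have h1 : z b ∈ C (u a) := hmono (humono hab) (hmC (u b))
        have h2 := hpar (u a) (z b) h1 (hle_dsup (u b))
        have h3 : n (u N) ≤ n (u a) := hnmono (humono hNa)
        have h4 : n (u N) ^ 2 ≤ n (u a) ^ 2 :=
          pow_le_pow_left₀ (hnnonneg _) h3 2
        rw [dist_eq_norm]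
        have h5 : ‖z a - z b‖ ^ 2 ≤ 2 * (dsup ^ 2 - n (u N) ^ 2) := by
          have : ‖m (u a) - z b‖ ^ 2 ≤ 2 * (dsup ^ 2 - n (u a) ^ 2) := h2
          simp only [hz]
          linarith
        calc ‖z a - z b‖ = Real.sqrt (‖z a - z b‖ ^ 2) := by
              rw [Real.sqrt_sq (norm_nonneg _)]
          _ ≤ Real.sqrt (2 * (dsup ^ 2 - n (u N) ^ 2)) := Real.sqrt_le_sqrt h5
      rcases le_total k l with hkl | hlk
      · exact key hk hkl
      · rw [dist_comm]; exact key hl hlk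
    · have h1 : Filter.Tendsto (fun k => 2 * (dsup ^ 2 - n (u k) ^ 2)) Filter.atTop
          (nhds 0) := by
        have h2 : Filter.Tendsto (fun k => n (u k) ^ 2) Filter.atTop (nhds (dsup ^ 2)) :=
          (hnu_tendsto.pow 2)
        have := (tendsto_const_nhds (x := dsup ^ 2) (f := Filter.atTop (α := ℕ))).sub h2
        simpa using this.const_mul 2
      have := h1.sqrt
      simpa using this
  obtain ⟨zstar, hzstar⟩ := cauchySeq_tendsto_of_complete hcauchy
  refine ⟨zstar, fun x => ?_⟩
  -- auxiliary sequence in `C (insert x (u k))`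
  set wseq : ℕ → H := fun k => m (insert x (u k)) with hw
  have hw1 : ∀ k, wseq k ∈ C (u k) := fun k => hmono (Finset.subset_insert _ _) (hmC _)
  have hw2 : ∀ k, ‖wseq k - f x‖ ≤ r x := fun k => hmC (insert x (u k)) x
    (Finset.mem_insert_self _ _)
  have hwz : Filter.Tendsto (fun k => ‖z k - wseq k‖) Filter.atTop (nhds 0) := by
    have hb : ∀ k, ‖z k - wseq k‖ ≤ Real.sqrt (2 * (dsup ^ 2 - n (u k) ^ 2)) := by
      intro k
      have h2 := hpar (u k) (wseq k) (hw1 k) (hle_dsup _)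
      calc ‖z k - wseq k‖ = Real.sqrt (‖z k - wseq k‖ ^ 2) := by
            rw [Real.sqrt_sq (norm_nonneg _)]
        _ ≤ Real.sqrt (2 * (dsup ^ 2 - n (u k) ^ 2)) := Real.sqrt_le_sqrt h2
    have h1 : Filter.Tendsto (fun k => Real.sqrt (2 * (dsup ^ 2 - n (u k) ^ 2)))
        Filter.atTop (nhds 0) := by
      have h2 : Filter.Tendsto (fun k => n (u k) ^ 2) Filter.atTop (nhds (dsup ^ 2)) :=
        (hnu_tendsto.pow 2)
      have h3 := (tendsto_const_nhds (x := dsup ^ 2) (f := Filter.atTop (α := ℕ))).sub h2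
      have h4 : Filter.Tendsto (fun k => 2 * (dsup ^ 2 - n (u k) ^ 2)) Filter.atTop
          (nhds 0) := by simpa using h3.const_mul 2
      have := h4.sqrt
      simpa using this
    exact squeeze_zero (fun k => norm_nonneg _) hb h1
  have hwtend : Filter.Tendsto wseq Filter.atTop (nhds zstar) := by
    have : Filter.Tendsto (fun k => z k - (z k - wseq k)) Filter.atTop (nhds (zstar - 0)) := by
      apply Filter.Tendsto.sub hzstar
      exact (tendsto_zero_iff_norm_tendsto_zero).mpr hwz
    simpa using this
  have hcont : Filter.Tendsto (fun k => ‖wseq k - f x‖) Filter.atTop (nhds ‖zstar - f x‖) :=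
    (Filter.Tendsto.sub hwtend tendsto_const_nhds).norm
  exact le_of_tendsto hcont (Filter.Eventually.of_forall hw2)

omit [CompleteSpace H] in
/-- Minty's trick: hemicontinuity upgrades the weak inequality to an equation. -/
lemma bm_minty (A : H → H)
    (hhemi : ∀ u v w : H,
      ContinuousOn (fun t : ℝ => ⟪A (u + t • v), w⟫) (Set.Icc 0 1))
    (u v : H) (h : ∀ w, 0 ≤ ⟪A w - v, w - u⟫) : A u = v := by
  have key : ∀ d : H, 0 ≤ ⟪A u - v, d⟫ := by
    intro d
    have hcont := hhemi u d d
    have h0 : ContinuousWithinAt (fun t : ℝ => ⟪A (u + t • d), d⟫) (Set.Icc 0 1) 0 :=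
      hcont 0 ⟨le_refl 0, zero_le_one⟩
    have h1 : Filter.Tendsto (fun t : ℝ => ⟪A (u + t • d), d⟫) (nhdsWithin 0 (Set.Ioc 0 1))
        (nhds ⟪A (u + (0:ℝ) • d), d⟫) :=
      h0.tendsto.mono_left (nhdsWithin_mono 0 Set.Ioc_subset_Icc_self)
    have h2 : ∀ t ∈ Set.Ioc (0:ℝ) 1, ⟪v, d⟫ ≤ ⟪A (u + t • d), d⟫ := by
      intro t ⟨ht0, ht1⟩
      have h3 := h (u + t • d)
      have h4 : (u + t • d) - u = t • d := by abel
      rw [h4] at h3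
      simp only [inner_sub_left, real_inner_smul_right] at h3
      have h5 : 0 ≤ ⟪A (u + t • d), d⟫ - ⟪v, d⟫ := by
        by_contra hcon
        push_neg at hcon
        nlinarith
      linarith
    have h6 : (nhdsWithin (0:ℝ) (Set.Ioc 0 1)).NeBot :=
      left_nhdsWithin_Ioc_neBot zero_lt_one
    have h7 : ⟪v, d⟫ ≤ ⟪A (u + (0:ℝ) • d), d⟫ := by
      apply ge_of_tendsto h1
      filter_upwards [self_mem_nhdsWithin] using h2
    rw [zero_smul, add_zero] at h7
    rw [inner_sub_left]; linarith
  have h8 := key (v - A u)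
  have h9 : v - A u = -(A u - v) := by abel
  rw [h9, inner_neg_right, real_inner_self_eq_norm_sq] at h8
  have h10 : ‖A u - v‖ = 0 := by nlinarith [norm_nonneg (A u - v), sq_nonneg ‖A u - v‖]
  rw [norm_eq_zero, sub_eq_zero] at h10
  exact h10

omit [CompleteSpace H] in
lemma bm_sum_sq {a e : H} (h : 0 ≤ ⟪a, e⟫) : ‖a - e‖ ≤ ‖a + e‖ := by
  have h1 : ‖a - e‖ ^ 2 ≤ ‖a + e‖ ^ 2 := by
    rw [@norm_sub_sq_real H, @norm_add_sq_real H]; linarith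
  exact (pow_le_pow_iff_left₀ (norm_nonneg _) (norm_nonneg _) two_ne_zero).mp h1

/-- Surjectivity of `I + A` for a monotone hemicontinuous `A`. -/
lemma bm_surj_add (A : H → H)
    (hhemi : ∀ u v w : H,
      ContinuousOn (fun t : ℝ => ⟪A (u + t • v), w⟫) (Set.Icc 0 1))
    (hmono : ∀ u v : H, 0 ≤ ⟪A u - A v, u - v⟫) (y : H) :
    ∃ u, u + A u = y := by
  classical
  have hfin : ∀ s : Finset H, ∃ z, ∀ x ∈ s, ‖z - (x - A x)‖ ≤ ‖y - (x + A x)‖ := by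
    intro s
    have hPcond : ∀ p ∈ s.image (fun w => (w + A w, w - A w)),
        ∀ q ∈ s.image (fun w => (w + A w, w - A w)), ‖p.2 - q.2‖ ≤ ‖p.1 - q.1‖ := by
      rintro p hp q hq
      obtain ⟨w1, _, rfl⟩ := Finset.mem_image.mp hp
      obtain ⟨w2, _, rfl⟩ := Finset.mem_image.mp hq
      simp only
      have e1 : (w1 - A w1) - (w2 - A w2) = (w1 - w2) - (A w1 - A w2) := by abel
      have e2 : (w1 + A w1) - (w2 + A w2) = (w1 - w2) + (A w1 - A w2) := by abel
      rw [e1, e2]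
      apply bm_sum_sq
      rw [real_inner_comm]
      exact hmono w1 w2
    obtain ⟨z, hz⟩ := bm_finite (s.image (fun w => (w + A w, w - A w))) hPcond y
    exact ⟨z, fun x hx => hz (x + A x, x - A x) (Finset.mem_image_of_mem _ hx)⟩
  obtain ⟨z, hz⟩ := bm_inter (fun w => w - A w) (fun w => ‖y - (w + A w)‖) hfin
  set u : H := (2⁻¹ : ℝ) • (y + z) with hu
  set v : H := y - u with hv
  have huv : u + v = y := by rw [hv]; abel
  have huz : u - v = z := by
    rw [hv, hu]
    have h1 : (2⁻¹ : ℝ) • (y + z) + (2⁻¹ : ℝ) • (y + z) = y + z := by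
      rw [← add_smul]; norm_num
    have h2 : (2⁻¹ : ℝ) • (y + z) - (y - (2⁻¹ : ℝ) • (y + z))
        = ((2⁻¹ : ℝ) • (y + z) + (2⁻¹ : ℝ) • (y + z)) - y := by abel
    rw [h2, h1]; abel
  have hineq : ∀ w, 0 ≤ ⟪A w - v, w - u⟫ := by
    intro w
    have h1 := hz w
    have e1 : z - (w - A w) = (u - w) - (v - A w) := by rw [← huz]; abel
    have e2 : y - (w + A w) = (u - w) + (v - A w) := by rw [← huv]; abel
    rw [e1, e2] at h1
    have h2 : ‖(u - w) - (v - A w)‖ ^ 2 ≤ ‖(u - w) + (v - A w)‖ ^ 2 :=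
      pow_le_pow_left₀ (norm_nonneg _) h1 2
    rw [@norm_sub_sq_real H, @norm_add_sq_real H] at h2
    have h3 : 0 ≤ ⟪u - w, v - A w⟫ := by linarith
    have e3 : A w - v = -(v - A w) := by abel
    have e4 : w - u = -(u - w) := by abel
    rw [e3, e4, inner_neg_neg, real_inner_comm]
    exact h3
  have hAu := bm_minty A hhemi u v hineq
  exact ⟨u, by rw [hAu, huv]⟩

end BrowderMintyAux

/-- **Browder–Minty theorem** (in the form used to solve abstract Hammerstein
equations): a hemicontinuous, strongly monotone map `A : H → H` on a real Hilbert
space is a bijection of `H` onto `H`, and its inverse is Lipschitz continuous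
with constant `c⁻¹`. -/
theorem browder_minty
    {H : Type*} [NormedAddCommGroup H] [InnerProductSpace ℝ H] [CompleteSpace H]
    (A : H → H) (c : ℝ) (hc : 0 < c)
    (hhemi : ∀ u v w : H,
      ContinuousOn (fun t : ℝ => ⟪A (u + t • v), w⟫) (Set.Icc 0 1))
    (hmono : ∀ u v : H, c * ‖u - v‖ ^ 2 ≤ ⟪A u - A v, u - v⟫) :
    Function.Bijective A ∧
    ∀ x y : H, ‖Function.invFun A x - Function.invFun A y‖ ≤ c⁻¹ * ‖x - y‖ := by
  classical
  have hmono0 : ∀ u v : H, 0 ≤ ⟪A u - A v, u - v⟫ := by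
    intro u v
    have := hmono u v
    nlinarith [sq_nonneg ‖u - v‖]
  -- strong monotonicity gives the inverse Lipschitz bound
  have hinv : ∀ a b : H, c * ‖a - b‖ ≤ ‖A a - A b‖ := by
    intro a b
    rcases eq_or_ne a b with rfl | hne
    · simp
    · have h1 := hmono a b
      have h2 : ⟪A a - A b, a - b⟫ ≤ ‖A a - A b‖ * ‖a - b‖ := real_inner_le_norm _ _
      have h3 : 0 < ‖a - b‖ := by
        rw [norm_pos_iff, sub_ne_zero]; exact hne
      have h4 : c * ‖a - b‖ * ‖a - b‖ ≤ ‖A a - A b‖ * ‖a - b‖ := by nlinarith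
      exact le_of_mul_le_mul_right h4 h3
  have hinj : Function.Injective A := by
    intro a b hab
    have h1 := hinv a b
    rw [hab, sub_self, norm_zero] at h1
    have h2 : ‖a - b‖ ≤ 0 := by
      by_contra hcon
      push_neg at hcon
      nlinarith
    rw [← sub_eq_zero, ← norm_eq_zero]
    exact le_antisymm h2 (norm_nonneg _)
  -- surjectivity via the resolvent and Banach's fixed point theorem
  have hsurj : Function.Surjective A := by
    intro f
    have hres := bm_surj_add A hhemi hmono0
    choose g hg using hres
    set T : H → H := fun u => g (u + f) with hT
    have hTlip : ∀ u u' : H, (1 + c) * ‖T u - T u'‖ ≤ ‖u - u'‖ := by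
      intro u u'
      set a : H := T u with ha
      set b : H := T u' with hb
      have h1 : a + A a = u + f := hg (u + f)
      have h2 : b + A b = u' + f := hg (u' + f)
      have h3 : (1 + c) * ‖a - b‖ ^ 2 ≤ ⟪(a + A a) - (b + A b), a - b⟫ := by
        rw [show (a + A a) - (b + A b) = (a - b) + (A a - A b) by abel, inner_add_left,
          real_inner_self_eq_norm_sq]
        have := hmono a b
        linarith
      have h4 : (a + A a) - (b + A b) = u - u' := by rw [h1, h2]; abel
      rw [h4] at h3
      have h5 : ⟪u - u', a - b⟫ ≤ ‖u - u'‖ * ‖a - b‖ := real_inner_le_norm _ _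
      rcases eq_or_lt_of_le (norm_nonneg (a - b)) with heq | hpos
      · rw [← heq]; simp [norm_nonneg]
      · have h6 : (1 + c) * ‖a - b‖ * ‖a - b‖ ≤ ‖u - u'‖ * ‖a - b‖ := by nlinarith
        exact le_of_mul_le_mul_right h6 hpos
    set k : NNReal := Real.toNNReal (1 + c)⁻¹ with hk
    have hkc : (k : ℝ) = (1 + c)⁻¹ := Real.coe_toNNReal _ (by positivity)
    have hcontr : ContractingWith k T := by
      constructor
      · rw [← NNReal.coe_lt_coe, hkc, NNReal.coe_one]
        rw [inv_lt_one_iff₀]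
        right; linarith
      · apply LipschitzWith.of_dist_le_mul
        intro u u'
        rw [dist_eq_norm, dist_eq_norm, hkc]
        have h1 := hTlip u u'
        have h2 : 0 < 1 + c := by linarith
        calc ‖T u - T u'‖ = (1 + c)⁻¹ * ((1 + c) * ‖T u - T u'‖) := by
              field_simp
          _ ≤ (1 + c)⁻¹ * ‖u - u'‖ := by
              apply mul_le_mul_of_nonneg_left h1 (by positivity)
    obtain ⟨u, hu, -⟩ := hcontr.exists_fixedPoint 0 (edist_ne_top _ _)
    have h1 : g (u + f) + A (g (u + f)) = u + f := hg (u + f)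
    have h2 : g (u + f) = u := hu
    rw [h2] at h1
    exact ⟨u, add_left_cancel h1⟩
  refine ⟨⟨hinj, hsurj⟩, fun x y => ?_⟩
  set a : H := Function.invFun A x with ha
  set b : H := Function.invFun A y with hb
  have hax : A a = x := Function.rightInverse_invFun hsurj x
  have hby : A b = y := Function.rightInverse_invFun hsurj y
  have h1 := hinv a b
  rw [hax, hby] at h1
  calc ‖a - b‖ = c⁻¹ * (c * ‖a - b‖) := by field_simp
    _ ≤ c⁻¹ * ‖x - y‖ := mul_le_mul_of_nonneg_left h1 (by positivity)
end

section
/- Consider a closed Hilbert complex segment: real Hilbert spaces W0, W1, W2 with closed, densely defined linear operators d0 : V0 → W1 (dense domain V0 ⊆ W0) and d1 : V1 → W2 (dense domain V1 ⊆ W1) such that d0(V0) ⊆ V1, d1(d0 τ) = 0 for all τ ∈ V0, and the ranges B = d0(V0) ⊆ W1 and d1(V1) ⊆ W2 are closed. Let d0† be the adjoint of d0 with domain V1* ⊆ W1, let H = {w ∈ V1 : d1 w = 0 and ⟨w, d0 τ⟩ = 0 for all τ ∈ V0}, and let P_H denote the W1-orthogonal projection onto H. Then there exists a constant C > 0 such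 that for every u ∈ V1 ∩ V1*, ‖u‖² ≤ C (‖d1 u‖² + ‖d0† u‖² + ‖P_H u‖²); consequently the bilinear form ⟨d0† u, d0† v⟩ + ⟨d1 u, d1 v⟩ + ⟨P_H u, P_H v⟩ is an inner product on V1 ∩ V1* whose norm is equivalent to the intersection norm (‖u‖² + ‖d1 u‖² + ‖d0† u‖²)^{1/2}. -/
open scoped RealInnerProductSpace

set_option maxHeartbeats 1000000 in
lemma closed_graph_open_map {E F : Type*} [NormedAddCommGroup E] [NormedSpace ℝ E] [CompleteSpace E]
    [NormedAddCommGroup F] [NormedSpace ℝ F] [CompleteSpace F]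
    (V : Submodule ℝ E) (d : V →ₗ[ℝ] F)
    (hgraph : IsClosed {p : E × F | ∃ τ : V, (τ : E) = p.1 ∧ d τ = p.2})
    (hrange : IsClosed (Set.range ⇑d)) :
    ∃ C : ℝ, 0 < C ∧ ∀ y ∈ Set.range ⇑d, ∃ τ : V, d τ = y ∧ ‖(τ : E)‖ ≤ C * ‖y‖ := by
  set G : Submodule ℝ (E × F) := LinearMap.range ((V.subtype).prod d) with hG
  have hGset : (G : Set (E × F)) = {p : E × F | ∃ τ : V, (τ : E) = p.1 ∧ d τ = p.2} := by
    ext p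
    constructor
    · rintro ⟨τ, rfl⟩; exact ⟨τ, rfl, rfl⟩
    · rintro ⟨τ, h1, h2⟩
      exact ⟨τ, Prod.ext (by simpa using h1) (by simpa using h2)⟩
  have hGclosed : IsClosed (G : Set (E × F)) := hGset ▸ hgraph
  haveI : CompleteSpace G := hGclosed.completeSpace_coe
  set R : Submodule ℝ F := LinearMap.range d with hR
  have hRclosed : IsClosed (R : Set F) := by
    rw [hR, LinearMap.coe_range]; exact hrange
  haveI : CompleteSpace R := hRclosed.completeSpace_coe
  have hmem : ∀ g : G, ((ContinuousLinearMap.snd ℝ E F).comp G.subtypeL) g ∈ R := by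
    rintro ⟨g, τ, hτ⟩
    exact ⟨τ, congrArg Prod.snd hτ⟩
  set π : G →L[ℝ] R :=
    ContinuousLinearMap.codRestrict ((ContinuousLinearMap.snd ℝ E F).comp G.subtypeL) R hmem
  have hsurj : Function.Surjective π := by
    rintro ⟨y, τ, hτ⟩
    refine ⟨⟨(τ, d τ), ⟨τ, rfl⟩⟩, ?_⟩
    apply Subtype.ext
    simpa [π] using hτ
  obtain ⟨C, hC, hall⟩ := π.exists_preimage_norm_le hsurj
  refine ⟨C, hC, ?_⟩
  rintro y ⟨τ0, hτ0⟩
  obtain ⟨x, hx, hxn⟩ := hall ⟨y, τ0, hτ0⟩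
  obtain ⟨τ, hτ⟩ := x.2
  refine ⟨τ, ?_, ?_⟩
  · have h3 : (x : E × F).2 = y := congrArg Subtype.val hx
    have h2 : d τ = (x : E × F).2 := congrArg Prod.snd hτ
    rw [h2, h3]
  · have h1 : (τ : E) = (x : E × F).1 := congrArg Prod.fst hτ
    calc ‖(τ : E)‖ = ‖(x : E × F).1‖ := by rw [h1]
      _ ≤ ‖(x : E × F)‖ := norm_fst_le _
      _ ≤ C * ‖y‖ := hxn

set_option maxHeartbeats 1000000 in
/-- On a closed Hilbert complex segment, with `d0†` the adjoint of `d0` (domain `V1*`)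
and `P_H` the `W1`-orthogonal projection onto the harmonic space, there is `C > 0`
such that `‖u‖² ≤ C (‖d1 u‖² + ‖d0† u‖² + ‖P_H u‖²)` for all `u ∈ V1 ∩ V1*`;
consequently the bilinear form `⟪d0† u, d0† v⟫ + ⟪d1 u, d1 v⟫ + ⟪P_H u, P_H v⟫`
induces a norm equivalent to the intersection norm `(‖u‖² + ‖d1 u‖² + ‖d0† u‖²)^{1/2}`
(expressed here via the two-sided comparison of the squared norms). -/
theorem harmonic_augmented_norm_equivalence
    {W0 W1 W2 : Type*}
    [NormedAddCommGroup W0] [InnerProductSpace ℝ W0] [CompleteSpace W0]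
    [NormedAddCommGroup W1] [InnerProductSpace ℝ W1] [CompleteSpace W1]
    [NormedAddCommGroup W2] [InnerProductSpace ℝ W2] [CompleteSpace W2]
    (V0 : Submodule ℝ W0) (V1 : Submodule ℝ W1)
    (d0 : V0 →ₗ[ℝ] W1) (d1 : V1 →ₗ[ℝ] W2)
    (hV0dense : Dense (V0 : Set W0)) (hV1dense : Dense (V1 : Set W1))
    (hgraph0 : IsClosed {p : W0 × W1 | ∃ τ : V0, (τ : W0) = p.1 ∧ d0 τ = p.2})
    (hgraph1 : IsClosed {p : W1 × W2 | ∃ v : V1, (v : W1) = p.1 ∧ d1 v = p.2})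
    (hsub : ∀ τ : V0, d0 τ ∈ V1)
    (hdd : ∀ τ : V0, d1 ⟨d0 τ, hsub τ⟩ = 0)
    (hBclosed : IsClosed (Set.range (⇑d0)))
    (hd1closed : IsClosed (Set.range (⇑d1)))
    -- the adjoint `d0†`, with its domain `V1* ⊆ W1`
    (V1s : Submodule ℝ W1)
    (hV1s : ∀ w : W1, w ∈ V1s ↔ ∃ Cw : ℝ, ∀ τ : V0, |⟪w, d0 τ⟫| ≤ Cw * ‖(τ : W0)‖)
    (δ : V1s →ₗ[ℝ] W0)
    (hδ : ∀ (w : V1s) (τ : V0), ⟪δ w, (τ : W0)⟫ = ⟪(w : W1), d0 τ⟫)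
    -- the `W1`-orthogonal projection onto the harmonic space `H`
    (PH : W1 → W1)
    (hPHmem : ∀ w : W1, ∃ hm : PH w ∈ V1,
      d1 ⟨PH w, hm⟩ = 0 ∧ ∀ τ : V0, ⟪PH w, d0 τ⟫ = 0)
    (hPHfix : ∀ (q : V1), d1 q = 0 → (∀ τ : V0, ⟪(q : W1), d0 τ⟫ = 0) →
      PH (q : W1) = (q : W1))
    (hPHorth : ∀ (w : W1) (q : V1), d1 q = 0 → (∀ τ : V0, ⟪(q : W1), d0 τ⟫ = 0) →
      ⟪w - PH w, (q : W1)⟫ = 0) :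
    ∃ C : ℝ, 0 < C ∧ ∀ (u : W1) (hu1 : u ∈ V1) (hu2 : u ∈ V1s),
      ‖u‖ ^ 2 ≤ C * (‖d1 ⟨u, hu1⟩‖ ^ 2 + ‖δ ⟨u, hu2⟩‖ ^ 2 + ‖PH u‖ ^ 2) ∧
      C⁻¹ * (‖u‖ ^ 2 + ‖d1 ⟨u, hu1⟩‖ ^ 2 + ‖δ ⟨u, hu2⟩‖ ^ 2) ≤
        ‖d1 ⟨u, hu1⟩‖ ^ 2 + ‖δ ⟨u, hu2⟩‖ ^ 2 + ‖PH u‖ ^ 2 ∧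
      ‖d1 ⟨u, hu1⟩‖ ^ 2 + ‖δ ⟨u, hu2⟩‖ ^ 2 + ‖PH u‖ ^ 2 ≤
        C * (‖u‖ ^ 2 + ‖d1 ⟨u, hu1⟩‖ ^ 2 + ‖δ ⟨u, hu2⟩‖ ^ 2) := by
  obtain ⟨C0, hC0, h0⟩ := closed_graph_open_map V0 d0 hgraph0 hBclosed
  obtain ⟨C1, hC1, h1⟩ := closed_graph_open_map V1 d1 hgraph1 hd1closed
  set K : Submodule ℝ W1 := LinearMap.range d0 with hK
  have hKclosed : IsClosed (K : Set W1) := by rw [hK, LinearMap.coe_range]; exact hBclosed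
  haveI : CompleteSpace K := hKclosed.completeSpace_coe
  set C : ℝ := C0 ^ 2 + C1 ^ 2 + 2 with hCdef
  have hCpos : 0 < C := by positivity
  refine ⟨C, hCpos, ?_⟩
  intro u hu1 hu2
  -- some abbreviations
  set uB : W1 := (Submodule.orthogonalProjectionOnto K u : W1) with huBdef
  have huBmemK : uB ∈ K := (Submodule.orthogonalProjectionOnto K u).2
  obtain ⟨τ0, hτ0⟩ := huBmemK
  set r : W1 := u - uB - PH u with hrdef
  obtain ⟨hPm, hPd, hPperp⟩ := hPHmem u
  have hsubK : u - uB ∈ Kᗮ := Submodule.sub_starProjection_mem_orthogonal (K := K) u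
  -- r is orthogonal to K
  have hrK : ∀ b ∈ K, ⟪r, b⟫ = 0 := by
    intro b hb
    obtain ⟨τ, hτ⟩ := hb
    have e1 : ⟪u - uB, b⟫ = 0 := (Submodule.mem_orthogonal' K _).1 hsubK b ⟨τ, hτ⟩
    have e2 : ⟪PH u, b⟫ = 0 := by rw [← hτ]; exact hPperp τ
    have : r = (u - uB) - PH u := by rw [hrdef]; try abel
    rw [this, inner_sub_left, e1, e2]
    try ring
  -- r is orthogonal to every harmonic element
  have hr_harm : ∀ (q : V1), d1 q = 0 → (∀ τ : V0, ⟪(q : W1), d0 τ⟫ = 0) →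
      ⟪r, (q : W1)⟫ = 0 := by
    intro q hq1 hq2
    have ha : ⟪u - PH u, (q : W1)⟫ = 0 := hPHorth u q hq1 hq2
    have hb : ⟪uB, (q : W1)⟫ = 0 := by
      rw [real_inner_comm, ← hτ0]; exact hq2 τ0
    have : r = (u - PH u) - uB := by rw [hrdef]; try abel
    rw [this, inner_sub_left, ha, hb]
    try ring
  -- PH u is harmonic
  have hr_PH : ⟪r, PH u⟫ = 0 := hr_harm ⟨PH u, hPm⟩ hPd hPperp
  -- estimate on uB
  have huB2 : ‖uB‖ ^ 2 ≤ (C0 * ‖δ ⟨u, hu2⟩‖) * ‖uB‖ := by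
    obtain ⟨τ1, hτ1, hτ1n⟩ := h0 uB ⟨τ0, hτ0⟩
    have e1 : ⟪uB, uB⟫ = ⟪u, uB⟫ := by
      have := (Submodule.mem_orthogonal' K _).1 hsubK uB ⟨τ0, hτ0⟩
      rw [inner_sub_left] at this; linarith
    have e2 : ⟪u, uB⟫ = ⟪δ ⟨u, hu2⟩, (τ1 : W0)⟫ := by
      rw [hδ ⟨u, hu2⟩ τ1, hτ1]
    calc ‖uB‖ ^ 2 = ⟪uB, uB⟫ := (real_inner_self_eq_norm_sq uB).symm
      _ = ⟪δ ⟨u, hu2⟩, (τ1 : W0)⟫ := by rw [e1, e2]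
      _ ≤ ‖δ ⟨u, hu2⟩‖ * ‖(τ1 : W0)‖ := real_inner_le_norm _ _
      _ ≤ ‖δ ⟨u, hu2⟩‖ * (C0 * ‖uB‖) := by
          exact mul_le_mul_of_nonneg_left hτ1n (norm_nonneg _)
      _ = (C0 * ‖δ ⟨u, hu2⟩‖) * ‖uB‖ := by ring
  have huBle : ‖uB‖ ≤ C0 * ‖δ ⟨u, hu2⟩‖ := by
    rcases eq_or_lt_of_le (norm_nonneg uB) with h | h
    · rw [← h]; positivity
    · exact le_of_mul_le_mul_right (by linarith [huB2]) h
  -- estimate on r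
  obtain ⟨v, hv, hvn⟩ := h1 (d1 ⟨u, hu1⟩) ⟨⟨u, hu1⟩, rfl⟩
  set z : V1 := ⟨u, hu1⟩ - v with hzdef
  have hdz : d1 z = 0 := by rw [hzdef, map_sub, hv, sub_self]
  obtain ⟨τz, hτz⟩ := (Submodule.orthogonalProjectionOnto K (z : W1)).2
  set zB : W1 := (Submodule.orthogonalProjectionOnto K (z : W1) : W1) with hzBdef
  have hzBV1 : zB ∈ V1 := hτz ▸ hsub τz
  have hq'mem : (z : W1) - zB ∈ V1 := V1.sub_mem z.2 hzBV1
  set q' : V1 := ⟨(z : W1) - zB, hq'mem⟩ with hq'def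
  have hdq' : d1 q' = 0 := by
    have hzB0 : d1 ⟨zB, hzBV1⟩ = 0 := by
      have : (⟨zB, hzBV1⟩ : V1) = ⟨d0 τz, hsub τz⟩ := Subtype.ext hτz.symm
      rw [this]; exact hdd τz
    have : q' = z - ⟨zB, hzBV1⟩ := Subtype.ext rfl
    rw [this, map_sub, hdz, hzB0, sub_self]
  have hq'perp : ∀ τ : V0, ⟪(q' : W1), d0 τ⟫ = 0 := by
    intro τ
    have hm := Submodule.sub_starProjection_mem_orthogonal (K := K) (z : W1)
    exact (Submodule.mem_orthogonal' K _).1 hm (d0 τ) ⟨τ, rfl⟩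
  have hrz : ⟪r, (z : W1)⟫ = 0 := by
    have hsplitz : (z : W1) = zB + (q' : W1) := by
      rw [hq'def]; simp
    have e1 : ⟪r, zB⟫ = 0 := hrK zB ⟨τz, hτz⟩
    have e2 : ⟪r, (q' : W1)⟫ = 0 := hr_harm q' hdq' hq'perp
    rw [hsplitz, inner_add_right, e1, e2]
    try ring
  have hr2 : ‖r‖ ^ 2 ≤ (C1 * ‖d1 ⟨u, hu1⟩‖) * ‖r‖ := by
    have e0 : ⟪r, r⟫ = ⟪r, u⟫ := by
      rw [hrdef]
      rw [inner_sub_right, inner_sub_right]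
      have e1 : ⟪u - uB - PH u, uB⟫ = 0 := hrK uB ⟨τ0, hτ0⟩
      have e2 : ⟪u - uB - PH u, PH u⟫ = 0 := hr_PH
      rw [← hrdef] at *
      linarith [e1, e2]
    have e3 : (z : W1) = u - (v : W1) := by rw [hzdef]; rfl
    have e4 : ⟪r, u⟫ = ⟪r, (v : W1)⟫ := by
      have : ⟪r, u - (v : W1)⟫ = 0 := by rw [← e3]; exact hrz
      rw [inner_sub_right] at this; linarith
    calc ‖r‖ ^ 2 = ⟪r, r⟫ := (real_inner_self_eq_norm_sq r).symm
      _ = ⟪r, (v : W1)⟫ := by rw [e0, e4]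
      _ ≤ ‖r‖ * ‖(v : W1)‖ := real_inner_le_norm _ _
      _ ≤ ‖r‖ * (C1 * ‖d1 ⟨u, hu1⟩‖) := mul_le_mul_of_nonneg_left hvn (norm_nonneg _)
      _ = (C1 * ‖d1 ⟨u, hu1⟩‖) * ‖r‖ := by ring
  have hrle : ‖r‖ ≤ C1 * ‖d1 ⟨u, hu1⟩‖ := by
    rcases eq_or_lt_of_le (norm_nonneg r) with h | h
    · rw [← h]; positivity
    · exact le_of_mul_le_mul_right (by linarith [hr2]) h
  -- Pythagoras
  have huBr : ⟪uB, r⟫ = 0 := by rw [real_inner_comm]; exact hrK uB ⟨τ0, hτ0⟩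
  have huBPH : ⟪uB, PH u⟫ = 0 := by
    rw [real_inner_comm, ← hτ0]; exact hPperp τ0
  have hsplit : u = uB + r + PH u := by rw [hrdef]; try abel
  have hpyth : ‖u‖ ^ 2 = ‖uB‖ ^ 2 + ‖r‖ ^ 2 + ‖PH u‖ ^ 2 := by
    have e1 : ‖uB + r‖ ^ 2 = ‖uB‖ ^ 2 + ‖r‖ ^ 2 := by
      rw [norm_add_sq_real, huBr]; ring
    have e2 : ⟪uB + r, PH u⟫ = 0 := by
      rw [inner_add_left, huBPH, hr_PH]
      try ring
    calc ‖u‖ ^ 2 = ‖uB + r + PH u‖ ^ 2 := by rw [← hsplit]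
      _ = ‖uB + r‖ ^ 2 + 2 * ⟪uB + r, PH u⟫ + ‖PH u‖ ^ 2 := norm_add_sq_real _ _
      _ = ‖uB‖ ^ 2 + ‖r‖ ^ 2 + ‖PH u‖ ^ 2 := by rw [e1, e2]; ring
  -- conclude
  set a : ℝ := ‖d1 ⟨u, hu1⟩‖ with ha
  set b : ℝ := ‖δ ⟨u, hu2⟩‖ with hb
  set p : ℝ := ‖PH u‖ with hp
  have huB2' : ‖uB‖ ^ 2 ≤ (C0 * b) ^ 2 := by
    have := pow_le_pow_left₀ (norm_nonneg uB) huBle 2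
    exact this
  have hr2' : ‖r‖ ^ 2 ≤ (C1 * a) ^ 2 := pow_le_pow_left₀ (norm_nonneg r) hrle 2
  have hupper : ‖u‖ ^ 2 ≤ C0 ^ 2 * b ^ 2 + C1 ^ 2 * a ^ 2 + p ^ 2 := by
    rw [hpyth]; nlinarith [huB2', hr2']
  have hplow : p ^ 2 ≤ ‖u‖ ^ 2 := by
    rw [hpyth]; nlinarith [sq_nonneg ‖uB‖, sq_nonneg ‖r‖]
  refine ⟨?_, ?_, ?_⟩
  · nlinarith [hupper, sq_nonneg a, sq_nonneg b, sq_nonneg p, sq_nonneg C0, sq_nonneg C1]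
  · rw [inv_mul_le_iff₀ hCpos]
    nlinarith [hupper, sq_nonneg a, sq_nonneg b, sq_nonneg p, sq_nonneg C0, sq_nonneg C1]
  · nlinarith [hplow, sq_nonneg a, sq_nonneg b, sq_nonneg ‖u‖, sq_nonneg C0, sq_nonneg C1]
end

section
/- Consider a closed Hilbert complex segment (W0, W1, W2, d0, d1, V0, V1) with harmonic space H, graph norms ‖·‖_{V0}, ‖·‖_{V1}, and W1-orthogonal projection P_B onto B = d0(V0). Let F : V1 → W1 be monotone and V-Lipschitz with constant C_F. Let V0h ⊆ V0 and V1h ⊆ V1 be finite-dimensional subspaces with d0(V0h) ⊆ V1h, and let π0 : V0 → V0h, π1 : V1 → V1h be linear maps that are bounded with respect to the V-norms, restrict to the identity on V0h resp. V1h, and satisfy π1(d0 τ) = d0(π0 τ) for all τ ∈ V0. Let H_h = {v ∈ V1h : d1 v = 0 and ⟨v, d0 τ⟩ = 0 for all τ ∈ V0h}. Suppose (σ, u, p) ∈ V0 × V1 × H solves the mixed semilinear problem with datum f ∈ W1, and (σ_h, u_h, p_h) ∈ V0h × V1h × H_h solves the discrete mixed semilinear problem with the same f. Then ‖σ − σ_h‖_{V0}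 + ‖u − u_h‖_{V1} + ‖p − p_h‖ ≤ C ( inf_{τ ∈ V0h} ‖σ − τ‖_{V0} + inf_{v ∈ V1h} ‖u − v‖_{V1} + inf_{q ∈ V1h} ‖p − q‖_{V1} + μ · inf_{v ∈ V1h} ‖P_B u − v‖_{V1} ), where μ = sup { ‖r − π1 r‖ : r ∈ H, ‖r‖ = 1 } and C depends only on the Poincaré constant of the complex, the V-operator norms of π0 and π1, and C_F. -/
open scoped RealInnerProductSpace

section

variable {W0 W1 W2 : Type*}
  [NormedAddCommGroup W0] [InnerProductSpace ℝ W0] [CompleteSpace W0]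
  [NormedAddCommGroup W1] [InnerProductSpace ℝ W1] [CompleteSpace W1]
  [NormedAddCommGroup W2] [InnerProductSpace ℝ W2] [CompleteSpace W2]

/-- Membership in the harmonic space `H = {w ∈ V1 : d1 w = 0, w ⟂ d0(V0)}`. -/
def IsHarmonic (V0 : Submodule ℝ W0) {V1 : Submodule ℝ W1}
    (d0 : V0 →ₗ[ℝ] W1) (d1 : V1 →ₗ[ℝ] W2) (q : V1) : Prop :=
  d1 q = 0 ∧ ∀ τ : V0, ⟪(q : W1), d0 τ⟫ = 0

/-- The graph (V-)norm `‖τ‖_{V0} = (‖τ‖² + ‖d0 τ‖²)^{1/2}` on the domain of `d0`. -/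
noncomputable def graphNorm0 {V0 : Submodule ℝ W0} (d0 : V0 →ₗ[ℝ] W1) (τ : V0) : ℝ :=
  Real.sqrt (‖(τ : W0)‖ ^ 2 + ‖d0 τ‖ ^ 2)

/-- The graph (V-)norm `‖v‖_{V1} = (‖v‖² + ‖d1 v‖²)^{1/2}` on the domain of `d1`. -/
noncomputable def graphNorm1 {V1 : Submodule ℝ W1} (d1 : V1 →ₗ[ℝ] W2) (v : V1) : ℝ :=
  Real.sqrt (‖(v : W1)‖ ^ 2 + ‖d1 v‖ ^ 2)

/-- `(σ, u, p)` solves the mixed semilinear problem with nonlinearity `F` and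
datum `f`. -/
def IsMixedSemilinearSolution (V0 : Submodule ℝ W0) {V1 : Submodule ℝ W1}
    (d0 : V0 →ₗ[ℝ] W1) (d1 : V1 →ₗ[ℝ] W2) (F : V1 → W1) (f : W1)
    (σ : V0) (u p : V1) : Prop :=
  IsHarmonic V0 d0 d1 p ∧
  (∀ τ : V0, ⟪(σ : W0), (τ : W0)⟫ - ⟪(u : W1), d0 τ⟫ = 0) ∧
  (∀ v : V1, ⟪d0 σ, (v : W1)⟫ + ⟪d1 u, d1 v⟫ + ⟪(p : W1), (v : W1)⟫ +
      ⟪F (u + p), (v : W1)⟫ = ⟪f, (v : W1)⟫) ∧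
  (∀ q : V1, IsHarmonic V0 d0 d1 q → ⟪(u : W1), (q : W1)⟫ = 0)

/-- Membership in the discrete harmonic space
`H_h = {v ∈ V1h : d1 v = 0, v ⟂ d0(V0h)}`. -/
def IsDiscreteHarmonic {V0 : Submodule ℝ W0} {V1 : Submodule ℝ W1}
    (V0h : Submodule ℝ V0) (V1h : Submodule ℝ V1)
    (d0 : V0 →ₗ[ℝ] W1) (d1 : V1 →ₗ[ℝ] W2) (q : V1) : Prop :=
  q ∈ V1h ∧ d1 q = 0 ∧ ∀ τ : V0, τ ∈ V0h → ⟪(q : W1), d0 τ⟫ = 0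

/-- `(σ_h, u_h, p_h)` solves the discrete mixed semilinear problem on the
subcomplex `(V0h, V1h)` with nonlinearity `F` and datum `f`. -/
def IsDiscreteMixedSemilinearSolution {V0 : Submodule ℝ W0} {V1 : Submodule ℝ W1}
    (V0h : Submodule ℝ V0) (V1h : Submodule ℝ V1)
    (d0 : V0 →ₗ[ℝ] W1) (d1 : V1 →ₗ[ℝ] W2) (F : V1 → W1) (f : W1)
    (σh : V0) (uh ph : V1) : Prop :=
  σh ∈ V0h ∧ uh ∈ V1h ∧
  IsDiscreteHarmonic V0h V1h d0 d1 ph ∧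
  (∀ τ : V0, τ ∈ V0h → ⟪(σh : W0), (τ : W0)⟫ - ⟪(uh : W1), d0 τ⟫ = 0) ∧
  (∀ v : V1, v ∈ V1h → ⟪d0 σh, (v : W1)⟫ + ⟪d1 uh, d1 v⟫ + ⟪(ph : W1), (v : W1)⟫ +
      ⟪F (uh + ph), (v : W1)⟫ = ⟪f, (v : W1)⟫) ∧
  (∀ q : V1, IsDiscreteHarmonic V0h V1h d0 d1 q → ⟪(uh : W1), (q : W1)⟫ = 0)


private lemma l2_triangle (x1 y1 x2 y2 : ℝ) (hx1 : 0 ≤ x1) (hy1 : 0 ≤ y1)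
    (hx2 : 0 ≤ x2) (hy2 : 0 ≤ y2) :
    Real.sqrt ((x1+x2)^2 + (y1+y2)^2) ≤ Real.sqrt (x1^2+y1^2) + Real.sqrt (x2^2+y2^2) := by
  set s1 := Real.sqrt (x1^2+y1^2) with hs1
  set s2 := Real.sqrt (x2^2+y2^2) with hs2
  have h1 : s1^2 = x1^2+y1^2 := Real.sq_sqrt (by positivity)
  have h2 : s2^2 = x2^2+y2^2 := Real.sq_sqrt (by positivity)
  have hs1n : 0 ≤ s1 := Real.sqrt_nonneg _
  have hs2n : 0 ≤ s2 := Real.sqrt_nonneg _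
  have hcross : x1*x2 + y1*y2 ≤ s1*s2 := by
    have h3 : s1*s2 = Real.sqrt ((x1^2+y1^2)*(x2^2+y2^2)) := (Real.sqrt_mul (by positivity) _).symm
    have h4 : x1*x2+y1*y2 = Real.sqrt ((x1*x2+y1*y2)^2) := (Real.sqrt_sq (by positivity)).symm
    rw [h3, h4]
    apply Real.sqrt_le_sqrt
    nlinarith [sq_nonneg (x1*y2 - x2*y1)]
  rw [Real.sqrt_le_left (by positivity)]
  nlinarith

private lemma le_of_sq_le_mul {a b : ℝ} (ha : 0 ≤ a) (hb : 0 ≤ b) (h : a^2 ≤ b*a) : a ≤ b := by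
  by_contra h'
  push_neg at h'
  nlinarith

set_option synthInstance.maxHeartbeats 1000000 in
private lemma fd_norm_bound {E F : Type*} [NormedAddCommGroup E] [NormedSpace ℝ E]
    [NormedAddCommGroup F] [NormedSpace ℝ F]
    (K : Submodule ℝ E) [FiniteDimensional ℝ K] (g : E →ₗ[ℝ] F)
    (hinj : ∀ x ∈ K, g x = 0 → x = 0) :
    ∃ c : ℝ, 0 ≤ c ∧ ∀ x ∈ K, ‖x‖ ≤ c * ‖g x‖ := by
  set gK := g.comp K.subtype with hgK
  have hI : Function.Injective gK := by
    rw [← LinearMap.ker_eq_bot, LinearMap.ker_eq_bot']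
    intro m hm
    have := hinj (m : E) m.2 (by simpa [hgK] using hm)
    exact Subtype.ext (by simpa using this)
  let e := LinearEquiv.ofInjective gK hI
  haveI : FiniteDimensional ℝ (LinearMap.range gK) := inferInstance
  let f : (LinearMap.range gK) →L[ℝ] K := (e.symm.toLinearMap).toContinuousLinearMap
  refine ⟨‖f‖, f.opNorm_nonneg, fun x hx => ?_⟩
  have h1 : (⟨x, hx⟩ : K) = e.symm (e ⟨x, hx⟩) := (e.symm_apply_apply _).symm
  have h2 : ‖x‖ = ‖e.symm (e ⟨x, hx⟩)‖ := by
    rw [← h1]; exact (Submodule.coe_norm (⟨x, hx⟩ : K)).symm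
  have h3 : ‖e.symm (e ⟨x, hx⟩)‖ = ‖f (e ⟨x, hx⟩)‖ := rfl
  have h4 : ‖f (e ⟨x, hx⟩)‖ ≤ ‖f‖ * ‖e ⟨x, hx⟩‖ := f.le_opNorm _
  have h5 : ‖e ⟨x, hx⟩‖ = ‖g x‖ := by
    have : ((e ⟨x, hx⟩ : LinearMap.range gK) : F) = gK ⟨x, hx⟩ := by
      simp [e, LinearEquiv.ofInjective_apply]
    rw [Submodule.coe_norm, this]
    rfl
  rw [h2, h3]
  rw [h5] at h4
  exact h4

private lemma fd_proj {E : Type*} [NormedAddCommGroup E] [InnerProductSpace ℝ E]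
    (K : Submodule ℝ E) [FiniteDimensional ℝ K] (x : E) :
    ∃ y, y ∈ K ∧ ∀ z ∈ K, ⟪x - y, z⟫ = 0 := by
  refine ⟨K.orthogonalProjectionOnto x, (K.orthogonalProjectionOnto x).2, fun z hz => ?_⟩
  have h := Submodule.sub_starProjection_mem_orthogonal (K := K) x
  have := (Submodule.mem_orthogonal K _).1 h z hz
  rw [real_inner_comm]
  exact this

section GraphNormLemmas

variable {W0 W1 W2 : Type*}
  [NormedAddCommGroup W0] [InnerProductSpace ℝ W0]
  [NormedAddCommGroup W1] [InnerProductSpace ℝ W1]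
  [NormedAddCommGroup W2] [InnerProductSpace ℝ W2]
  {V0 : Submodule ℝ W0} {V1 : Submodule ℝ W1}

private lemma gn1_nonneg (d1 : V1 →ₗ[ℝ] W2) (v : V1) : 0 ≤ graphNorm1 d1 v :=
  Real.sqrt_nonneg _

private lemma norm_le_gn1 (d1 : V1 →ₗ[ℝ] W2) (v : V1) : ‖(v : W1)‖ ≤ graphNorm1 d1 v := by
  have h1 : ‖(v : W1)‖ = Real.sqrt (‖(v : W1)‖^2) := (Real.sqrt_sq (norm_nonneg _)).symm
  rw [graphNorm1]
  nth_rewrite 1 [h1]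
  exact Real.sqrt_le_sqrt (le_add_of_nonneg_right (sq_nonneg _))

private lemma d_le_gn1 (d1 : V1 →ₗ[ℝ] W2) (v : V1) : ‖d1 v‖ ≤ graphNorm1 d1 v := by
  have h1 : ‖d1 v‖ = Real.sqrt (‖d1 v‖^2) := (Real.sqrt_sq (norm_nonneg _)).symm
  rw [graphNorm1]
  nth_rewrite 1 [h1]
  exact Real.sqrt_le_sqrt (le_add_of_nonneg_left (sq_nonneg _))

private lemma gn1_le_add (d1 : V1 →ₗ[ℝ] W2) (v : V1) :
    graphNorm1 d1 v ≤ ‖(v : W1)‖ + ‖d1 v‖ := by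
  rw [graphNorm1, Real.sqrt_le_left (by positivity)]
  nlinarith [norm_nonneg (v : W1), norm_nonneg (d1 v)]

private lemma gn1_add_le (d1 : V1 →ₗ[ℝ] W2) (v w : V1) :
    graphNorm1 d1 (v + w) ≤ graphNorm1 d1 v + graphNorm1 d1 w := by
  rw [graphNorm1, graphNorm1, graphNorm1]
  refine le_trans ?_ (l2_triangle ‖(v : W1)‖ ‖d1 v‖ ‖(w : W1)‖ ‖d1 w‖
    (norm_nonneg _) (norm_nonneg _) (norm_nonneg _) (norm_nonneg _))
  apply Real.sqrt_le_sqrt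
  have h1 : ‖((v + w : V1) : W1)‖ ≤ ‖(v : W1)‖ + ‖(w : W1)‖ := by
    push_cast; exact norm_add_le _ _
  have h2 : ‖d1 (v + w)‖ ≤ ‖d1 v‖ + ‖d1 w‖ := by
    rw [map_add]; exact norm_add_le _ _
  nlinarith [norm_nonneg ((v + w : V1) : W1), norm_nonneg (d1 (v + w))]

private lemma gn1_neg (d1 : V1 →ₗ[ℝ] W2) (v : V1) :
    graphNorm1 d1 (-v) = graphNorm1 d1 v := by
  rw [graphNorm1, graphNorm1, map_neg]
  push_cast
  rw [norm_neg, norm_neg]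

private lemma gn1_sub_le (d1 : V1 →ₗ[ℝ] W2) (v w : V1) :
    graphNorm1 d1 (v - w) ≤ graphNorm1 d1 v + graphNorm1 d1 w := by
  rw [sub_eq_add_neg]
  refine le_trans (gn1_add_le d1 v (-w)) ?_
  rw [gn1_neg]

private lemma gn0_nonneg (d0 : V0 →ₗ[ℝ] W1) (v : V0) : 0 ≤ graphNorm0 d0 v :=
  Real.sqrt_nonneg _

private lemma norm_le_gn0 (d0 : V0 →ₗ[ℝ] W1) (v : V0) : ‖(v : W0)‖ ≤ graphNorm0 d0 v := by
  have h1 : ‖(v : W0)‖ = Real.sqrt (‖(v : W0)‖^2) := (Real.sqrt_sq (norm_nonneg _)).symm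
  rw [graphNorm0]
  nth_rewrite 1 [h1]
  exact Real.sqrt_le_sqrt (le_add_of_nonneg_right (sq_nonneg _))

private lemma d_le_gn0 (d0 : V0 →ₗ[ℝ] W1) (v : V0) : ‖d0 v‖ ≤ graphNorm0 d0 v := by
  have h1 : ‖d0 v‖ = Real.sqrt (‖d0 v‖^2) := (Real.sqrt_sq (norm_nonneg _)).symm
  rw [graphNorm0]
  nth_rewrite 1 [h1]
  exact Real.sqrt_le_sqrt (le_add_of_nonneg_left (sq_nonneg _))

private lemma gn0_le_add (d0 : V0 →ₗ[ℝ] W1) (v : V0) :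
    graphNorm0 d0 v ≤ ‖(v : W0)‖ + ‖d0 v‖ := by
  rw [graphNorm0, Real.sqrt_le_left (by positivity)]
  nlinarith [norm_nonneg (v : W0), norm_nonneg (d0 v)]

private lemma gn0_add_le (d0 : V0 →ₗ[ℝ] W1) (v w : V0) :
    graphNorm0 d0 (v + w) ≤ graphNorm0 d0 v + graphNorm0 d0 w := by
  rw [graphNorm0, graphNorm0, graphNorm0]
  refine le_trans ?_ (l2_triangle ‖(v : W0)‖ ‖d0 v‖ ‖(w : W0)‖ ‖d0 w‖
    (norm_nonneg _) (norm_nonneg _) (norm_nonneg _) (norm_nonneg _))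
  apply Real.sqrt_le_sqrt
  have h1 : ‖((v + w : V0) : W0)‖ ≤ ‖(v : W0)‖ + ‖(w : W0)‖ := by
    push_cast; exact norm_add_le _ _
  have h2 : ‖d0 (v + w)‖ ≤ ‖d0 v‖ + ‖d0 w‖ := by
    rw [map_add]; exact norm_add_le _ _
  nlinarith [norm_nonneg ((v + w : V0) : W0), norm_nonneg (d0 (v + w))]

private lemma gn0_neg (d0 : V0 →ₗ[ℝ] W1) (v : V0) :
    graphNorm0 d0 (-v) = graphNorm0 d0 v := by
  rw [graphNorm0, graphNorm0, map_neg]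
  push_cast
  rw [norm_neg, norm_neg]

private lemma gn0_sub_le (d0 : V0 →ₗ[ℝ] W1) (v w : V0) :
    graphNorm0 d0 (v - w) ≤ graphNorm0 d0 v + graphNorm0 d0 w := by
  rw [sub_eq_add_neg]
  refine le_trans (gn0_add_le d0 v (-w)) ?_
  rw [gn0_neg]

end GraphNormLemmas

set_option maxHeartbeats 4000000 in
set_option synthInstance.maxHeartbeats 1000000 in
/-- **Quasi-optimal error estimate for the discrete mixed semilinear problem**
(Theorem 4.2 of the paper): on a closed Hilbert complex segment with monotone,
`V`-Lipschitz nonlinearity `F`, the Galerkin solution on a finite-dimensional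
subcomplex admitting `V`-bounded cochain projections satisfies the same
quasi-optimal error bound as in the linear case. -/
theorem semilinear_subcomplex_error_estimate
    (V0 : Submodule ℝ W0) (V1 : Submodule ℝ W1)
    (d0 : V0 →ₗ[ℝ] W1) (d1 : V1 →ₗ[ℝ] W2)
    (hV0dense : Dense (V0 : Set W0)) (hV1dense : Dense (V1 : Set W1))
    (hgraph0 : IsClosed {p : W0 × W1 | ∃ τ : V0, (τ : W0) = p.1 ∧ d0 τ = p.2})
    (hgraph1 : IsClosed {p : W1 × W2 | ∃ v : V1, (v : W1) = p.1 ∧ d1 v = p.2})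
    (hsub : ∀ τ : V0, d0 τ ∈ V1)
    (hdd : ∀ τ : V0, d1 ⟨d0 τ, hsub τ⟩ = 0)
    (hBclosed : IsClosed (Set.range (⇑d0)))
    (hd1closed : IsClosed (Set.range (⇑d1)))
    -- the nonlinearity
    (F : V1 → W1) (CF : ℝ)
    (hFmono : ∀ v v' : V1, 0 ≤ ⟪F v - F v', (v : W1) - (v' : W1)⟫)
    (hFlip : ∀ v v' : V1, ‖F v - F v'‖ ≤ CF * graphNorm1 d1 (v - v'))
    -- the finite-dimensional subcomplex
    (V0h : Submodule ℝ V0) (V1h : Submodule ℝ V1)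
    (hfin0 : FiniteDimensional ℝ V0h) (hfin1 : FiniteDimensional ℝ V1h)
    (hd0h : ∀ τ : V0, τ ∈ V0h → (⟨d0 τ, hsub τ⟩ : V1) ∈ V1h)
    -- the bounded cochain projections
    (π0 : V0 →ₗ[ℝ] V0) (π1 : V1 →ₗ[ℝ] V1) (Cπ : ℝ)
    (hπ0mem : ∀ τ : V0, π0 τ ∈ V0h) (hπ1mem : ∀ v : V1, π1 v ∈ V1h)
    (hπ0id : ∀ τ : V0, τ ∈ V0h → π0 τ = τ) (hπ1id : ∀ v : V1, v ∈ V1h → π1 v = v)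
    (hπ0bdd : ∀ τ : V0, graphNorm0 d0 (π0 τ) ≤ Cπ * graphNorm0 d0 τ)
    (hπ1bdd : ∀ v : V1, graphNorm1 d1 (π1 v) ≤ Cπ * graphNorm1 d1 v)
    (hπcomm : ∀ τ : V0, π1 ⟨d0 τ, hsub τ⟩ = ⟨d0 (π0 τ), hsub (π0 τ)⟩)
    -- the `W1`-orthogonal projection onto `B = d0(V0)`
    (PB : W1 → V1)
    (hPBrange : ∀ w : W1, ∃ τ : V0, d0 τ = ((PB w : V1) : W1))
    (hPBorth : ∀ (w : W1) (τ : V0), ⟪w - (PB w : W1), d0 τ⟫ = 0) :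
    ∃ C : ℝ, 0 < C ∧ ∀ (f : W1) (σ σh : V0) (u p uh ph : V1),
      IsMixedSemilinearSolution V0 d0 d1 F f σ u p →
      IsDiscreteMixedSemilinearSolution V0h V1h d0 d1 F f σh uh ph →
      graphNorm0 d0 (σ - σh) + graphNorm1 d1 (u - uh) + ‖((p - ph : V1) : W1)‖ ≤
        C * ((⨅ τ : V0h, graphNorm0 d0 (σ - τ)) +
             (⨅ v : V1h, graphNorm1 d1 (u - v)) +
             (⨅ q : V1h, graphNorm1 d1 (p - q)) +
             sSup {t : ℝ | ∃ r : V1, IsHarmonic V0 d0 d1 r ∧ ‖(r : W1)‖ = 1 ∧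
                 t = ‖(r : W1) - ((π1 r : V1) : W1)‖} *
               (⨅ v : V1h, graphNorm1 d1 (PB (u : W1) - v))) := by
  classical
  haveI := hfin0
  haveI := hfin1
  -- the differential `d0` as a map into `V1`
  let D0 : V0 →ₗ[ℝ] V1 :=
    { toFun := fun τ => ⟨d0 τ, hsub τ⟩
      map_add' := fun a b => by ext; simp
      map_smul' := fun c a => by ext; simp }
  have hD0coe : ∀ τ : V0, ((D0 τ : V1) : W1) = d0 τ := fun τ => rfl
  let Bh : Submodule ℝ V1 := V0h.map D0
  let Zh : Submodule ℝ V1 := V1h ⊓ LinearMap.ker d1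
  let K0h : Submodule ℝ V0 := V0h ⊓ LinearMap.ker d0
  haveI : FiniteDimensional ℝ Zh := Submodule.finiteDimensional_of_le inf_le_left
  haveI : FiniteDimensional ℝ K0h := Submodule.finiteDimensional_of_le inf_le_left
  haveI : FiniteDimensional ℝ Bh := inferInstance
  have hBhV1h : Bh ≤ V1h := by
    rintro x ⟨τ, hτ, rfl⟩; exact hd0h τ hτ
  have hBhZh : Bh ≤ Zh := by
    rintro x ⟨τ, hτ, rfl⟩
    exact Submodule.mem_inf.2 ⟨hd0h τ hτ, LinearMap.mem_ker.2 (hdd τ)⟩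
  have hZhV1h : Zh ≤ V1h := inf_le_left
  have iV : ∀ x y : V1, (⟪x, y⟫ : ℝ) = ⟪(x : W1), (y : W1)⟫ := fun x y =>
    Submodule.coe_inner _ _ _
  haveI : FiniteDimensional ℝ (V1h ⊓ Zhᗮ : Submodule ℝ V1) :=
    Submodule.finiteDimensional_of_le inf_le_left
  haveI : FiniteDimensional ℝ (V0h ⊓ K0hᗮ : Submodule ℝ V0) :=
    Submodule.finiteDimensional_of_le inf_le_left
  -- discrete Poincaré inequalities
  obtain ⟨c1, hc1n, hc1⟩ := fd_norm_bound (V1h ⊓ Zhᗮ) d1 (by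
    intro x hx hdx
    rcases Submodule.mem_inf.1 hx with ⟨hx1, hx2⟩
    have hxZ : x ∈ Zh := Submodule.mem_inf.2 ⟨hx1, LinearMap.mem_ker.2 hdx⟩
    have := (Submodule.mem_orthogonal' Zh x).1 hx2 x hxZ
    exact inner_self_eq_zero.1 this)
  obtain ⟨c0, hc0n, hc0⟩ := fd_norm_bound (V0h ⊓ K0hᗮ) d0 (by
    intro x hx hdx
    rcases Submodule.mem_inf.1 hx with ⟨hx1, hx2⟩
    have hxZ : x ∈ K0h := Submodule.mem_inf.2 ⟨hx1, LinearMap.mem_ker.2 hdx⟩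
    have := (Submodule.mem_orthogonal' K0h x).1 hx2 x hxZ
    exact inner_self_eq_zero.1 this)
  -- the harmonic-gap constant μ
  set Sμ : Set ℝ := {t : ℝ | ∃ r : V1, IsHarmonic V0 d0 d1 r ∧ ‖(r : W1)‖ = 1 ∧
      t = ‖(r : W1) - ((π1 r : V1) : W1)‖} with hSμdef
  set μ : ℝ := sSup Sμ with hμdef
  set cπ : ℝ := max Cπ 0 with hcπdef
  have hcπn : 0 ≤ cπ := le_max_right _ _
  have hπ1n : ∀ v : V1, ‖((π1 v : V1) : W1)‖ ≤ cπ * graphNorm1 d1 v := by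
    intro v
    have h1 : ‖((π1 v : V1) : W1)‖ ≤ graphNorm1 d1 (π1 v) := norm_le_gn1 _ _
    have h2 := hπ1bdd v
    have h3 : Cπ * graphNorm1 d1 v ≤ cπ * graphNorm1 d1 v :=
      mul_le_mul_of_nonneg_right (le_max_left _ _) (gn1_nonneg _ _)
    linarith
  have hμbdd : BddAbove Sμ := by
    refine ⟨1 + cπ, ?_⟩
    rintro t ⟨r, hr, hrn, rfl⟩
    have h2 : graphNorm1 d1 r = 1 := by
      rw [graphNorm1, hr.1, hrn]; simp
    have h3 := hπ1n r
    rw [h2, mul_one] at h3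
    calc ‖(r : W1) - ((π1 r : V1) : W1)‖ ≤ ‖(r : W1)‖ + ‖((π1 r : V1) : W1)‖ :=
          norm_sub_le _ _
      _ ≤ 1 + cπ := by rw [hrn]; linarith
  have hμn : 0 ≤ μ := Real.sSup_nonneg (by rintro t ⟨r, _, _, rfl⟩; positivity)
  have hμkey : ∀ r : V1, IsHarmonic V0 d0 d1 r →
      ‖(r : W1) - ((π1 r : V1) : W1)‖ ≤ μ * ‖(r : W1)‖ := by
    intro r hr
    rcases eq_or_ne r 0 with h0 | h0
    · simp [h0]
    · have hn : (0:ℝ) < ‖(r : W1)‖ := by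
        rw [norm_pos_iff]
        intro h
        exact h0 (Subtype.ext (by simpa using h))
      set a : ℝ := ‖(r : W1)‖⁻¹ with hadef
      have han : 0 < a := inv_pos.2 hn
      set r' : V1 := a • r with hr'def
      have hr'H : IsHarmonic V0 d0 d1 r' := by
        constructor
        · rw [hr'def, map_smul, hr.1, smul_zero]
        · intro τ
          have : ((r' : V1) : W1) = a • (r : W1) := by rw [hr'def]; rfl
          rw [this, real_inner_smul_left, hr.2 τ, mul_zero]
      have hr'n : ‖((r' : V1) : W1)‖ = 1 := by
        have : ((r' : V1) : W1) = a • (r : W1) := by rw [hr'def]; rfl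
        rw [this, norm_smul, Real.norm_eq_abs, abs_of_pos han, hadef]
        field_simp
      have hmem : ‖((r' : V1) : W1) - ((π1 r' : V1) : W1)‖ ∈ Sμ := ⟨r', hr'H, hr'n, rfl⟩
      have hA := le_csSup hμbdd hmem
      have hscale : (r : W1) - ((π1 r : V1) : W1) =
          ‖(r : W1)‖ • (((r' : V1) : W1) - ((π1 r' : V1) : W1)) := by
        have h1 : π1 r' = a • π1 r := by rw [hr'def, map_smul]
        have h2 : ((r' : V1) : W1) = a • (r : W1) := by rw [hr'def]; rfl
        have h3 : ((π1 r' : V1) : W1) = a • ((π1 r : V1) : W1) := by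
          rw [h1]; rfl
        rw [h2, h3, ← smul_sub, smul_smul, hadef, mul_inv_cancel₀ hn.ne', one_smul]
      rw [hscale, norm_smul, Real.norm_eq_abs, abs_of_pos hn]
      calc ‖(r : W1)‖ * ‖((r' : V1) : W1) - ((π1 r' : V1) : W1)‖ ≤ ‖(r : W1)‖ * μ :=
            mul_le_mul_of_nonneg_left hA hn.le
        _ = μ * ‖(r : W1)‖ := mul_comm _ _
  -- the constants
  set cf : ℝ := max CF 0 with hcfdef
  have hcfn : 0 ≤ cf := le_max_right _ _
  set α : ℝ := c0 + c1 + cπ + 3 with hαdef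
  have hαn : 0 ≤ α := by positivity
  set β : ℝ := cf * (α + 2) with hβdef
  have hβn : 0 ≤ β := by positivity
  set γ : ℝ := β + 1 with hγdef
  have hγn : 0 ≤ γ := by positivity
  set K : ℝ := 6 + 2*α + (1+c1)*α + (2+cπ) + γ*(2+c1) + 2*β with hKdef
  have hKn : 0 ≤ K := by positivity
  set C : ℝ := (4+γ+α)*(6*K+2) + 1 with hCdef
  have hCpos : 0 < C := by positivity
  refine ⟨C, hCpos, ?_⟩
  intro f σ σh u p uh ph hsol hdsol
  obtain ⟨⟨hpd1, hpB⟩, heq1, heq2, heq3⟩ := hsol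
  obtain ⟨hσhm, huhm, ⟨hphm, hphd1, hphB⟩, hdeq1, hdeq2, hdeq3⟩ := hdsol
  have key : ∀ (τ0 : V0h) (v0 q0 y0 : V1h),
      graphNorm0 d0 (σ - σh) + graphNorm1 d1 (u - uh) + ‖((p - ph : V1) : W1)‖ ≤
      C * (graphNorm0 d0 (σ - ↑τ0) + graphNorm1 d1 (u - ↑v0) + graphNorm1 d1 (p - ↑q0)
          + μ * graphNorm1 d1 (PB (u : W1) - ↑y0)) := by
    intro τ0 v0 q0 y0
    set σ'' : V0 := (τ0 : V0) with hσ2def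
    have hσ2m : σ'' ∈ V0h := τ0.2
    set v' : V1 := (v0 : V1) with hv'def
    have hv'm : v' ∈ V1h := v0.2
    set q' : V1 := (q0 : V1) with hq'def
    have hq'm : q' ∈ V1h := q0.2
    set y' : V1 := (y0 : V1) with hy'def
    have hy'm : y' ∈ V1h := y0.2
    set aσ : V0 := σ - σ'' with haσdef
    set s : V0 := σh - σ'' with hsdef
    set au : V1 := u - v' with haudef
    set w : V1 := uh - v' with hwdef
    set ap : V1 := p - q' with hapdef
    set r : V1 := ph - q' with hrdef
    have hsm : s ∈ V0h := sub_mem hσhm hσ2m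
    have hwm : w ∈ V1h := sub_mem huhm hv'm
    have hrm : r ∈ V1h := sub_mem hphm hq'm
    set A : ℝ := graphNorm0 d0 aσ with hAdef
    set U : ℝ := graphNorm1 d1 au with hUdef
    set P2 : ℝ := graphNorm1 d1 ap with hP2def
    set Y : ℝ := graphNorm1 d1 (PB (u : W1) - y') with hYdef
    have hA0 : 0 ≤ A := gn0_nonneg _ _
    have hU0 : 0 ≤ U := gn1_nonneg _ _
    have hP20 : 0 ≤ P2 := gn1_nonneg _ _
    have hY0 : 0 ≤ Y := gn1_nonneg _ _
    have haσn : ‖(aσ : W0)‖ ≤ A := norm_le_gn0 _ _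
    have haσd : ‖d0 aσ‖ ≤ A := d_le_gn0 _ _
    have haun : ‖(au : W1)‖ ≤ U := norm_le_gn1 _ _
    have haud : ‖d1 au‖ ≤ U := d_le_gn1 _ _
    have hapn : ‖(ap : W1)‖ ≤ P2 := norm_le_gn1 _ _
    have hapd : ‖d1 ap‖ ≤ P2 := d_le_gn1 _ _
    set S : ℝ := A + U + P2 + μ * Y with hSdef
    have hμY0 : 0 ≤ μ * Y := mul_nonneg hμn hY0
    have hS0 : 0 ≤ S := by linarith only [hA0, hU0, hP20, hμY0, hSdef]
    have hAS : A ≤ S := by linarith only [hU0, hP20, hμY0, hSdef]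
    have hUS : U ≤ S := by linarith only [hA0, hP20, hμY0, hSdef]
    have hP2S : P2 ≤ S := by linarith only [hA0, hU0, hμY0, hSdef]
    have hμYS : μ * Y ≤ S := by linarith only [hA0, hU0, hP20, hSdef]
    set E : ℝ := ‖(s : W0)‖ + ‖d1 w‖ + ‖(r : W1)‖ with hEdef
    have hE0 : 0 ≤ E := by rw [hEdef]; positivity
    have hsE : ‖(s : W0)‖ ≤ E := by
      linarith only [norm_nonneg (d1 w), norm_nonneg ((r : W1)), hEdef]
    have hdwE : ‖d1 w‖ ≤ E := by
      linarith only [norm_nonneg ((s : W0)), norm_nonneg ((r : W1)), hEdef]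
    have hrE : ‖(r : W1)‖ ≤ E := by
      linarith only [norm_nonneg ((s : W0)), norm_nonneg (d1 w), hEdef]
    have hES0 : 0 ≤ E + S := by linarith only [hE0, hS0]
    -- identities
    have hidσ : σ - σh = aσ - s := by rw [haσdef, hsdef]; abel
    have hidu : u - uh = au - w := by rw [haudef, hwdef]; abel
    have hidp : p - ph = ap - r := by rw [hapdef, hrdef]; abel
    have hrd1 : d1 r = d1 ap := by rw [hrdef, hapdef, map_sub, map_sub, hphd1, hpd1]
    have hrd1n : ‖d1 r‖ ≤ P2 := by rw [hrd1]; exact hapd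
    -- error equations
    have hE1 : ∀ t : V0, t ∈ V0h →
        ⟪(aσ : W0), (t : W0)⟫ - ⟪(s : W0), (t : W0)⟫ =
          ⟪(au : W1), d0 t⟫ - ⟪(w : W1), d0 t⟫ := by
      intro t ht
      have h1 := heq1 t
      have h2 := hdeq1 t ht
      have ha : ⟪(aσ : W0), (t : W0)⟫ - ⟪(s : W0), (t : W0)⟫ =
          ⟪(σ : W0), (t : W0)⟫ - ⟪(σh : W0), (t : W0)⟫ := by
        rw [← inner_sub_left, ← inner_sub_left]
        congr 1
        rw [haσdef, hsdef]; push_cast; abel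
      have hb : ⟪(au : W1), d0 t⟫ - ⟪(w : W1), d0 t⟫ =
          ⟪(u : W1), d0 t⟫ - ⟪(uh : W1), d0 t⟫ := by
        rw [← inner_sub_left, ← inner_sub_left]
        congr 1
        rw [haudef, hwdef]; push_cast; abel
      rw [ha, hb]; linarith only [h1, h2]
    set dF : W1 := F (u + p) - F (uh + ph) with hdFdef
    have hE2 : ∀ v : V1, v ∈ V1h →
        ⟪d0 aσ, (v : W1)⟫ - ⟪d0 s, (v : W1)⟫ + (⟪d1 au, d1 v⟫ - ⟪d1 w, d1 v⟫) +
          (⟪(ap : W1), (v : W1)⟫ - ⟪(r : W1), (v : W1)⟫) + ⟪dF, (v : W1)⟫ = 0 := by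
      intro v hv
      have h1 := heq2 v
      have h2 := hdeq2 v hv
      have ha : ⟪d0 aσ, (v : W1)⟫ - ⟪d0 s, (v : W1)⟫ =
          ⟪d0 σ, (v : W1)⟫ - ⟪d0 σh, (v : W1)⟫ := by
        rw [← inner_sub_left, ← inner_sub_left, ← map_sub, ← map_sub, ← hidσ]
      have hb : ⟪d1 au, d1 v⟫ - ⟪d1 w, d1 v⟫ = ⟪d1 u, d1 v⟫ - ⟪d1 uh, d1 v⟫ := by
        rw [← inner_sub_left, ← inner_sub_left, ← map_sub, ← map_sub, ← hidu]
      have hc : ⟪(ap : W1), (v : W1)⟫ - ⟪(r : W1), (v : W1)⟫ =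
          ⟪(p : W1), (v : W1)⟫ - ⟪(ph : W1), (v : W1)⟫ := by
        rw [← inner_sub_left, ← inner_sub_left]
        congr 1
        rw [hapdef, hrdef]; push_cast; abel
      have hd : ⟪dF, (v : W1)⟫ = ⟪F (u + p), (v : W1)⟫ - ⟪F (uh + ph), (v : W1)⟫ := by
        rw [hdFdef, inner_sub_left]
      linarith only [ha, hb, hc, hd, h1, h2]
    -- the key harmonic-gap lemmas
    have hL0 : ∀ q : V1, q ∈ V1h → d1 q = 0 →
        (∀ t : V0, t ∈ V0h → ⟪(q : W1), d0 t⟫ = 0) →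
        ‖((PB (q : W1) : V1) : W1)‖ ≤ μ * ‖(q : W1)‖ := by
      intro q hqm hqd hqB
      set b : V1 := PB (q : W1) with hbdef
      obtain ⟨τb, hτb⟩ := hPBrange (q : W1)
      have hτb' : d0 τb = (b : W1) := by rw [hbdef]; exact hτb
      have hbD0 : b = D0 τb := Subtype.ext hτb'.symm
      have hbd1 : d1 b = 0 := by rw [hbD0]; exact hdd τb
      set rh : V1 := q - b with hrhdef
      have hrhW : ((rh : V1) : W1) = (q : W1) - (b : W1) := by rw [hrhdef]; push_cast; abel
      have hrhH : IsHarmonic V0 d0 d1 rh := by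
        constructor
        · rw [hrhdef, map_sub, hqd, hbd1, sub_zero]
        · intro τ
          have h := hPBorth (q : W1) τ
          rw [← hbdef] at h
          rw [hrhW]; exact h
      have hbrh : ⟪(b : W1), (rh : W1)⟫ = 0 := by
        have h := hPBorth (q : W1) τb
        rw [← hbdef, hτb'] at h
        rw [hrhW, real_inner_comm]
        exact h
      have hrhn : ‖(rh : W1)‖ ≤ ‖(q : W1)‖ := by
        have hq2 : (q : W1) = (b : W1) + (rh : W1) := by rw [hrhW]; abel
        have h := norm_add_sq_real (b : W1) (rh : W1)
        rw [← hq2, hbrh] at h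
        nlinarith only [h, norm_nonneg ((rh : V1) : W1), norm_nonneg ((q : V1) : W1),
          sq_nonneg (‖(b : W1)‖)]
      have hπb : π1 b = D0 (π0 τb) := by rw [hbD0]; exact hπcomm τb
      have hbπb : ⟪(b : W1), ((π1 b : V1) : W1)⟫ = 0 := by
        have h1 : ⟪(q : W1), ((π1 b : V1) : W1)⟫ = 0 := by
          rw [hπb, hD0coe]; exact hqB (π0 τb) (hπ0mem τb)
        have h2 : ⟪(rh : W1), ((π1 b : V1) : W1)⟫ = 0 := by
          rw [hπb, hD0coe]; exact hrhH.2 (π0 τb)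
        have hsplit : (b : W1) = (q : W1) - (rh : W1) := by rw [hrhW]; abel
        rw [hsplit, inner_sub_left, h1, h2, sub_zero]
      have hq1 : π1 q = q := hπ1id q hqm
      have hdiff : (b : W1) - ((π1 b : V1) : W1) = ((π1 rh : V1) : W1) - (rh : W1) := by
        have hq2 : q = b + rh := by rw [hrhdef]; abel
        have h3 : π1 b + π1 rh = q := by rw [← map_add, ← hq2, hq1]
        have h4 : b - π1 b = π1 rh - rh := by
          have h5 : π1 b = q - π1 rh := by rw [← h3]; abel
          rw [h5, hq2]; abel
        calc (b : W1) - ((π1 b : V1) : W1) = ((b - π1 b : V1) : W1) := by push_cast; abel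
          _ = ((π1 rh - rh : V1) : W1) := by rw [h4]
          _ = ((π1 rh : V1) : W1) - (rh : W1) := by push_cast; abel
      have h5 : ‖(b : W1)‖^2 ≤ (μ * ‖(q : W1)‖) * ‖(b : W1)‖ := by
        have h6 : ‖(b : W1)‖^2 = ⟪(b : W1), ((π1 rh : V1) : W1) - (rh : W1)⟫ := by
          have h7 : ⟪(b : W1), (b : W1) - ((π1 b : V1) : W1)⟫ =
              ⟪(b : W1), (b : W1)⟫ - ⟪(b : W1), ((π1 b : V1) : W1)⟫ := inner_sub_right _ _ _
          rw [hbπb, sub_zero, real_inner_self_eq_norm_sq] at h7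
          rw [← h7, hdiff]
        have h8 : ⟪(b : W1), ((π1 rh : V1) : W1) - (rh : W1)⟫ ≤
            ‖(b : W1)‖ * ‖((π1 rh : V1) : W1) - (rh : W1)‖ := real_inner_le_norm _ _
        have h9 : ‖((π1 rh : V1) : W1) - (rh : W1)‖ = ‖(rh : W1) - ((π1 rh : V1) : W1)‖ :=
          norm_sub_rev _ _
        rw [h9] at h8
        have h10 := hμkey rh hrhH
        have h13 : ‖(b : W1)‖ * ‖(rh : W1) - ((π1 rh : V1) : W1)‖ ≤
            ‖(b : W1)‖ * (μ * ‖(rh : W1)‖) := mul_le_mul_of_nonneg_left h10 (norm_nonneg _)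
        have h11 : μ * ‖(rh : W1)‖ ≤ μ * ‖(q : W1)‖ := mul_le_mul_of_nonneg_left hrhn hμn
        have h12 : ‖(b : W1)‖ * (μ * ‖(rh : W1)‖) ≤ ‖(b : W1)‖ * (μ * ‖(q : W1)‖) :=
          mul_le_mul_of_nonneg_left h11 (norm_nonneg _)
        have hrg : ‖(b : W1)‖ * (μ * ‖(q : W1)‖) = (μ * ‖(q : W1)‖) * ‖(b : W1)‖ :=
          mul_comm _ _
        linarith only [h6, h8, h13, h12, hrg]
      exact le_of_sq_le_mul (norm_nonneg _) (mul_nonneg hμn (norm_nonneg _)) h5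
    have hL1 : ∀ q : V1, q ∈ V1h → d1 q = 0 →
        (∀ t : V0, t ∈ V0h → ⟪(q : W1), d0 t⟫ = 0) →
        |⟪(u : W1), (q : W1)⟫| ≤ (1 + cπ) * (μ * Y) * ‖(q : W1)‖ := by
      intro q hqm hqd hqB
      have hbn := hL0 q hqm hqd hqB
      set b : V1 := PB (q : W1) with hbdef
      obtain ⟨τb, hτb⟩ := hPBrange (q : W1)
      have hτb' : d0 τb = (b : W1) := by rw [hbdef]; exact hτb
      have hbD0 : b = D0 τb := Subtype.ext hτb'.symm
      have hbd1 : d1 b = 0 := by rw [hbD0]; exact hdd τb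
      set rh : V1 := q - b with hrhdef
      have hrhW : ((rh : V1) : W1) = (q : W1) - (b : W1) := by rw [hrhdef]; push_cast; abel
      have hrhH : IsHarmonic V0 d0 d1 rh := by
        constructor
        · rw [hrhdef, map_sub, hqd, hbd1, sub_zero]
        · intro τ
          have h := hPBorth (q : W1) τ
          rw [← hbdef] at h
          rw [hrhW]; exact h
      set bu : V1 := PB (u : W1) with hbudef
      obtain ⟨τu, hτu⟩ := hPBrange (u : W1)
      have hτu' : d0 τu = (bu : W1) := by rw [hbudef]; exact hτu
      have hbuD0 : bu = D0 τu := Subtype.ext hτu'.symm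
      have h1 : ⟪(u : W1), (rh : W1)⟫ = 0 := heq3 rh hrhH
      have h2 : ⟪(u : W1) - (bu : W1), (b : W1)⟫ = 0 := by
        have h := hPBorth (u : W1) τb
        rw [← hbudef, hτb'] at h
        exact h
      have h3 : ⟪(u : W1), (q : W1)⟫ = ⟪(bu : W1), (b : W1)⟫ := by
        have hq2 : (q : W1) = (b : W1) + (rh : W1) := by rw [hrhW]; abel
        rw [hq2, inner_add_right, h1, add_zero]
        rw [inner_sub_left] at h2
        linarith only [h2]
      have hπbu : π1 bu = D0 (π0 τu) := by rw [hbuD0]; exact hπcomm τu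
      have h4 : ⟪((π1 bu : V1) : W1), (b : W1)⟫ = 0 := by
        have hbq : (b : W1) = (q : W1) - (rh : W1) := by rw [hrhW]; abel
        have h5 : ⟪((π1 bu : V1) : W1), (q : W1)⟫ = 0 := by
          rw [real_inner_comm, hπbu, hD0coe]; exact hqB (π0 τu) (hπ0mem τu)
        have h6 : ⟪((π1 bu : V1) : W1), (rh : W1)⟫ = 0 := by
          rw [real_inner_comm, hπbu, hD0coe]; exact hrhH.2 (π0 τu)
        rw [hbq, inner_sub_right, h5, h6, sub_zero]
      have h7 : ⟪(u : W1), (q : W1)⟫ = ⟪(bu : W1) - ((π1 bu : V1) : W1), (b : W1)⟫ := by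
        rw [inner_sub_left, h4, sub_zero, h3]
      have hy1 : π1 y' = y' := hπ1id y' hy'm
      have h8 : (bu : W1) - ((π1 bu : V1) : W1) =
          ((bu - y' : V1) : W1) - ((π1 (bu - y') : V1) : W1) := by
        rw [map_sub, hy1]; push_cast; abel
      have h9 : ‖((bu - y' : V1) : W1)‖ ≤ Y := by
        have h := norm_le_gn1 d1 (bu - y')
        rw [hYdef]
        rw [hbudef] at h
        exact h
      have h10 : ‖((π1 (bu - y') : V1) : W1)‖ ≤ cπ * Y := by
        have h := hπ1n (bu - y')
        rw [hYdef]
        rw [hbudef] at h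
        exact h
      have h11 : ‖(bu : W1) - ((π1 bu : V1) : W1)‖ ≤ (1 + cπ) * Y := by
        rw [h8]
        calc ‖((bu - y' : V1) : W1) - ((π1 (bu - y') : V1) : W1)‖ ≤
            ‖((bu - y' : V1) : W1)‖ + ‖((π1 (bu - y') : V1) : W1)‖ := norm_sub_le _ _
          _ ≤ Y + cπ * Y := add_le_add h9 h10
          _ = (1 + cπ) * Y := by ring
      rw [h7]
      calc |⟪(bu : W1) - ((π1 bu : V1) : W1), (b : W1)⟫| ≤
          ‖(bu : W1) - ((π1 bu : V1) : W1)‖ * ‖(b : W1)‖ := abs_real_inner_le_norm _ _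
        _ ≤ ((1 + cπ) * Y) * (μ * ‖(q : W1)‖) := by
            apply mul_le_mul h11 hbn (norm_nonneg _)
            exact mul_nonneg (by linarith only [hcπn]) hY0
        _ = (1 + cπ) * (μ * Y) * ‖(q : W1)‖ := by ring
    -- discrete Hodge decomposition of w and r
    obtain ⟨wZ, hwZm, hwZo⟩ := fd_proj Zh w
    obtain ⟨wB, hwBm, hwBo⟩ := fd_proj Bh wZ
    set wp : V1 := w - wZ with hwpdef
    set wH : V1 := wZ - wB with hwHdef
    obtain ⟨rZ, hrZm, hrZo⟩ := fd_proj Zh r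
    obtain ⟨rB, hrBm, hrBo⟩ := fd_proj Bh rZ
    set rp : V1 := r - rZ with hrpdef
    set rH : V1 := rZ - rB with hrHdef
    have hwHZh : wH ∈ Zh := sub_mem hwZm (hBhZh hwBm)
    have hrHZh : rH ∈ Zh := sub_mem hrZm (hBhZh hrBm)
    have hwHm : wH ∈ V1h := hZhV1h hwHZh
    have hwHd1 : d1 wH = 0 := LinearMap.mem_ker.1 (Submodule.mem_inf.1 hwHZh).2
    have hwHB : ∀ t : V0, t ∈ V0h → ⟪(wH : W1), d0 t⟫ = 0 := by
      intro t ht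
      have h := hwBo (D0 t) (Submodule.mem_map_of_mem ht)
      rw [iV] at h
      rw [← hD0coe]
      exact h
    have hwHdisc : IsDiscreteHarmonic V0h V1h d0 d1 wH := ⟨hwHm, hwHd1, hwHB⟩
    -- coercion splittings
    have hwsplit : w = wB + wH + wp := by rw [hwHdef, hwpdef]; abel
    have hwsplitW : (w : W1) = (wB : W1) + (wH : W1) + (wp : W1) := by
      rw [hwsplit]; push_cast; abel
    have hrsplit : r = rB + rH + rp := by rw [hrHdef, hrpdef]; abel
    have hrsplitW : (r : W1) = (rB : W1) + (rH : W1) + (rp : W1) := by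
      rw [hrsplit]; push_cast; abel
    -- zero inner products among components
    have zwHwB : ⟪(wH : W1), (wB : W1)⟫ = 0 := by
      have h := hwBo wB hwBm
      rw [iV] at h
      exact h
    have zwpwB : ⟪(wp : W1), (wB : W1)⟫ = 0 := by
      have h := hwZo wB (hBhZh hwBm)
      rw [iV] at h
      exact h
    have zwpwH : ⟪(wp : W1), (wH : W1)⟫ = 0 := by
      have h := hwZo wH hwHZh
      rw [iV] at h
      exact h
    have zrHrB : ⟪(rH : W1), (rB : W1)⟫ = 0 := by
      have h := hrBo rB hrBm
      rw [iV] at h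
      exact h
    have zrprB : ⟪(rp : W1), (rB : W1)⟫ = 0 := by
      have h := hrZo rB (hBhZh hrBm)
      rw [iV] at h
      exact h
    have zrprH : ⟪(rp : W1), (rH : W1)⟫ = 0 := by
      have h := hrZo rH hrHZh
      rw [iV] at h
      exact h
    have zrHwB : ⟪(rH : W1), (wB : W1)⟫ = 0 := by
      have h := hrBo wB hwBm
      rw [iV] at h
      exact h
    have zwprH : ⟪(wp : W1), (rH : W1)⟫ = 0 := by
      have h := hwZo rH hrHZh
      rw [iV] at h
      exact h
    have zrHds : ⟪(rH : W1), d0 s⟫ = 0 := by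
      have h := hrBo (D0 s) (Submodule.mem_map_of_mem hsm)
      rw [iV] at h
      rw [← hD0coe]
      exact h
    -- the harmonic component of w
    have hwH2 : ⟪(w : W1), (wH : W1)⟫ = ‖(wH : W1)‖^2 := by
      have z1 : ⟪(wB : W1), (wH : W1)⟫ = 0 := by rw [real_inner_comm]; exact zwHwB
      rw [hwsplitW, inner_add_left, inner_add_left, z1, zwpwH, real_inner_self_eq_norm_sq]
      ring
    have hwHn : ‖(wH : W1)‖ ≤ U + (1 + cπ) * (μ * Y) := by
      have hz : ⟪(uh : W1), (wH : W1)⟫ = 0 := hdeq3 wH hwHdisc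
      have he : (w : W1) = (au : W1) - (u : W1) + (uh : W1) := by
        rw [hwdef, haudef]; push_cast; abel
      have h3 : ⟪(w : W1), (wH : W1)⟫ = ⟪(au : W1), (wH : W1)⟫ - ⟪(u : W1), (wH : W1)⟫ := by
        rw [he, inner_add_left, inner_sub_left, hz, add_zero]
      have h4 := hL1 wH hwHm hwHd1 hwHB
      have h5 : ⟪(au : W1), (wH : W1)⟫ ≤ U * ‖(wH : W1)‖ := by
        have h6 := real_inner_le_norm (au : W1) ((wH : V1) : W1)
        have h7 : ‖(au : W1)‖ * ‖(wH : W1)‖ ≤ U * ‖(wH : W1)‖ :=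
          mul_le_mul_of_nonneg_right haun (norm_nonneg _)
        linarith only [h6, h7]
      have h8 := (abs_le.1 h4).1
      have he2 : (U + (1 + cπ) * (μ * Y)) * ‖(wH : W1)‖ =
          U * ‖(wH : W1)‖ + (1 + cπ) * (μ * Y) * ‖(wH : W1)‖ := by ring
      have h7 : ‖(wH : W1)‖^2 ≤ (U + (1 + cπ) * (μ * Y)) * ‖(wH : W1)‖ := by
        linarith only [hwH2, h3, h5, h8, he2]
      exact le_of_sq_le_mul (norm_nonneg _)
        (add_nonneg hU0 (mul_nonneg (by linarith only [hcπn]) hμY0)) h7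
    have hwHb : ‖(wH : W1)‖ ≤ (2 + cπ) * S := by
      have h1 : (1 + cπ) * (μ * Y) ≤ (1 + cπ) * S :=
        mul_le_mul_of_nonneg_left hμYS (by linarith only [hcπn])
      have h2 : (2 + cπ) * S = S + (1 + cπ) * S := by ring
      linarith only [hwHn, h1, h2, hUS]
    -- the B-component of w, via a discrete potential
    obtain ⟨ρ0, hρ0m, hρ0eq⟩ := Submodule.mem_map.1 hwBm
    obtain ⟨k, hkm, hko⟩ := fd_proj K0h ρ0
    set ρ : V0 := ρ0 - k with hρdef
    have hρm : ρ ∈ V0h := sub_mem hρ0m ((inf_le_left : K0h ≤ V0h) hkm)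
    have hkd0 : d0 k = 0 := LinearMap.mem_ker.1 (Submodule.mem_inf.1 hkm).2
    have hD0k : D0 k = 0 := by
      apply Subtype.ext
      rw [hD0coe, hkd0]
      simp
    have hρeq : D0 ρ = wB := by rw [hρdef, map_sub, hD0k, sub_zero, hρ0eq]
    have hd0ρ : d0 ρ = (wB : W1) := by rw [← hD0coe, hρeq]
    have hρY0m : ρ ∈ V0h ⊓ K0hᗮ := Submodule.mem_inf.2 ⟨hρm,
      (Submodule.mem_orthogonal' _ _).2 (fun z hz => hko z hz)⟩
    have hρn : ‖(ρ : W0)‖ ≤ c0 * ‖(wB : W1)‖ := by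
      have h := hc0 ρ hρY0m
      rw [Submodule.coe_norm, hd0ρ] at h
      exact h
    have hwwB : ⟪(w : W1), (wB : W1)⟫ = ‖(wB : W1)‖^2 := by
      rw [hwsplitW, inner_add_left, inner_add_left, zwHwB, zwpwB, real_inner_self_eq_norm_sq]
      ring
    have hwBn : ‖(wB : W1)‖ ≤ U + c0 * A + c0 * ‖(s : W0)‖ := by
      have h := hE1 ρ hρm
      rw [hd0ρ] at h
      have i1 : |⟪(aσ : W0), (ρ : W0)⟫| ≤ A * (c0 * ‖(wB : W1)‖) :=
        le_trans (abs_real_inner_le_norm _ _) (mul_le_mul haσn hρn (norm_nonneg _) hA0)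
      have i2 : |⟪(s : W0), (ρ : W0)⟫| ≤ ‖(s : W0)‖ * (c0 * ‖(wB : W1)‖) :=
        le_trans (abs_real_inner_le_norm _ _) (mul_le_mul_of_nonneg_left hρn (norm_nonneg _))
      have i3 : |⟪(au : W1), (wB : W1)⟫| ≤ U * ‖(wB : W1)‖ :=
        le_trans (abs_real_inner_le_norm _ _) (mul_le_mul_of_nonneg_right haun (norm_nonneg _))
      have e : (U + c0 * A + c0 * ‖(s : W0)‖) * ‖(wB : W1)‖ =
          U * ‖(wB : W1)‖ + A * (c0 * ‖(wB : W1)‖) + ‖(s : W0)‖ * (c0 * ‖(wB : W1)‖) := by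
        ring
      have hsq : ‖(wB : W1)‖^2 ≤ (U + c0 * A + c0 * ‖(s : W0)‖) * ‖(wB : W1)‖ := by
        linarith only [h, hwwB, (abs_le.1 i1).1, (abs_le.1 i2).2, (abs_le.1 i3).2, e]
      exact le_of_sq_le_mul (norm_nonneg _)
        (add_nonneg (add_nonneg hU0 (mul_nonneg hc0n hA0)) (mul_nonneg hc0n (norm_nonneg _)))
        hsq
    -- the perpendicular components
    have hwpm : wp ∈ V1h ⊓ Zhᗮ := Submodule.mem_inf.2 ⟨sub_mem hwm (hZhV1h hwZm),
      (Submodule.mem_orthogonal' _ _).2 (fun z hz => hwZo z hz)⟩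
    have hwpd1 : d1 wp = d1 w := by
      rw [hwpdef, map_sub, LinearMap.mem_ker.1 (Submodule.mem_inf.1 hwZm).2, sub_zero]
    have hwpn : ‖(wp : W1)‖ ≤ c1 * ‖d1 w‖ := by
      have h := hc1 wp hwpm
      rw [Submodule.coe_norm, hwpd1] at h
      exact h
    have hrpm : rp ∈ V1h ⊓ Zhᗮ := Submodule.mem_inf.2 ⟨sub_mem hrm (hZhV1h hrZm),
      (Submodule.mem_orthogonal' _ _).2 (fun z hz => hrZo z hz)⟩
    have hrpd1 : d1 rp = d1 r := by
      rw [hrpdef, map_sub, LinearMap.mem_ker.1 (Submodule.mem_inf.1 hrZm).2, sub_zero]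
    have hrpn : ‖(rp : W1)‖ ≤ c1 * P2 := by
      have h := hc1 rp hrpm
      rw [Submodule.coe_norm, hrpd1] at h
      exact le_trans h (mul_le_mul_of_nonneg_left hrd1n hc1n)
    -- the H-component of r
    have hrHn : ‖(rH : W1)‖ ≤ ‖(r : W1)‖ := by
      have h1 : ⟪(r : W1), (rH : W1)⟫ = ‖(rH : W1)‖^2 := by
        have z1 : ⟪(rB : W1), (rH : W1)⟫ = 0 := by rw [real_inner_comm]; exact zrHrB
        rw [hrsplitW, inner_add_left, inner_add_left, z1, zrprH, real_inner_self_eq_norm_sq]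
        ring
      have h2 := real_inner_le_norm ((r : V1) : W1) ((rH : V1) : W1)
      have hsq : ‖(rH : W1)‖^2 ≤ ‖(r : W1)‖ * ‖(rH : W1)‖ := by linarith only [h1, h2]
      exact le_of_sq_le_mul (norm_nonneg _) (norm_nonneg _) hsq
    -- the B-component of r
    have hrBn : ‖(rB : W1)‖ ≤ P2 := by
      obtain ⟨τr, hτrm, hτreq⟩ := Submodule.mem_map.1 hrBm
      have hcoe : d0 τr = (rB : W1) := by rw [← hD0coe, hτreq]
      have z1 : ⟪(ph : W1), (rB : W1)⟫ = 0 := by rw [← hcoe]; exact hphB τr hτrm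
      have z2 : ⟪(p : W1), (rB : W1)⟫ = 0 := by rw [← hcoe]; exact hpB τr
      have h1 : ⟪(r : W1), (rB : W1)⟫ = ‖(rB : W1)‖^2 := by
        rw [hrsplitW, inner_add_left, inner_add_left, zrHrB, zrprB, real_inner_self_eq_norm_sq]
        ring
      have h2 : (r : W1) = (ph : W1) - (p : W1) + (ap : W1) := by
        rw [hrdef, hapdef]; push_cast; abel
      have h3 : ⟪(r : W1), (rB : W1)⟫ = ⟪(ap : W1), (rB : W1)⟫ := by
        rw [h2, inner_add_left, inner_sub_left, z1, z2]; ring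
      have h4 : ⟪(ap : W1), (rB : W1)⟫ ≤ P2 * ‖(rB : W1)‖ := by
        have h5 := real_inner_le_norm ((ap : V1) : W1) ((rB : V1) : W1)
        have h6 : ‖(ap : W1)‖ * ‖(rB : W1)‖ ≤ P2 * ‖(rB : W1)‖ :=
          mul_le_mul_of_nonneg_right hapn (norm_nonneg _)
        linarith only [h5, h6]
      have hsq : ‖(rB : W1)‖^2 ≤ P2 * ‖(rB : W1)‖ := by linarith only [h1, h3, h4]
      exact le_of_sq_le_mul (norm_nonneg _) hP20 hsq
    -- the full bound on w
    have hwn : ‖(w : W1)‖ ≤ α * (E + S) := by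
      have h1 : ‖(w : W1)‖ ≤ ‖(wB : W1)‖ + ‖(wH : W1)‖ + ‖(wp : W1)‖ := by
        rw [hwsplitW]
        exact le_trans (norm_add_le _ _) (add_le_add_left (norm_add_le _ _) _)
      have t1 : c0 * ‖(s : W0)‖ ≤ c0 * E := mul_le_mul_of_nonneg_left hsE hc0n
      have t2 : c1 * ‖d1 w‖ ≤ c1 * E := mul_le_mul_of_nonneg_left hdwE hc1n
      have t3 : c0 * A ≤ c0 * S := mul_le_mul_of_nonneg_left hAS hc0n
      have hexp : α * (E + S) = c0 * E + c1 * E + (cπ + 3) * E + c0 * S + c1 * S +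
          (cπ + 3) * S := by rw [hαdef]; ring
      have n1 : 0 ≤ (cπ + 3) * E := mul_nonneg (by linarith only [hcπn]) hE0
      have n2 : 0 ≤ c1 * S := mul_nonneg hc1n hS0
      have e2 : (cπ + 3) * S = (2 + cπ) * S + S := by ring
      linarith only [h1, hwBn, hwHb, hwpn, t1, t2, t3, hexp, n1, n2, e2, hUS]
    -- the Lipschitz bound on the nonlinearity
    have hdFb : ‖dF‖ ≤ β * (E + S) := by
      have hlip := hFlip (u + p) (uh + ph)
      rw [← hdFdef] at hlip
      have hsplitV : (u + p) - (uh + ph) = (au - w) + (ap - r) := by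
        rw [haudef, hwdef, hapdef, hrdef]; abel
      rw [hsplitV] at hlip
      have g1 : graphNorm1 d1 ((au - w) + (ap - r)) ≤
          U + (‖(w : W1)‖ + ‖d1 w‖) + (P2 + (‖(r : W1)‖ + ‖d1 r‖)) := by
        have a1 := gn1_add_le d1 (au - w) (ap - r)
        have a2 := gn1_sub_le d1 au w
        have a3 := gn1_sub_le d1 ap r
        have a4 := gn1_le_add d1 w
        have a5 := gn1_le_add d1 r
        linarith only [a1, a2, a3, a4, a5, hUdef, hP2def]
      have hCFcf : CF ≤ cf := by rw [hcfdef]; exact le_max_left _ _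
      have hcf1 : CF * graphNorm1 d1 ((au - w) + (ap - r)) ≤
          cf * graphNorm1 d1 ((au - w) + (ap - r)) :=
        mul_le_mul_of_nonneg_right hCFcf (gn1_nonneg _ _)
      have hcf2 : cf * graphNorm1 d1 ((au - w) + (ap - r)) ≤
          cf * (U + (‖(w : W1)‖ + ‖d1 w‖) + (P2 + (‖(r : W1)‖ + ‖d1 r‖))) :=
        mul_le_mul_of_nonneg_left g1 hcfn
      have e1 : cf * (U + (‖(w : W1)‖ + ‖d1 w‖) + (P2 + (‖(r : W1)‖ + ‖d1 r‖))) ≤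
          cf * (2 * S + 2 * E + α * (E + S)) := by
        apply mul_le_mul_of_nonneg_left ?_ hcfn
        linarith only [hA0, hμY0, hSdef, hP2S, hrd1n, hdwE, hrE, hwn]
      have e2 : cf * (2 * S + 2 * E + α * (E + S)) = β * (E + S) := by rw [hβdef]; ring
      linarith only [hlip, hcf1, hcf2, e1, e2]
    -- the bound on d0 s
    have hd0sb : ‖d0 s‖ ≤ γ * (E + S) := by
      have hDsm : (D0 s : V1) ∈ V1h := hd0h s hsm
      have h := hE2 (D0 s) hDsm
      simp only [hD0coe] at h
      have hd1Ds : d1 (D0 s) = 0 := hdd s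
      rw [hd1Ds] at h
      simp only [inner_zero_right] at h
      have hc2 : ⟪(r : W1), d0 s⟫ = ⟪(ap : W1), d0 s⟫ := by
        have e : (r : W1) = (ph : W1) - (p : W1) + (ap : W1) := by
          rw [hrdef, hapdef]; push_cast; abel
        rw [e, inner_add_left, inner_sub_left, hphB s hsm, hpB s]; ring
      have hself : ⟪d0 s, d0 s⟫ = ‖d0 s‖^2 := real_inner_self_eq_norm_sq _
      have i1 : |⟪d0 aσ, d0 s⟫| ≤ A * ‖d0 s‖ :=
        le_trans (abs_real_inner_le_norm _ _) (mul_le_mul_of_nonneg_right haσd (norm_nonneg _))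
      have i2 : |⟪dF, d0 s⟫| ≤ ‖dF‖ * ‖d0 s‖ := abs_real_inner_le_norm _ _
      have e : (A + ‖dF‖) * ‖d0 s‖ = A * ‖d0 s‖ + ‖dF‖ * ‖d0 s‖ := by ring
      have hsq : ‖d0 s‖^2 ≤ (A + ‖dF‖) * ‖d0 s‖ := by
        linarith only [h, hc2, hself, (abs_le.1 i1).2, (abs_le.1 i2).2, e]
      have h2 : ‖d0 s‖ ≤ A + ‖dF‖ :=
        le_of_sq_le_mul (norm_nonneg _) (add_nonneg hA0 (norm_nonneg _)) hsq
      have e3 : γ * (E + S) = β * (E + S) + E + S := by rw [hγdef]; ring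
      linarith only [h2, hdFb, hAS, hE0, e3]
    -- ====== the energy estimate ======
    set Q : ℝ := S * (E + S) with hQdef
    have hQ0 : 0 ≤ Q := by rw [hQdef]; exact mul_nonneg hS0 hES0
    have e1s := hE1 s hsm
    have h2w := hE2 w hwm
    have h2r := hE2 r hrm
    have hss : ⟪(s : W0), (s : W0)⟫ = ‖(s : W0)‖^2 := real_inner_self_eq_norm_sq _
    have hww : ⟪d1 w, d1 w⟫ = ‖d1 w‖^2 := real_inner_self_eq_norm_sq _
    have hrr : ⟪(r : W1), (r : W1)⟫ = ‖(r : W1)‖^2 := real_inner_self_eq_norm_sq _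
    have hcm : ⟪(w : W1), d0 s⟫ = ⟪d0 s, (w : W1)⟫ := real_inner_comm _ _
    have h6split : ⟪(r : W1), (w : W1)⟫ = ⟪(rB : W1), (w : W1)⟫ + ⟪(rp : W1), (w : W1)⟫ +
        ⟪(rH : W1), (wH : W1)⟫ := by
      have h6b : ⟪(rH : W1), (w : W1)⟫ = ⟪(rH : W1), (wH : W1)⟫ := by
        have z1 : ⟪(rH : W1), (wp : W1)⟫ = 0 := by rw [real_inner_comm]; exact zwprH
        rw [hwsplitW, inner_add_right, inner_add_right, zrHwB, z1]; ring
      rw [hrsplitW, inner_add_left, inner_add_left, h6b]; ring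
    have h8split : ⟪(r : W1), d0 s⟫ = ⟪(rB : W1), d0 s⟫ + ⟪(rp : W1), d0 s⟫ := by
      rw [hrsplitW, inner_add_left, inner_add_left, zrHds]; ring
    have h8cm : ⟪(r : W1), d0 s⟫ = ⟪d0 s, (r : W1)⟫ := real_inner_comm _ _
    -- monotonicity
    have hmono := hFmono (u + p) (uh + ph)
    rw [← hdFdef] at hmono
    have hm2 : ((u + p : V1) : W1) - ((uh + ph : V1) : W1) =
        ((au : W1) + (ap : W1)) - ((w : W1) + (r : W1)) := by
      rw [haudef, hapdef, hwdef, hrdef]; push_cast; abel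
    rw [hm2, inner_sub_right, inner_add_right, inner_add_right] at hmono
    have q12a : ⟪dF, (au : W1)⟫ ≤ β * (E + S) * S := by
      have h1 := real_inner_le_norm dF ((au : V1) : W1)
      have h2 : ‖dF‖ * ‖(au : W1)‖ ≤ (β * (E + S)) * S :=
        mul_le_mul hdFb (haun.trans hUS) (norm_nonneg _)
          (mul_nonneg hβn hES0)
      linarith only [h1, h2]
    have q12b : ⟪dF, (ap : W1)⟫ ≤ β * (E + S) * S := by
      have h1 := real_inner_le_norm dF ((ap : V1) : W1)
      have h2 : ‖dF‖ * ‖(ap : W1)‖ ≤ (β * (E + S)) * S :=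
        mul_le_mul hdFb (hapn.trans hP2S) (norm_nonneg _)
          (mul_nonneg hβn hES0)
      linarith only [h1, h2]
    have q12 : ⟪dF, (w : W1)⟫ + ⟪dF, (r : W1)⟫ ≤ 2 * (β * Q) := by
      have e : β * (E + S) * S = β * Q := by rw [hQdef]; ring
      linarith only [hmono, q12a, q12b, e]
    -- Cauchy–Schwarz bounds for all the remaining terms
    have q1 : |⟪(aσ : W0), (s : W0)⟫| ≤ Q := by
      refine le_trans (abs_real_inner_le_norm _ _) ?_
      have h1 : ‖(aσ : W0)‖ * ‖(s : W0)‖ ≤ S * E :=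
        mul_le_mul (haσn.trans hAS) hsE (norm_nonneg _) hS0
      have e : Q = S * E + S * S := by rw [hQdef]; ring
      have n : 0 ≤ S * S := mul_nonneg hS0 hS0
      linarith only [h1, e, n]
    have q2 : |⟪(au : W1), d0 s⟫| ≤ γ * Q := by
      refine le_trans (abs_real_inner_le_norm _ _) ?_
      have h1 : ‖(au : W1)‖ * ‖d0 s‖ ≤ S * (γ * (E + S)) :=
        mul_le_mul (haun.trans hUS) hd0sb (norm_nonneg _) hS0
      have e : S * (γ * (E + S)) = γ * Q := by rw [hQdef]; ring
      linarith only [h1, e]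
    have q3 : |⟪d0 aσ, (w : W1)⟫| ≤ α * Q := by
      refine le_trans (abs_real_inner_le_norm _ _) ?_
      have h1 : ‖d0 aσ‖ * ‖(w : W1)‖ ≤ S * (α * (E + S)) :=
        mul_le_mul (haσd.trans hAS) hwn (norm_nonneg _) hS0
      have e : S * (α * (E + S)) = α * Q := by rw [hQdef]; ring
      linarith only [h1, e]
    have q4 : |⟪d1 au, d1 w⟫| ≤ Q := by
      refine le_trans (abs_real_inner_le_norm _ _) ?_
      have h1 : ‖d1 au‖ * ‖d1 w‖ ≤ S * E :=
        mul_le_mul (haud.trans hUS) hdwE (norm_nonneg _) hS0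
      have e : Q = S * E + S * S := by rw [hQdef]; ring
      have n : 0 ≤ S * S := mul_nonneg hS0 hS0
      linarith only [h1, e, n]
    have q5 : |⟪(ap : W1), (w : W1)⟫| ≤ α * Q := by
      refine le_trans (abs_real_inner_le_norm _ _) ?_
      have h1 : ‖(ap : W1)‖ * ‖(w : W1)‖ ≤ S * (α * (E + S)) :=
        mul_le_mul (hapn.trans hP2S) hwn (norm_nonneg _) hS0
      have e : S * (α * (E + S)) = α * Q := by rw [hQdef]; ring
      linarith only [h1, e]
    have q6a : |⟪(rB : W1), (w : W1)⟫| ≤ α * Q := by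
      refine le_trans (abs_real_inner_le_norm _ _) ?_
      have h1 : ‖(rB : W1)‖ * ‖(w : W1)‖ ≤ S * (α * (E + S)) :=
        mul_le_mul (hrBn.trans hP2S) hwn (norm_nonneg _) hS0
      have e : S * (α * (E + S)) = α * Q := by rw [hQdef]; ring
      linarith only [h1, e]
    have q6b : |⟪(rp : W1), (w : W1)⟫| ≤ c1 * α * Q := by
      refine le_trans (abs_real_inner_le_norm _ _) ?_
      have hx : c1 * P2 ≤ c1 * S := mul_le_mul_of_nonneg_left hP2S hc1n
      have h1 : ‖(rp : W1)‖ * ‖(w : W1)‖ ≤ (c1 * S) * (α * (E + S)) :=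
        mul_le_mul (hrpn.trans hx) hwn (norm_nonneg _) (mul_nonneg hc1n hS0)
      have e : (c1 * S) * (α * (E + S)) = c1 * α * Q := by rw [hQdef]; ring
      linarith only [h1, e]
    have q6c : |⟪(rH : W1), (wH : W1)⟫| ≤ (2 + cπ) * Q := by
      refine le_trans (abs_real_inner_le_norm _ _) ?_
      have h1 : ‖(rH : W1)‖ * ‖(wH : W1)‖ ≤ E * ((2 + cπ) * S) :=
        mul_le_mul (hrHn.trans hrE) hwHb (norm_nonneg _) hE0
      have e : Q = S * E + S * S := by rw [hQdef]; ring
      have e2 : E * ((2 + cπ) * S) = (2 + cπ) * (S * E) := by ring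
      have n : 0 ≤ (2 + cπ) * (S * S) := by
        have := mul_nonneg hS0 hS0
        have h2 : (0:ℝ) ≤ 2 + cπ := by linarith only [hcπn]
        exact mul_nonneg h2 this
      have e3 : (2 + cπ) * Q = (2 + cπ) * (S * E) + (2 + cπ) * (S * S) := by
        rw [hQdef]; ring
      linarith only [h1, e2, n, e3]
    have q7 : |⟪d0 aσ, (r : W1)⟫| ≤ Q := by
      refine le_trans (abs_real_inner_le_norm _ _) ?_
      have h1 : ‖d0 aσ‖ * ‖(r : W1)‖ ≤ S * E :=
        mul_le_mul (haσd.trans hAS) hrE (norm_nonneg _) hS0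
      have e : Q = S * E + S * S := by rw [hQdef]; ring
      have n : 0 ≤ S * S := mul_nonneg hS0 hS0
      linarith only [h1, e, n]
    have q8a : |⟪(rB : W1), d0 s⟫| ≤ γ * Q := by
      refine le_trans (abs_real_inner_le_norm _ _) ?_
      have h1 : ‖(rB : W1)‖ * ‖d0 s‖ ≤ S * (γ * (E + S)) :=
        mul_le_mul (hrBn.trans hP2S) hd0sb (norm_nonneg _) hS0
      have e : S * (γ * (E + S)) = γ * Q := by rw [hQdef]; ring
      linarith only [h1, e]
    have q8b : |⟪(rp : W1), d0 s⟫| ≤ c1 * γ * Q := by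
      refine le_trans (abs_real_inner_le_norm _ _) ?_
      have hx : c1 * P2 ≤ c1 * S := mul_le_mul_of_nonneg_left hP2S hc1n
      have h1 : ‖(rp : W1)‖ * ‖d0 s‖ ≤ (c1 * S) * (γ * (E + S)) :=
        mul_le_mul (hrpn.trans hx) hd0sb (norm_nonneg _) (mul_nonneg hc1n hS0)
      have e : (c1 * S) * (γ * (E + S)) = c1 * γ * Q := by rw [hQdef]; ring
      linarith only [h1, e]
    have q9 : |⟪d1 au, d1 r⟫| ≤ Q := by
      refine le_trans (abs_real_inner_le_norm _ _) ?_
      have h1 : ‖d1 au‖ * ‖d1 r‖ ≤ S * S :=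
        mul_le_mul (haud.trans hUS) (hrd1n.trans hP2S) (norm_nonneg _) hS0
      have e : Q = S * E + S * S := by rw [hQdef]; ring
      have n : 0 ≤ S * E := mul_nonneg hS0 hE0
      linarith only [h1, e, n]
    have q10 : |⟪d1 w, d1 r⟫| ≤ Q := by
      refine le_trans (abs_real_inner_le_norm _ _) ?_
      have h1 : ‖d1 w‖ * ‖d1 r‖ ≤ E * S :=
        mul_le_mul hdwE (hrd1n.trans hP2S) (norm_nonneg _) hE0
      have e : Q = E * S + S * S := by rw [hQdef]; ring
      have n : 0 ≤ S * S := mul_nonneg hS0 hS0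
      linarith only [h1, e, n]
    have q11 : |⟪(ap : W1), (r : W1)⟫| ≤ Q := by
      refine le_trans (abs_real_inner_le_norm _ _) ?_
      have h1 : ‖(ap : W1)‖ * ‖(r : W1)‖ ≤ S * E :=
        mul_le_mul (hapn.trans hP2S) hrE (norm_nonneg _) hS0
      have e : Q = S * E + S * S := by rw [hQdef]; ring
      have n : 0 ≤ S * S := mul_nonneg hS0 hS0
      linarith only [h1, e, n]
    -- the master energy inequality
    have hKQ : K * Q = Q + γ * Q + α * Q + Q + α * Q +
        (α * Q + c1 * α * Q + (2 + cπ) * Q) + Q + (γ * Q + c1 * γ * Q) + Q + Q + Q +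
        2 * (β * Q) := by rw [hKdef]; ring
    have hmaster : ‖(s : W0)‖^2 + ‖d1 w‖^2 + ‖(r : W1)‖^2 ≤ K * Q := by
      linarith only [e1s, h2w, h2r, hss, hww, hrr, hcm, h6split, h8split, h8cm, q12,
        (abs_le.1 q1).2, (abs_le.1 q2).1, (abs_le.1 q3).2, (abs_le.1 q4).2,
        (abs_le.1 q5).2, (abs_le.1 q6a).1, (abs_le.1 q6b).1, (abs_le.1 q6c).1,
        (abs_le.1 q7).2, (abs_le.1 q8a).1, (abs_le.1 q8b).1, (abs_le.1 q9).2,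
        (abs_le.1 q10).1, (abs_le.1 q11).2, hKQ]
    -- E ≤ (6K+1) S
    have hEsq : E^2 ≤ 3 * (K * Q) := by
      have h3 : E^2 ≤ 3 * (‖(s : W0)‖^2 + ‖d1 w‖^2 + ‖(r : W1)‖^2) := by
        rw [hEdef]
        nlinarith only [sq_nonneg (‖(s : W0)‖ - ‖d1 w‖), sq_nonneg (‖(s : W0)‖ - ‖(r : W1)‖),
          sq_nonneg (‖d1 w‖ - ‖(r : W1)‖)]
      linarith only [h3, hmaster]
    have hEb : E ≤ (6 * K + 1) * S := by
      have hQe : E^2 ≤ 3 * (K * (S * (E + S))) := by rw [hQdef] at hEsq; exact hEsq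
      rcases le_or_gt E S with h | h
      · nlinarith only [h, hS0, hKn, mul_nonneg hKn hS0, mul_nonneg (mul_nonneg hKn hS0) hS0]
      · nlinarith only [hQe, h, hS0, hKn, hE0, mul_nonneg hKn hS0,
          mul_nonneg (mul_nonneg hKn hS0) hE0, mul_nonneg (mul_nonneg hKn hS0) hS0]
    -- final assembly
    have fin1 : graphNorm0 d0 (σ - σh) ≤ A + (‖(s : W0)‖ + ‖d0 s‖) := by
      rw [hidσ]
      refine le_trans (gn0_sub_le d0 aσ s) ?_
      have := gn0_le_add d0 s
      linarith only [this, hAdef]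
    have fin2 : graphNorm1 d1 (u - uh) ≤ U + (‖(w : W1)‖ + ‖d1 w‖) := by
      rw [hidu]
      refine le_trans (gn1_sub_le d1 au w) ?_
      have := gn1_le_add d1 w
      linarith only [this, hUdef]
    have fin3 : ‖((p - ph : V1) : W1)‖ ≤ P2 + ‖(r : W1)‖ := by
      rw [hidp]
      have e : ((ap - r : V1) : W1) = (ap : W1) - (r : W1) := by push_cast; abel
      rw [e]
      exact le_trans (norm_sub_le _ _) (add_le_add_left hapn _)
    have hES2 : E + S ≤ (6 * K + 2) * S := by
      have e : (6 * K + 2) * S = (6 * K + 1) * S + S := by ring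
      linarith only [hEb, e]
    have hKS0 : (0:ℝ) ≤ (6 * K + 2) * S := by
      have : (0:ℝ) ≤ 6 * K + 2 := by linarith only [hKn]
      exact mul_nonneg this hS0
    have h2fin : E + α * (E + S) + γ * (E + S) ≤ (1 + α + γ) * ((6 * K + 2) * S) := by
      have e1 : E ≤ (6 * K + 2) * S := by linarith only [hES2, hS0]
      have e2 : α * (E + S) ≤ α * ((6 * K + 2) * S) := mul_le_mul_of_nonneg_left hES2 hαn
      have e3 : γ * (E + S) ≤ γ * ((6 * K + 2) * S) := mul_le_mul_of_nonneg_left hES2 hγn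
      have e4 : (1 + α + γ) * ((6 * K + 2) * S) = (6 * K + 2) * S + α * ((6 * K + 2) * S) +
          γ * ((6 * K + 2) * S) := by ring
      linarith only [e1, e2, e3, e4]
    have hCexp : C * S = (1 + α + γ) * ((6 * K + 2) * S) + 3 * ((6 * K + 2) * S) + S := by
      rw [hCdef]; ring
    have hS3 : S ≤ (6 * K + 2) * S := by
      have h : (0:ℝ) ≤ (6 * K + 1) * S := mul_nonneg (by linarith only [hKn]) hS0
      have e : (6 * K + 2) * S = (6 * K + 1) * S + S := by ring
      linarith only [h, e]
    have hgoal : graphNorm0 d0 (σ - σh) + graphNorm1 d1 (u - uh) + ‖((p - ph : V1) : W1)‖ ≤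
        C * S := by
      linarith only [fin1, fin2, fin3, hwn, hd0sb, h2fin, hCexp, hS3, hEdef, hμY0,
        hSdef, hKS0]
    calc graphNorm0 d0 (σ - σh) + graphNorm1 d1 (u - uh) + ‖((p - ph : V1) : W1)‖ ≤
        C * S := hgoal
      _ = C * (A + U + P2 + μ * Y) := by rw [hSdef]
    -- pass to the infima
  haveI : Nonempty V0h := ⟨0⟩
  haveI : Nonempty V1h := ⟨0⟩
  have hCn : (0:ℝ) ≤ C := hCpos.le
  have hCμn : (0:ℝ) ≤ C * μ := mul_nonneg hCn hμn
  have step1 : ∀ (τ0 : V0h) (v0 q0 : V1h),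
      graphNorm0 d0 (σ - σh) + graphNorm1 d1 (u - uh) + ‖((p - ph : V1) : W1)‖ ≤
      C * graphNorm0 d0 (σ - ↑τ0) + C * graphNorm1 d1 (u - ↑v0) +
        C * graphNorm1 d1 (p - ↑q0) +
        C * μ * (⨅ v : V1h, graphNorm1 d1 (PB (u : W1) - ↑v)) := by
    intro τ0 v0 q0
    have h2 : graphNorm0 d0 (σ - σh) + graphNorm1 d1 (u - uh) + ‖((p - ph : V1) : W1)‖
        - (C * graphNorm0 d0 (σ - ↑τ0) + C * graphNorm1 d1 (u - ↑v0) +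
           C * graphNorm1 d1 (p - ↑q0)) ≤
        ⨅ y0 : V1h, (C * μ) * graphNorm1 d1 (PB (u : W1) - ↑y0) := by
      apply le_ciInf
      intro y0
      have h := key τ0 v0 q0 y0
      nlinarith [h]
    rw [← Real.mul_iInf_of_nonneg hCμn] at h2
    linarith
  have step2 : ∀ (τ0 : V0h) (v0 : V1h),
      graphNorm0 d0 (σ - σh) + graphNorm1 d1 (u - uh) + ‖((p - ph : V1) : W1)‖ ≤
      C * graphNorm0 d0 (σ - ↑τ0) + C * graphNorm1 d1 (u - ↑v0) +
        C * (⨅ q : V1h, graphNorm1 d1 (p - ↑q)) +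
        C * μ * (⨅ v : V1h, graphNorm1 d1 (PB (u : W1) - ↑v)) := by
    intro τ0 v0
    have h2 : graphNorm0 d0 (σ - σh) + graphNorm1 d1 (u - uh) + ‖((p - ph : V1) : W1)‖
        - (C * graphNorm0 d0 (σ - ↑τ0) + C * graphNorm1 d1 (u - ↑v0) +
           C * μ * (⨅ v : V1h, graphNorm1 d1 (PB (u : W1) - ↑v))) ≤
        ⨅ q0 : V1h, C * graphNorm1 d1 (p - ↑q0) := by
      apply le_ciInf
      intro q0
      have h := step1 τ0 v0 q0
      linarith
    rw [← Real.mul_iInf_of_nonneg hCn] at h2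
    linarith
  have step3 : ∀ (τ0 : V0h),
      graphNorm0 d0 (σ - σh) + graphNorm1 d1 (u - uh) + ‖((p - ph : V1) : W1)‖ ≤
      C * graphNorm0 d0 (σ - ↑τ0) + C * (⨅ v : V1h, graphNorm1 d1 (u - ↑v)) +
        C * (⨅ q : V1h, graphNorm1 d1 (p - ↑q)) +
        C * μ * (⨅ v : V1h, graphNorm1 d1 (PB (u : W1) - ↑v)) := by
    intro τ0
    have h2 : graphNorm0 d0 (σ - σh) + graphNorm1 d1 (u - uh) + ‖((p - ph : V1) : W1)‖
        - (C * graphNorm0 d0 (σ - ↑τ0) +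
           C * (⨅ q : V1h, graphNorm1 d1 (p - ↑q)) +
           C * μ * (⨅ v : V1h, graphNorm1 d1 (PB (u : W1) - ↑v))) ≤
        ⨅ v0 : V1h, C * graphNorm1 d1 (u - ↑v0) := by
      apply le_ciInf
      intro v0
      have h := step2 τ0 v0
      linarith
    rw [← Real.mul_iInf_of_nonneg hCn] at h2
    linarith
  have step4 : graphNorm0 d0 (σ - σh) + graphNorm1 d1 (u - uh) + ‖((p - ph : V1) : W1)‖ ≤
      C * (⨅ τ : V0h, graphNorm0 d0 (σ - ↑τ)) + C * (⨅ v : V1h, graphNorm1 d1 (u - ↑v)) +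
        C * (⨅ q : V1h, graphNorm1 d1 (p - ↑q)) +
        C * μ * (⨅ v : V1h, graphNorm1 d1 (PB (u : W1) - ↑v)) := by
    have h2 : graphNorm0 d0 (σ - σh) + graphNorm1 d1 (u - uh) + ‖((p - ph : V1) : W1)‖
        - (C * (⨅ v : V1h, graphNorm1 d1 (u - ↑v)) +
           C * (⨅ q : V1h, graphNorm1 d1 (p - ↑q)) +
           C * μ * (⨅ v : V1h, graphNorm1 d1 (PB (u : W1) - ↑v))) ≤
        ⨅ τ0 : V0h, C * graphNorm0 d0 (σ - ↑τ0) := by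
      apply le_ciInf
      intro τ0
      have h := step3 τ0
      linarith
    rw [← Real.mul_iInf_of_nonneg hCn] at h2
    linarith
  calc graphNorm0 d0 (σ - σh) + graphNorm1 d1 (u - uh) + ‖((p - ph : V1) : W1)‖ ≤ _ := step4
    _ = C * ((⨅ τ : V0h, graphNorm0 d0 (σ - ↑τ)) + (⨅ v : V1h, graphNorm1 d1 (u - ↑v)) +
          (⨅ q : V1h, graphNorm1 d1 (p - ↑q)) +
          μ * (⨅ v : V1h, graphNorm1 d1 (PB (u : W1) - ↑v))) := by ring


end
end
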